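/- arXiv:math/0312321 — 8 statements merged into one kernel-verified Lean document; each statement's English description precedes it below -/
import Mathlib

section
/- Let P be a monic real polynomial of degree n ≥ 2 with all roots real, and let Q be a real polynomial of degree n−1 whose roots weakly interlace those of P. Then for every real λ, the polynomial P − λQ has all roots real. -/
open Polynomial Finset


lemma prod_delete {M : Type*} [CommMonoid M] (f : ℕ → M) (n m : ℕ) (hm : m < n) :
    ∏ i ∈ Finset.range n, f i
      = f m * ∏ j ∈ Finset.range (n - 1), f (if j < m then j else j + 1) := by
  obtain ⟨n, rfl⟩ : ∃ k, n = k + 1 := ⟨n - 1, by omega⟩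
  simp only [Nat.add_sub_cancel]
  rw [Finset.prod_range f, Fin.prod_univ_succAbove (fun i : Fin (n+1) => f i) ⟨m, hm⟩,
    Finset.prod_range]
  congr 1
  apply Finset.prod_congr rfl
  intro j _
  congr 1
  rcases lt_or_ge (j : ℕ) m with h | h
  · rw [Fin.succAbove, if_pos (by simpa [Fin.lt_def] using h)]
    simp [h]
  · rw [Fin.succAbove, if_neg (by simpa [Fin.lt_def] using not_lt.mpr h)]
    simp [Nat.not_lt.mpr h]

lemma step_factor (n : ℕ) (x y : ℕ → ℝ) (a : ℝ) (i m : ℕ) (hi : i + 1 < n)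
    (hmn : m < n) (hin : i < n - 1) (hm : y i = x m) :
    (∏ j ∈ Finset.range n, (X - C (x j))) - C a * ∏ j ∈ Finset.range (n-1), (X - C (y j))
      = (X - C (y i)) *
        ((∏ j ∈ Finset.range (n-1), (X - C (x (if j < m then j else j + 1))))
          - C a * ∏ j ∈ Finset.range (n-1-1), (X - C (y (if j < i then j else j + 1)))) := by
  rw [prod_delete (fun j => X - C (x j)) n m hmn,
      prod_delete (fun j => X - C (y j)) (n-1) i hin]
  rw [hm]
  ring


lemma exists_root_of_pos_lead (p : Polynomial ℝ) (hodd : Odd p.natDegree)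
    (hpos : 0 < p.leadingCoeff) : ∃ r, p.eval r = 0 := by
  have hnd : 0 < p.natDegree := by
    rcases Nat.eq_zero_or_pos p.natDegree with h | h
    · rw [h] at hodd; simp at hodd
    · exact h
  have hdeg : 0 < p.degree := natDegree_pos_iff_degree_pos.mp hnd
  have htop : Filter.Tendsto (fun t => p.eval t) Filter.atTop Filter.atTop :=
    p.tendsto_atTop_of_leadingCoeff_nonneg hdeg hpos.le
  set q : Polynomial ℝ := p.comp (-X) with hq
  have hqeval : ∀ t, q.eval t = p.eval (-t) := by intro t; simp [hq, eval_comp]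
  have hqdeg : q.natDegree = p.natDegree := by rw [hq, natDegree_comp]; simp
  have hqlead : q.leadingCoeff = -p.leadingCoeff := by
    rw [hq, leadingCoeff_comp (by simp)]
    simp [hodd.neg_one_pow]
  have hqdeg' : 0 < q.degree := natDegree_pos_iff_degree_pos.mp (hqdeg ▸ hnd)
  have hbot : Filter.Tendsto (fun t => q.eval t) Filter.atTop Filter.atBot :=
    q.tendsto_atBot_of_leadingCoeff_nonpos hqdeg' (by rw [hqlead]; linarith)
  obtain ⟨b, hb⟩ := (htop.eventually_gt_atTop 0).exists
  obtain ⟨c, hc⟩ := (hbot.eventually_lt_atBot 0).exists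
  have hc' : p.eval (-c) < 0 := by rwa [hqeval] at hc
  have : (0:ℝ) ∈ Set.uIcc (p.eval (-c)) (p.eval b) := by
    rw [Set.mem_uIcc]; left; constructor <;> linarith
  have := intermediate_value_uIcc (a := -c) (b := b) (p.continuous.continuousOn) this
  obtain ⟨r, _, hr⟩ := this
  exact ⟨r, hr⟩

lemma even_parity : ∀ (N : ℕ) (p : Polynomial ℝ), p ≠ 0 → p.natDegree = N →
    Even (p.natDegree - p.roots.card) := by
  intro N
  induction N using Nat.strong_induction_on with
  | _ N ih =>
    intro p hp hN
    by_cases hroots : p.roots = 0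
    · rw [hroots]
      simp only [Multiset.card_zero, Nat.sub_zero]
      rw [Nat.not_odd_iff_even.symm]
      intro hodd
      rcases lt_trichotomy p.leadingCoeff 0 with h | h | h
      · obtain ⟨r, hr⟩ := exists_root_of_pos_lead (-p) (by simpa using hodd)
          (by simp only [leadingCoeff_neg]; linarith)
        have : r ∈ p.roots := by
          rw [mem_roots hp]; simpa [IsRoot] using hr
        simp [hroots] at this
      · exact hp (leadingCoeff_eq_zero.mp h)
      · obtain ⟨r, hr⟩ := exists_root_of_pos_lead p hodd h
        have : r ∈ p.roots := by rw [mem_roots hp]; exact hr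
        simp [hroots] at this
    · obtain ⟨r, hr⟩ := Multiset.exists_mem_of_ne_zero hroots
      have hroot : p.IsRoot r := isRoot_of_mem_roots hr
      obtain ⟨s, hs⟩ := (dvd_iff_isRoot.mpr hroot)
      have hs0 : s ≠ 0 := by rintro rfl; rw [mul_zero] at hs; exact hp hs
      have hXr : (X - C r : Polynomial ℝ) ≠ 0 := X_sub_C_ne_zero r
      have hcard : p.roots.card = 1 + s.roots.card := by
        rw [hs, roots_mul (hs ▸ hp), roots_X_sub_C]; simp [add_comm]
      have hdeg : p.natDegree = 1 + s.natDegree := by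
        rw [hs, natDegree_mul hXr hs0, natDegree_X_sub_C]
      have hlt : s.natDegree < N := by omega
      obtain ⟨k, hk⟩ := ih s.natDegree hlt s hs0 rfl
      have hle : s.roots.card ≤ s.natDegree := s.card_roots'
      exact ⟨k, by omega⟩

lemma even_parity' (p : Polynomial ℝ) (hp : p ≠ 0) :
    Even (p.natDegree - p.roots.card) := even_parity p.natDegree p hp rfl


lemma F_basic (n : ℕ) (hn : 1 ≤ n) (x y : ℕ → ℝ) (a : ℝ) :
    ((∏ i ∈ Finset.range n, (X - C (x i)))
        - C a * ∏ i ∈ Finset.range (n - 1), (X - C (y i))).Monic ∧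
    ((∏ i ∈ Finset.range n, (X - C (x i)))
        - C a * ∏ i ∈ Finset.range (n - 1), (X - C (y i))).natDegree = n := by
  set P : Polynomial ℝ := ∏ i ∈ Finset.range n, (X - C (x i)) with hP
  set G : Polynomial ℝ := C a * ∏ i ∈ Finset.range (n - 1), (X - C (y i)) with hG
  have hPm : P.Monic := monic_prod_of_monic _ _ fun i _ => monic_X_sub_C (x i)
  have hPd : P.natDegree = n := by
    rw [hP, natDegree_prod_of_monic _ _ fun i _ => monic_X_sub_C (x i)]
    simp
  have hPdeg : P.degree = (n : ℕ) := by rw [degree_eq_natDegree hPm.ne_zero, hPd]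
  have hGd : G.natDegree ≤ n - 1 := by
    refine le_trans (natDegree_mul_le) ?_
    rw [natDegree_C, natDegree_prod_of_monic _ _ fun i _ => monic_X_sub_C (y i)]
    simp
  have hlt : G.degree < P.degree := by
    have h1 : G.degree ≤ ((n - 1 : ℕ) : WithBot ℕ) :=
      degree_le_natDegree.trans (by exact_mod_cast hGd)
    refine lt_of_le_of_lt h1 ?_
    rw [hPdeg]
    exact_mod_cast Nat.cast_lt.mpr (by omega : n - 1 < n)
  refine ⟨hPm.sub_of_left hlt, ?_⟩
  have := degree_sub_eq_left_of_degree_lt hlt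
  rw [hPdeg] at this
  exact natDegree_eq_of_degree_eq_some this

lemma key : ∀ (n : ℕ), 1 ≤ n → ∀ (x y : ℕ → ℝ) (a : ℝ), a ≠ 0 →
    (∀ i j, i ≤ j → j < n → x i ≤ x j) →
    (∀ i, i + 1 < n → x i ≤ y i ∧ y i ≤ x (i + 1)) →
    ((∏ i ∈ Finset.range n, (X - C (x i)))
      - C a * ∏ i ∈ Finset.range (n - 1), (X - C (y i))).roots.card = n := by
  intro n
  induction n using Nat.strong_induction_on with
  | _ n ih =>
  intro hn x y a ha hx hint
  obtain ⟨hFm, hFd⟩ := F_basic n hn x y a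
  set F : Polynomial ℝ := (∏ i ∈ Finset.range n, (X - C (x i)))
      - C a * ∏ i ∈ Finset.range (n - 1), (X - C (y i)) with hF
  by_cases hcom : ∃ i, i + 1 < n ∧ (y i = x i ∨ y i = x (i+1))
  · -- Case A : common root, factor it out
    obtain ⟨i, hi, hcase⟩ := hcom
    obtain ⟨m, hmi, hm⟩ : ∃ m, (m = i ∨ m = i + 1) ∧ y i = x m := by
      rcases hcase with h | h
      · exact ⟨i, Or.inl rfl, h⟩
      · exact ⟨i + 1, Or.inr rfl, h⟩
    have heq := step_factor n x y a i m hi (by omega) (by omega) hm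
    set x' : ℕ → ℝ := fun j => x (if j < m then j else j + 1) with hx'
    set y' : ℕ → ℝ := fun j => y (if j < i then j else j + 1) with hy'
    have hsort' : ∀ p q, p ≤ q → q < n - 1 → x' p ≤ x' q := by
      intro p q hpq hq
      simp only [hx']
      split_ifs <;> exact hx _ _ (by omega) (by omega)
    have hint' : ∀ j, j + 1 < n - 1 → x' j ≤ y' j ∧ y' j ≤ x' (j + 1) := by
      intro j hj
      simp only [hx', hy']
      rcases hmi with rfl | rfl
      · -- m = i
        by_cases h : j < m
        · have h1 := hint j (by omega)
          by_cases h' : j + 1 < m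
          · simp only [if_pos h, if_pos h']
            exact h1
          · simp only [if_pos h, if_neg h']
            exact ⟨h1.1, le_trans h1.2 (hx (j+1) (j+1+1) (by omega) (by omega))⟩
        · have h1 := hint (j+1) (by omega)
          simp only [if_neg h, if_neg (by omega : ¬ j + 1 < m)]
          exact h1
      · -- m = i + 1
        by_cases h : j < i
        · simp only [if_pos h, if_pos (by omega : j < i + 1), if_pos (by omega : j + 1 < i + 1)]
          exact hint j (by omega)
        · by_cases h' : j = i
          · subst h'
            have h1 := hint (j+1) (by omega)
            simp only [if_pos (by omega : j < j + 1), if_neg h,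
              if_neg (by omega : ¬ j + 1 < j + 1)]
            exact ⟨le_trans (hx j (j+1) (by omega) (by omega)) h1.1, h1.2⟩
          · have h1 := hint (j+1) (by omega)
            simp only [if_neg h, if_neg (by omega : ¬ j < i + 1),
              if_neg (by omega : ¬ j + 1 < i + 1)]
            exact h1
    have hcard' := ih (n-1) (by omega) (by omega) x' y' a ha hsort' hint'
    rw [hF, heq]
    have hne : (X - C (y i)) *
        ((∏ j ∈ Finset.range (n-1), (X - C (x' j)))
          - C a * ∏ j ∈ Finset.range (n-1-1), (X - C (y' j))) ≠ 0 := by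
      rw [← heq]; exact hFm.ne_zero
    rw [roots_mul hne, roots_X_sub_C, Multiset.card_add, Multiset.card_singleton, hcard']
    omega
  · -- Case B : strict interlacing
    push_neg at hcom
    have hstrict : ∀ i, i + 1 < n → x i < y i ∧ y i < x (i + 1) := by
      intro i hi
      obtain ⟨h1, h2⟩ := hint i hi
      obtain ⟨h3, h4⟩ := hcom i hi
      exact ⟨lt_of_le_of_ne h1 (Ne.symm h3), lt_of_le_of_ne h2 h4⟩
    rcases eq_or_lt_of_le hn with h1n | h1n
    · -- n = 1
      have hFeq : F = X - C (x 0 + a) := by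
        rw [hF, ← h1n]
        simp [Finset.prod_range_one, C_add]
        ring
      rw [hFeq, roots_X_sub_C, Multiset.card_singleton, ← h1n]
    · -- n ≥ 2
      have hFeval : ∀ i, i < n →
          F.eval (x i) = -(a * ∏ j ∈ Finset.range (n-1), (x i - y j)) := by
        intro i hi
        have hP0 : (∏ j ∈ Finset.range n, (X - C (x j))).eval (x i) = 0 := by
          rw [eval_prod]
          exact Finset.prod_eq_zero (Finset.mem_range.mpr hi) (by simp)
        rw [hF]
        simp [eval_prod, hP0]
      set A : ℕ → ℝ := fun i => ∏ j ∈ Finset.range (n-1), (x i - y j) with hA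
      have hAA : ∀ i, i + 1 < n → A i * A (i+1) < 0 := by
        intro i hi
        simp only [hA]
        rw [← Finset.prod_mul_distrib]
        have him : i ∈ Finset.range (n-1) := Finset.mem_range.mpr (by omega)
        rw [← Finset.mul_prod_erase _ _ him]
        apply mul_neg_of_neg_of_pos
        · obtain ⟨h1, h2⟩ := hstrict i hi
          exact mul_neg_of_neg_of_pos (by linarith) (by linarith)
        · apply Finset.prod_pos
          intro j hj
          obtain ⟨hne, hjlt⟩ : j ≠ i ∧ j < n - 1 := by
            simpa [Finset.mem_erase, Finset.mem_range] using hj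
          rcases lt_or_gt_of_ne hne with h | h
          · have h1 : y j < x (j+1) := (hstrict j (by omega)).2
            have h2 : x (j+1) ≤ x i := hx (j+1) i (by omega) (by omega)
            have h3 : x i ≤ x (i+1) := hx i (i+1) (by omega) hi
            exact mul_pos (by linarith) (by linarith)
          · have h1 : x j < y j := (hstrict j (by omega)).1
            have h2 : x (i+1) ≤ x j := hx (i+1) j (by omega) (by omega)
            have h3 : x i ≤ x (i+1) := hx i (i+1) (by omega) (by omega)
            exact mul_pos_of_neg_of_neg (by linarith) (by linarith)
      have hFF : ∀ i, i + 1 < n → F.eval (x i) * F.eval (x (i+1)) < 0 := by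
        intro i hi
        rw [hFeval i (by omega), hFeval (i+1) (by omega)]
        have h1 := hAA i hi
        have h2 : 0 < a ^ 2 := by positivity
        nlinarith [h1, h2]
      have hroot : ∀ i, ∃ r, i + 1 < n → x i < r ∧ r < x (i+1) ∧ F.eval r = 0 := by
        intro i
        by_cases hi : i + 1 < n
        · have hle : x i ≤ x (i+1) := hx i (i+1) (by omega) hi
          have hcont : ContinuousOn (fun t => F.eval t) (Set.Icc (x i) (x (i+1))) :=
            F.continuous.continuousOn
          have hprod := hFF i hi
          rcases lt_or_ge (F.eval (x i)) 0 with h | h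
          · have h2 : 0 < F.eval (x (i+1)) := by nlinarith
            have hmem : (0:ℝ) ∈ Set.Ioo (F.eval (x i)) (F.eval (x (i+1))) := ⟨h, h2⟩
            obtain ⟨r, hrmem, hr0⟩ := intermediate_value_Ioo hle hcont hmem
            exact ⟨r, fun _ => ⟨hrmem.1, hrmem.2, hr0⟩⟩
          · have h1 : 0 < F.eval (x i) := by
              rcases eq_or_lt_of_le h with h' | h'
              · rw [← h', zero_mul] at hprod
                exact absurd hprod (lt_irrefl 0)
              · exact h'
            have h2 : F.eval (x (i+1)) < 0 := by nlinarith
            have hmem : (0:ℝ) ∈ Set.Ioo (F.eval (x (i+1))) (F.eval (x i)) := ⟨h2, h1⟩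
            obtain ⟨r, hrmem, hr0⟩ := intermediate_value_Ioo' hle hcont hmem
            exact ⟨r, fun _ => ⟨hrmem.1, hrmem.2, hr0⟩⟩
        · exact ⟨0, fun h => absurd h hi⟩
      choose r hr using hroot
      have hmono : ∀ p q, p < q → q < n - 1 → r p < r q := by
        intro p q hpq hq
        obtain ⟨ha1, ha2, _⟩ := hr p (by omega)
        obtain ⟨hb1, hb2, _⟩ := hr q (by omega)
        have : x (p+1) ≤ x q := hx (p+1) q (by omega) (by omega)
        linarith
      have hinj : Set.InjOn r (Finset.range (n-1) : Finset ℕ) := by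
        intro p hp q hq hpq
        simp only [Finset.coe_range, Set.mem_Iio] at hp hq
        rcases lt_trichotomy p q with h | h | h
        · exact absurd hpq (ne_of_lt (hmono p q h hq))
        · exact h
        · exact absurd hpq.symm (ne_of_lt (hmono q p h hp))
      have hsub : (Finset.range (n-1)).image r ⊆ F.roots.toFinset := by
        intro t ht
        obtain ⟨i, hi, rfl⟩ := Finset.mem_image.mp ht
        rw [Multiset.mem_toFinset, mem_roots hFm.ne_zero]
        have hi' := Finset.mem_range.mp hi
        exact (hr i (by omega)).2.2
      have h1 : n - 1 ≤ F.roots.card := by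
        calc n - 1 = ((Finset.range (n-1)).image r).card := by
              rw [Finset.card_image_of_injOn hinj, Finset.card_range]
          _ ≤ F.roots.toFinset.card := Finset.card_le_card hsub
          _ ≤ F.roots.card := Multiset.toFinset_card_le _
      have h2 : F.roots.card ≤ n := hFd ▸ F.card_roots'
      obtain ⟨k, hk⟩ := even_parity' F hFm.ne_zero
      rw [hFd] at hk
      omega


theorem pencil_hyperbolic (n : ℕ) (hn : 2 ≤ n) (x y : ℕ → ℝ) (c : ℝ) (hc : c ≠ 0)
    (hx : ∀ i j, i ≤ j → j < n → x i ≤ x j)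
    (hinter : ∀ i, i + 1 < n → x i ≤ y i ∧ y i ≤ x (i + 1))
    (P Q : Polynomial ℝ)
    (hP : P = ∏ i ∈ Finset.range n, (X - C (x i)))
    (hQ : Q = C c * ∏ i ∈ Finset.range (n - 1), (X - C (y i))) :
    ∀ l : ℝ, (P - C l * Q).roots.card = n := by
  subst hP hQ
  intro l
  by_cases hl : l = 0
  · have hne : (∏ i ∈ Finset.range n, (X - C (x i))) ≠ 0 :=
      (monic_prod_of_monic _ _ fun i _ => monic_X_sub_C (x i)).ne_zero
    simp only [hl, map_zero, zero_mul, sub_zero]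
    rw [roots_prod _ _ hne]
    simp [roots_X_sub_C]
  · have hmul : C l * (C c * ∏ i ∈ Finset.range (n - 1), (X - C (y i)))
        = C (l * c) * ∏ i ∈ Finset.range (n - 1), (X - C (y i)) := by
      rw [← mul_assoc, ← C_mul]
    rw [hmul]
    exact key n (by omega) x y (l * c) (mul_ne_zero hl hc) hx hinter
end

section
/- Let P be a monic strictly hyperbolic polynomial of degree n ≥ 2 and Q a polynomial of degree n−1 with leading coefficient n whose zeros strictly interlace those of P. For λ ∈ ℝ let x_i(λ), 1 ≤ i ≤ n, denote the zeros of P − λQ, labeled increasingly with x_i(0) the zeros of P. Then each x_i(λ) is a strictly increasing function of λ. -/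
open Polynomial

open scoped Classical

private lemma sign_prod (t : ℝ) (z : ℕ → ℝ) :
    ∀ n : ℕ, (∀ j < n, t ≠ z j) →
    0 < (-1:ℝ) ^ ((Finset.range n).filter (fun j => t < z j)).card *
        ∏ j ∈ Finset.range n, (t - z j) := by
  intro n
  induction n with
  | zero => simp
  | succ n ih =>
    intro h
    have h' : ∀ j < n, t ≠ z j := fun j hj => h j (hj.trans (Nat.lt_succ_self n))
    have hne := h n (Nat.lt_succ_self n)
    have h1 := ih h'
    rw [Finset.prod_range_succ, Finset.range_add_one, Finset.filter_insert]
    by_cases hc : t < z n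
    · rw [if_pos hc, Finset.card_insert_of_notMem (by simp)]
      have h2 : 0 < -(t - z n) := by linarith
      calc (0:ℝ) < ((-1:ℝ) ^ ((Finset.range n).filter (fun j => t < z j)).card *
            ∏ j ∈ Finset.range n, (t - z j)) * (-(t - z n)) := mul_pos h1 h2
        _ = (-1:ℝ) ^ (((Finset.range n).filter (fun j => t < z j)).card + 1) *
            ((∏ j ∈ Finset.range n, (t - z j)) * (t - z n)) := by ring
    · rw [if_neg hc]
      have h2 : 0 < t - z n := by
        rcases lt_trichotomy t (z n) with h3 | h3 | h3
        · exact absurd h3 hc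
        · exact absurd h3 hne
        · linarith
      calc (0:ℝ) < ((-1:ℝ) ^ ((Finset.range n).filter (fun j => t < z j)).card *
            ∏ j ∈ Finset.range n, (t - z j)) * (t - z n) := mul_pos h1 h2
        _ = _ := by ring

private lemma parity_eq' {a b : ℕ} {v : ℝ} (ha : 0 < (-1:ℝ)^a * v) (hb : 0 < (-1:ℝ)^b * v) :
    a % 2 = b % 2 := by
  rcases Nat.even_or_odd a with ea | oa <;> rcases Nat.even_or_odd b with eb | ob
  · rw [Nat.even_iff] at ea eb; omega
  · rw [ea.neg_one_pow] at ha; rw [ob.neg_one_pow] at hb; nlinarith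
  · rw [oa.neg_one_pow] at ha; rw [eb.neg_one_pow] at hb; nlinarith
  · rw [Nat.odd_iff] at oa ob; omega

private lemma count_lemma (n m : ℕ) (hmn : m ≤ n) (hnm : n ≤ m + 1) (c : ℕ → ℕ)
    (hub : ∀ i < m, c i ≤ n)
    (hanti : ∀ i, i + 1 < m → c (i+1) ≤ c i)
    (hpar : ∀ i < m, c i % 2 = (n - 1 - i) % 2) :
    ∀ i < m, c i = n - 1 - i := by
  have upper : ∀ i, i < m → c i ≤ n - 1 - i := by
    intro i
    induction i with
    | zero => intro h; have h1 := hub 0 h; have h2 := hpar 0 h; omega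
    | succ k ih =>
      intro h
      have hk : k < m := by omega
      have h1 := ih hk
      have h2 := hanti k h
      have h3 := hpar k hk
      have h4 := hpar (k+1) h
      omega
  have lower : ∀ d i, i + d + 1 = m → n - 1 - i ≤ c i := by
    intro d
    induction d with
    | zero => intro i hi; have := hpar i (by omega); omega
    | succ d ih =>
      intro i hi
      have h1 := ih (i+1) (by omega)
      have h2 := hanti i (by omega)
      have h3 := hpar i (by omega)
      have h4 := hpar (i+1) (by omega)
      omega
  intro i hi
  have := upper i hi
  have := lower (m - 1 - i) i (by omega)
  omega

private lemma upper_count {n : ℕ} {z : ℕ → ℝ} (hz : ∀ i j, i < j → j < n → z i < z j) (t : ℝ)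
    {c : ℕ} (hc : ((Finset.range n).filter (fun j => t < z j)).card = c) :
    ∀ j < n, (t < z j ↔ n - c ≤ j) := by
  intro j hj
  constructor
  · intro h
    by_contra hcon
    push_neg at hcon
    have hsub : Finset.Ico j n ⊆ (Finset.range n).filter (fun k => t < z k) := by
      intro k hk
      simp only [Finset.mem_Ico] at hk
      simp only [Finset.mem_filter, Finset.mem_range]
      refine ⟨hk.2, ?_⟩
      rcases eq_or_lt_of_le hk.1 with rfl | hlt
      · exact h
      · exact h.trans (hz j k hlt hk.2)
    have := Finset.card_le_card hsub
    rw [Nat.card_Ico, hc] at this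
    omega
  · intro h
    by_contra hcon
    have hsub : (Finset.range n).filter (fun k => t < z k) ⊆ Finset.Ico (j+1) n := by
      intro k hk
      simp only [Finset.mem_filter, Finset.mem_range] at hk
      simp only [Finset.mem_Ico]
      refine ⟨?_, hk.1⟩
      by_contra hk2
      push_neg at hk2
      apply hcon
      rcases eq_or_lt_of_le (Nat.lt_succ_iff.mp hk2) with rfl | hlt
      · exact hk.2
      · exact hk.2.trans (hz k j hlt hj)
    have := Finset.card_le_card hsub
    rw [Nat.card_Ico, hc] at this
    omega

theorem roots_strictMono_in_lambda (n : ℕ) (hn : 2 ≤ n) (x y : ℕ → ℝ)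
    (hx : ∀ i j, i < j → j < n → x i < x j)
    (hinter : ∀ i, i + 1 < n → x i < y i ∧ y i < x (i + 1))
    (P Q : Polynomial ℝ)
    (hP : P = ∏ i ∈ Finset.range n, (X - C (x i)))
    (hQ : Q = C (n : ℝ) * ∏ i ∈ Finset.range (n - 1), (X - C (y i)))
    (ζ : ℝ → ℕ → ℝ)
    (hroot : ∀ l : ℝ, ∀ i < n, (P - C l * Q).IsRoot (ζ l i))
    (hmono : ∀ l : ℝ, ∀ i j, i < j → j < n → ζ l i < ζ l j)
    (hzero : ∀ i < n, ζ 0 i = x i) :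
    ∀ i < n, StrictMono (fun l : ℝ => ζ l i) := by
  have hn0 : (n : ℝ) ≠ 0 := Nat.cast_ne_zero.mpr (by omega)
  have hn0' : (0:ℝ) < (n : ℝ) := by positivity
  -- basic degree facts
  have hPm : P.Monic := by
    rw [hP]; exact monic_prod_of_monic _ _ (fun i _ => monic_X_sub_C _)
  have hPd : P.natDegree = n := by
    rw [hP, natDegree_prod_of_monic _ _ (fun i _ => monic_X_sub_C _)]; simp
  have hQd : Q.natDegree = n - 1 := by
    rw [hQ, natDegree_C_mul hn0, natDegree_prod_of_monic _ _ (fun i _ => monic_X_sub_C _)]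
    simp
  -- factorization of P - l Q over its roots
  have hfactor : ∀ l : ℝ, P - C l * Q = ∏ j ∈ Finset.range n, (X - C (ζ l j)) := by
    intro l
    have hdegQ : (C l * Q).degree < P.degree := by
      have h1 : (C l * Q).degree ≤ Q.degree := by
        rcases eq_or_ne l 0 with rfl | hl
        · simp
        · rw [degree_C_mul hl]
      have h2 : Q.degree ≤ (Q.natDegree : WithBot ℕ) := degree_le_natDegree
      have h3 : P.degree = (n : WithBot ℕ) := by
        rw [degree_eq_natDegree hPm.ne_zero, hPd]
      rw [h3]
      refine lt_of_le_of_lt (h1.trans h2) ?_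
      rw [hQd]
      exact_mod_cast Nat.sub_lt (by omega) one_pos
    have hfm : (P - C l * Q).Monic := by
      have := hPm.add_of_left (q := -(C l * Q)) (by rwa [degree_neg])
      simpa [sub_eq_add_neg] using this
    have hfd : (P - C l * Q).degree = (n : WithBot ℕ) := by
      rw [degree_sub_eq_left_of_degree_lt hdegQ, degree_eq_natDegree hPm.ne_zero, hPd]
    set g := ∏ j ∈ Finset.range n, (X - C (ζ l j)) with hg
    have hgm : g.Monic := monic_prod_of_monic _ _ (fun i _ => monic_X_sub_C _)
    have hgd : g.degree = (n : WithBot ℕ) := by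
      rw [degree_eq_natDegree hgm.ne_zero, hg,
        natDegree_prod_of_monic _ _ (fun i _ => monic_X_sub_C _)]
      simp
    rcases eq_or_ne (P - C l * Q) g with h | h
    · exact h
    exfalso
    have hz : (P - C l * Q) - g = 0 := by
      apply Polynomial.eq_zero_of_natDegree_lt_card_of_eval_eq_zero _
        (f := fun i : Fin n => ζ l i)
      · intro a b hab
        by_contra hne
        rcases lt_or_gt_of_ne hne with hlt | hlt
        · exact absurd hab (ne_of_lt (hmono l a b hlt b.2))
        · exact absurd hab.symm (ne_of_lt (hmono l b a hlt a.2))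
      · intro i
        rw [eval_sub]
        have h1 : eval (ζ l i) (P - C l * Q) = 0 := hroot l i i.2
        have h2 : eval (ζ l i) g = 0 := by
          rw [hg, eval_prod]
          exact Finset.prod_eq_zero (Finset.mem_range.mpr i.2) (by simp)
        rw [h1, h2, sub_zero]
      · rw [Fintype.card_fin]
        have hdlt : ((P - C l * Q) - g).degree < (n : WithBot ℕ) := by
          rw [← hfd]
          exact degree_sub_lt (hfd.trans hgd.symm) hfm.ne_zero
            (hfm.leadingCoeff.trans hgm.leadingCoeff.symm)
        have hne0 : (P - C l * Q) - g ≠ 0 := sub_ne_zero.mpr h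
        rwa [← natDegree_lt_iff_degree_lt hne0] at hdlt
    exact h (sub_eq_zero.mp hz)
  -- evaluation formulas
  have heval : ∀ (l t : ℝ), (P - C l * Q).eval t = ∏ j ∈ Finset.range n, (t - ζ l j) := by
    intro l t
    rw [hfactor l, eval_prod]
    simp
  have hPeval : ∀ t : ℝ, P.eval t = ∏ j ∈ Finset.range n, (t - x j) := by
    intro t; rw [hP, eval_prod]; simp
  have hQeval : ∀ t : ℝ, Q.eval t = (n:ℝ) * ∏ j ∈ Finset.range (n-1), (t - y j) := by
    intro t; rw [hQ, eval_mul, eval_prod]; simp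
  -- interlacing of y with x
  have hyx : ∀ i, i + 1 < n → ∀ j < n, (y i < x j ↔ i + 1 ≤ j) := by
    intro i hi j hj
    constructor
    · intro h
      by_contra hc
      push_neg at hc
      have hxj : x j ≤ x i := by
        rcases eq_or_lt_of_le (Nat.lt_succ_iff.mp hc) with rfl | hlt
        · exact le_refl _
        · exact le_of_lt (hx j i hlt (by omega))
      have := (hinter i hi).1
      linarith
    · intro h
      have h1 := (hinter i hi).2
      have h2 : x (i+1) ≤ x j := by
        rcases eq_or_lt_of_le h with rfl | hlt
        · exact le_refl _
        · exact le_of_lt (hx (i+1) j hlt hj)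
      linarith
  -- y is strictly increasing
  have hymono : ∀ i j, i < j → j < n - 1 → y i < y j := by
    intro i j hij hj
    have h1 := (hinter i (by omega)).2
    have h2 := (hinter j (by omega)).1
    have h3 : x (i+1) ≤ x j := by
      rcases eq_or_lt_of_le (by omega : i + 1 ≤ j) with h | h
      · rw [h]
      · exact le_of_lt (hx (i+1) j h (by omega))
    linarith
  -- sign of P at y i
  have hney_x : ∀ i, i + 1 < n → ∀ j < n, y i ≠ x j := by
    intro i hi j hj
    rcases le_or_gt (i+1) j with h | h
    · exact ne_of_lt ((hyx i hi j hj).mpr h)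
    · have hxj : x j ≤ x i := by
        rcases eq_or_lt_of_le (Nat.lt_succ_iff.mp h) with rfl | hlt
        · exact le_refl _
        · exact le_of_lt (hx j i hlt (by omega))
      have := (hinter i hi).1
      intro heq; linarith [heq ▸ hxj]
  have hPsign : ∀ i, i + 1 < n → 0 < (-1:ℝ)^(n-1-i) * P.eval (y i) := by
    intro i hi
    have hs := sign_prod (y i) x n (hney_x i hi)
    have hcard : ((Finset.range n).filter (fun j => y i < x j)).card = n - 1 - i := by
      have hset : (Finset.range n).filter (fun j => y i < x j) = Finset.Ico (i+1) n := by
        ext j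
        simp only [Finset.mem_filter, Finset.mem_range, Finset.mem_Ico]
        constructor
        · rintro ⟨hj, hlt⟩; exact ⟨(hyx i hi j hj).mp hlt, hj⟩
        · rintro ⟨hj1, hj2⟩; exact ⟨hj2, (hyx i hi j hj2).mpr hj1⟩
      rw [hset, Nat.card_Ico]
      omega
    rw [hcard, ← hPeval] at hs
    exact hs
  have hPne : ∀ i, i + 1 < n → P.eval (y i) ≠ 0 := by
    intro i hi heq
    have := hPsign i hi
    rw [heq, mul_zero] at this
    exact lt_irrefl 0 this
  -- Q vanishes at y i
  have hQy : ∀ i, i + 1 < n → Q.eval (y i) = 0 := by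
    intro i hi
    rw [hQeval]
    have : ∏ j ∈ Finset.range (n-1), (y i - y j) = 0 :=
      Finset.prod_eq_zero (Finset.mem_range.mpr (by omega : i < n - 1)) (by simp)
    rw [this, mul_zero]
  have hfy : ∀ l : ℝ, ∀ i, i + 1 < n → (P - C l * Q).eval (y i) = P.eval (y i) := by
    intro l i hi
    rw [eval_sub, eval_mul, eval_C, hQy i hi, mul_zero, sub_zero]
  -- y i is never a root of P - l Q
  have hney : ∀ l : ℝ, ∀ i, i + 1 < n → ∀ j < n, y i ≠ ζ l j := by
    intro l i hi j hj heq
    have h1 := hroot l j hj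
    rw [← heq] at h1
    exact hPne i hi (by rw [← hfy l i hi]; exact h1)
  -- interlacing of ζ l with y, for every l
  have hkey : ∀ l : ℝ, ∀ i, i + 1 < n → ∀ j < n, (y i < ζ l j ↔ i + 1 ≤ j) := by
    intro l
    set c : ℕ → ℕ := fun i => ((Finset.range n).filter (fun j => y i < ζ l j)).card with hc
    have hpar : ∀ i < n - 1, c i % 2 = (n - 1 - i) % 2 := by
      intro i hi
      have hi' : i + 1 < n := by omega
      refine parity_eq' (v := P.eval (y i)) ?_ (hPsign i hi')
      have hs := sign_prod (y i) (ζ l) n (hney l i hi')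
      rw [← heval l (y i), hfy l i hi'] at hs
      exact hs
    have hub : ∀ i < n - 1, c i ≤ n := by
      intro i _
      exact le_trans (Finset.card_filter_le _ _) (le_of_eq (Finset.card_range n))
    have hanti : ∀ i, i + 1 < n - 1 → c (i+1) ≤ c i := by
      intro i hi
      apply Finset.card_le_card
      intro j hj
      simp only [Finset.mem_filter, Finset.mem_range] at hj ⊢
      exact ⟨hj.1, lt_trans (hymono i (i+1) (by omega) hi) hj.2⟩
    have hcval := count_lemma n (n-1) (by omega) (by omega) c hub hanti hpar
    intro i hi j hj
    have hci : c i = n - 1 - i := hcval i (by omega)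
    have := upper_count (hmono l) (y i) hci j hj
    rw [this]
    constructor <;> intro <;> omega
  -- sign of Q at ζ l i
  have hQsign : ∀ l : ℝ, ∀ i < n, 0 < (-1:ℝ)^(n-1-i) * Q.eval (ζ l i) := by
    intro l i hi
    have hnez : ∀ j < n - 1, ζ l i ≠ y j := by
      intro j hj heq
      exact hney l j (by omega) i hi heq.symm
    have horder : ∀ j < n - 1, (ζ l i < y j ↔ i ≤ j) := by
      intro j hj
      constructor
      · intro h
        by_contra hcon
        push_neg at hcon
        have := (hkey l j (by omega) i hi).mpr (by omega)
        linarith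
      · intro h
        have h3 : ¬ y j < ζ l i := fun hlt => by
          have := (hkey l j (by omega) i hi).mp hlt
          omega
        exact lt_of_le_of_ne (not_lt.mp h3) (hnez j hj)
    have hcard : ((Finset.range (n-1)).filter (fun j => ζ l i < y j)).card = n - 1 - i := by
      have hset : (Finset.range (n-1)).filter (fun j => ζ l i < y j) = Finset.Ico i (n-1) := by
        ext j
        simp only [Finset.mem_filter, Finset.mem_range, Finset.mem_Ico]
        constructor
        · rintro ⟨hj, hlt⟩; exact ⟨(horder j hj).mp hlt, hj⟩
        · rintro ⟨hj1, hj2⟩; exact ⟨hj2, (horder j hj2).mpr hj1⟩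
      rw [hset, Nat.card_Ico]
    have hs := sign_prod (ζ l i) y (n-1) hnez
    rw [hcard] at hs
    have heq : (-1:ℝ)^(n-1-i) * Q.eval (ζ l i)
        = (n:ℝ) * ((-1:ℝ)^(n-1-i) * ∏ j ∈ Finset.range (n-1), (ζ l i - y j)) := by
      rw [hQeval]; ring
    rw [heq]
    exact mul_pos hn0' hs
  -- main monotonicity argument
  intro i hi a b hab
  simp only
  -- value of P - a Q at roots of P - b Q
  have hfval : ∀ k < n, (P - C a * Q).eval (ζ b k) = (b - a) * Q.eval (ζ b k) := by
    intro k hk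
    have h0 : (P - C b * Q).eval (ζ b k) = 0 := hroot b k hk
    rw [eval_sub, eval_mul, eval_C] at h0 ⊢
    rw [sub_mul]
    linarith
  have hsig : ∀ k < n, 0 < (-1:ℝ)^(n-1-k) * (P - C a * Q).eval (ζ b k) := by
    intro k hk
    rw [hfval k hk]
    have heq : (-1:ℝ)^(n-1-k) * ((b - a) * Q.eval (ζ b k))
        = (b - a) * ((-1:ℝ)^(n-1-k) * Q.eval (ζ b k)) := by ring
    rw [heq]
    exact mul_pos (by linarith) (hQsign b k hk)
  have hne2 : ∀ k < n, ∀ j < n, ζ b k ≠ ζ a j := by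
    intro k hk j hj heq
    have hr := hroot a j hj
    rw [← heq] at hr
    have := hsig k hk
    rw [hr, mul_zero] at this
    exact lt_irrefl 0 this
  set d : ℕ → ℕ := fun k => ((Finset.range n).filter (fun j => ζ b k < ζ a j)).card with hd
  have hpar : ∀ k < n, d k % 2 = (n - 1 - k) % 2 := by
    intro k hk
    refine parity_eq' (v := (P - C a * Q).eval (ζ b k)) ?_ (hsig k hk)
    have hs := sign_prod (ζ b k) (ζ a) n (hne2 k hk)
    rw [← heval a (ζ b k)] at hs
    exact hs
  have hub : ∀ k < n, d k ≤ n := by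
    intro k _
    exact le_trans (Finset.card_filter_le _ _) (le_of_eq (Finset.card_range n))
  have hanti : ∀ k, k + 1 < n → d (k+1) ≤ d k := by
    intro k hk
    apply Finset.card_le_card
    intro j hj
    simp only [Finset.mem_filter, Finset.mem_range] at hj ⊢
    exact ⟨hj.1, lt_trans (hmono b k (k+1) (by omega) hk) hj.2⟩
  have hdval := count_lemma n n (le_refl n) (by omega) d hub hanti hpar
  have hdi : d i = n - 1 - i := hdval i hi
  have hiff := upper_count (hmono a) (ζ b i) hdi i hi
  have hnlt : ¬ ζ b i < ζ a i := by
    intro hlt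
    have := hiff.mp hlt
    omega
  exact lt_of_le_of_ne (not_lt.mp hnlt) (Ne.symm (hne2 i hi i hi))
end

section
/- Let P be a monic strictly hyperbolic polynomial of degree n ≥ 2 and Q of degree n−1, leading coefficient n, with zeros strictly interlacing those of P. Then the largest root of P − λQ is a convex function of λ ∈ ℝ. -/
open Polynomial Finset

private lemma LRC_prod_neg {ι : Type*} [DecidableEq ι] (F : Finset ι) (f : ι → ℝ) (h : ∀ j ∈ F, f j < 0) :
    0 < (-1 : ℝ) ^ F.card * ∏ j ∈ F, f j := by
  induction F using Finset.induction with
  | empty => simp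
  | @insert a s ha ih =>
    rw [Finset.prod_insert ha, Finset.card_insert_of_notMem ha, pow_succ]
    have h1 : f a < 0 := h a (Finset.mem_insert_self _ _)
    have h2 := ih (fun j hj => h j (Finset.mem_insert_of_mem hj))
    nlinarith

private lemma LRC_root_between (G : Polynomial ℝ) (a b : ℝ) (hab : a < b)
    (h : G.eval a * G.eval b < 0) : ∃ r, r ∈ Set.Ioo a b ∧ G.eval r = 0 := by
  have hc : ContinuousOn (fun z => G.eval z) (Set.Icc a b) := G.continuous.continuousOn
  rcases lt_or_ge (G.eval a) 0 with h1 | h1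
  · have h2 : 0 < G.eval b := by nlinarith
    have := intermediate_value_Ioo hab.le hc (Set.mem_Ioo.mpr ⟨h1, h2⟩)
    obtain ⟨r, hr, hr0⟩ := this
    exact ⟨r, hr, hr0⟩
  · have h1' : 0 < G.eval a := by
      rcases h1.lt_or_eq with h2 | h2
      · exact h2
      · rw [← h2, zero_mul] at h; exact absurd h (lt_irrefl 0)
    have h2 : G.eval b < 0 := by nlinarith
    have := intermediate_value_Ioo' hab.le hc (Set.mem_Ioo.mpr ⟨h2, h1'⟩)
    obtain ⟨r, hr, hr0⟩ := this
    exact ⟨r, hr, hr0⟩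

private lemma LRC_factor (G : Polynomial ℝ) (hG : G ≠ 0) (F : Finset ℝ)
    (hcard : G.natDegree ≤ F.card) (hroots : ∀ z ∈ F, G.eval z = 0) :
    G.natDegree = F.card ∧ G = C G.leadingCoeff * ∏ z ∈ F, (X - C z) := by
  have hle : F.val ≤ G.roots := by
    rw [Multiset.le_iff_subset F.nodup]
    intro z hz
    rw [Polynomial.mem_roots hG]
    exact hroots z hz
  have hcard2 : Multiset.card G.roots ≤ G.natDegree := G.card_roots'
  have h1 : F.card ≤ Multiset.card G.roots := by simpa using Multiset.card_le_card hle
  have heq : G.natDegree = F.card := le_antisymm hcard (le_trans h1 hcard2)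
  have hc3 : F.card = Multiset.card F.val := rfl
  have hroots_eq : G.roots = F.val :=
    (Multiset.eq_of_le_of_card_le hle (by omega)).symm
  have hsplits : G.Splits := Polynomial.splits_iff_card_roots.mpr (by omega)
  refine ⟨heq, ?_⟩
  conv_lhs => rw [← Polynomial.C_leadingCoeff_mul_prod_multiset_X_sub_C (Polynomial.splits_iff_card_roots.mp hsplits)]
  rw [hroots_eq]
  rfl

section
variable (n : ℕ) (x y : ℕ → ℝ)

private lemma LRC_ylt (hx : ∀ i j, i < j → j < n → x i < x j)
    (hinter : ∀ i, i + 1 < n → x i < y i ∧ y i < x (i + 1)) :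
    ∀ i j, i < j → j < n - 1 → y i < y j := by
  intro i j hij hj
  have h1 : y i < x (i+1) := (hinter i (by omega)).2
  have h3 : x j < y j := (hinter j (by omega)).1
  have h2 : x (i+1) ≤ x j := by
    rcases lt_or_eq_of_le (Nat.succ_le_of_lt hij) with h | h
    · exact (hx _ _ h (by omega)).le
    · exact (congrArg x h).le
  linarith

private lemma LRC_yle (hx : ∀ i j, i < j → j < n → x i < x j)
    (hinter : ∀ i, i + 1 < n → x i < y i ∧ y i < x (i + 1)) :
    ∀ i j, i ≤ j → j < n - 1 → y i ≤ y j := by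
  intro i j hij hj
  rcases lt_or_eq_of_le hij with h | h
  · exact (LRC_ylt n x y hx hinter i j h hj).le
  · rw [h]

private lemma LRC_signP (hn : 2 ≤ n)
    (hx : ∀ i j, i < j → j < n → x i < x j)
    (hinter : ∀ i, i + 1 < n → x i < y i ∧ y i < x (i + 1))
    (i : ℕ) (hi : i < n - 1) :
    0 < (-1 : ℝ) ^ (n - 1 - i) * ∏ j ∈ Finset.range n, (y i - x j) := by
  have hsplit : (∏ j ∈ Finset.range (i+1), (y i - x j)) *
      (∏ j ∈ Finset.Ico (i+1) n, (y i - x j)) = ∏ j ∈ Finset.range n, (y i - x j) := by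
    simp only [Finset.range_eq_Ico]
    exact Finset.prod_Ico_consecutive _ (by omega) (by omega)
  have hA : 0 < ∏ j ∈ Finset.range (i+1), (y i - x j) := by
    apply Finset.prod_pos
    intro j hj
    have hj' : j ≤ i := by simpa using Nat.lt_succ_iff.mp (Finset.mem_range.mp hj)
    have h1 : x j ≤ x i := by
      rcases lt_or_eq_of_le hj' with h | h
      · exact (hx _ _ h (by omega)).le
      · rw [h]
    have h2 : x i < y i := (hinter i (by omega)).1
    linarith
  have hB : 0 < (-1 : ℝ) ^ (Finset.Ico (i+1) n).card * ∏ j ∈ Finset.Ico (i+1) n, (y i - x j) := by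
    apply LRC_prod_neg
    intro j hj
    obtain ⟨hj1, hj2⟩ := Finset.mem_Ico.mp hj
    have h1 : x (i+1) ≤ x j := by
      rcases lt_or_eq_of_le hj1 with h | h
      · exact (hx _ _ h hj2).le
      · rw [h]
    have h2 : y i < x (i+1) := (hinter i (by omega)).2
    linarith
  rw [Nat.card_Ico] at hB
  have he : n - (i+1) = n - 1 - i := by omega
  rw [he] at hB
  rw [← hsplit]
  nlinarith [mul_pos hA hB]
end
private lemma LRC_core (n : ℕ) (hn : 2 ≤ n) (x y : ℕ → ℝ)
    (hx : ∀ i j, i < j → j < n → x i < x j)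
    (hinter : ∀ i, i + 1 < n → x i < y i ∧ y i < x (i + 1))
    (P Q : Polynomial ℝ)
    (hP : P = ∏ i ∈ Finset.range n, (X - C (x i)))
    (hQ : Q = C (n : ℝ) * ∏ i ∈ Finset.range (n - 1), (X - C (y i)))
    (L : Polynomial ℝ) (hL : L.natDegree ≤ 1)
    (v w : ℝ) (hYv : y (n - 2) < v) (hvw : v < w)
    (hv : (P - L * Q).eval v = 0) (hw : (P - L * Q).eval w = 0) :
    (P - L * Q).leadingCoeff < 0 ∧ ∀ t, v < t → t < w → 0 < (P - L * Q).eval t := by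
  classical
  set G := P - L * Q with hGdef
  have Pval : ∀ z, P.eval z = ∏ j ∈ Finset.range n, (z - x j) := by
    intro z; rw [hP]; simp [eval_prod]
  have Qval : ∀ z, Q.eval z = n * ∏ j ∈ Finset.range (n - 1), (z - y j) := by
    intro z; rw [hQ]; simp [eval_prod]
  have Qzero : ∀ i, i < n - 1 → Q.eval (y i) = 0 := by
    intro i hi
    rw [Qval, Finset.prod_eq_zero (Finset.mem_range.mpr hi) (sub_self (y i)), mul_zero]
  have hGy : ∀ i, i < n - 1 → G.eval (y i) = P.eval (y i) := by
    intro i hi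
    simp [hGdef, Qzero i hi]
  have hsign : ∀ i, i < n - 1 → 0 < (-1 : ℝ) ^ (n - 1 - i) * G.eval (y i) := by
    intro i hi
    rw [hGy i hi, Pval]
    exact LRC_signP n x y hn hx hinter i hi
  have hmid : ∀ i : ℕ, ∃ z : ℝ, i < n - 2 → z ∈ Set.Ioo (y i) (y (i+1)) ∧ G.eval z = 0 := by
    intro i
    by_cases hi : i < n - 2
    · have h1 := hsign i (by omega)
      have h2 := hsign (i+1) (by omega)
      have he : n - 1 - i = (n - 1 - (i+1)) + 1 := by omega
      rw [he, pow_succ] at h1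
      have hprodneg : G.eval (y i) * G.eval (y (i+1)) < 0 := by
        rcases neg_one_pow_eq_or ℝ (n - 1 - (i+1)) with hE | hE <;> rw [hE] at h1 h2 <;>
          nlinarith
      obtain ⟨z, hz1, hz2⟩ := LRC_root_between G (y i) (y (i+1))
        (LRC_ylt n x y hx hinter i (i+1) (by omega) (by omega)) hprodneg
      exact ⟨z, fun _ => ⟨hz1, hz2⟩⟩
    · exact ⟨0, fun h => absurd h hi⟩
  choose r hr using hmid
  have hrY : ∀ i, i < n - 2 → r i < v := by
    intro i hi
    have h1 : r i < y (i+1) := (hr i hi).1.2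
    have h2 : y (i+1) ≤ y (n-2) := LRC_yle n x y hx hinter (i+1) (n-2) (by omega) (by omega)
    linarith
  have hrlt : ∀ i j, i < n - 2 → j < n - 2 → i < j → r i < r j := by
    intro i j hi hj hij
    have h1 : r i < y (i+1) := (hr i hi).1.2
    have h2 : y j < r j := (hr j hj).1.1
    have h3 : y (i+1) ≤ y j := LRC_yle n x y hx hinter (i+1) j hij (by omega)
    linarith
  set F : Finset ℝ := (Finset.range (n-2)).image r ∪ {v, w} with hF
  have hvF : v ∈ F := by simp [hF]
  have hwF : w ∈ F := by simp [hF]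
  have himlt : ∀ z ∈ (Finset.range (n-2)).image r, z < v := by
    intro z hz
    obtain ⟨i, hi, rfl⟩ := Finset.mem_image.mp hz
    exact hrY i (Finset.mem_range.mp hi)
  have hcardim : ((Finset.range (n-2)).image r).card = n - 2 := by
    rw [Finset.card_image_of_injOn]
    · exact Finset.card_range _
    · intro i hi j hj hij
      rcases lt_trichotomy i j with h | h | h
      · exact absurd (hrlt i j (Finset.mem_range.mp hi) (Finset.mem_range.mp hj) h)
          (by rw [hij]; exact lt_irrefl _)
      · exact h
      · exact absurd (hrlt j i (Finset.mem_range.mp hj) (Finset.mem_range.mp hi) h)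
          (by rw [hij]; exact lt_irrefl _)
  have hcardF : F.card = n := by
    rw [hF, Finset.card_union_of_disjoint, hcardim]
    · have h2 : ({v, w} : Finset ℝ).card = 2 := by
        rw [Finset.card_insert_of_notMem (by simp [hvw.ne]), Finset.card_singleton]
      rw [h2]; omega
    · rw [Finset.disjoint_right]
      intro z hz
      have hz' : v ≤ z := by
        rcases Finset.mem_insert.mp hz with h | h
        · rw [h]
        · rw [Finset.mem_singleton.mp h]; exact hvw.le
      intro hmem
      exact absurd (himlt z hmem) (not_lt.mpr hz')
  have hrootsF : ∀ z ∈ F, G.eval z = 0 := by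
    intro z hz
    rw [hF, Finset.mem_union] at hz
    rcases hz with hz | hz
    · obtain ⟨i, hi, rfl⟩ := Finset.mem_image.mp hz
      exact (hr i (Finset.mem_range.mp hi)).2
    · rcases Finset.mem_insert.mp hz with h | h
      · rw [h]; exact hv
      · rw [Finset.mem_singleton.mp h]; exact hw
  have hPn : P.natDegree = n := by
    rw [hP, Polynomial.natDegree_prod_of_monic]
    · simp
    · intro i _; exact monic_X_sub_C _
  have hQn : Q.natDegree ≤ n - 1 := by
    rw [hQ]
    refine le_trans (Polynomial.natDegree_C_mul_le _ _) ?_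
    rw [Polynomial.natDegree_prod_of_monic]
    · simp
    · intro i _; exact monic_X_sub_C _
  have hLQ : (L * Q).natDegree ≤ n := by
    refine le_trans (Polynomial.natDegree_mul_le) ?_
    omega
  have hdegG : G.natDegree ≤ n := by
    rw [hGdef]
    exact le_trans (Polynomial.natDegree_sub_le _ _) (by rw [hPn]; exact max_le le_rfl hLQ)
  have hGne : G ≠ 0 := by
    intro h0
    have h1 := hsign 0 (by omega)
    rw [h0] at h1
    simpa using h1
  obtain ⟨hdeq, hfac⟩ := LRC_factor G hGne F (by rw [hcardF]; exact hdegG) hrootsF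
  set c := G.leadingCoeff with hc
  have hy0F : ∀ z ∈ F, y 0 < z := by
    intro z hz
    have h0Y : y 0 ≤ y (n-2) := LRC_yle n x y hx hinter 0 (n-2) (by omega) (by omega)
    rw [hF, Finset.mem_union] at hz
    rcases hz with hz | hz
    · obtain ⟨i, hi, rfl⟩ := Finset.mem_image.mp hz
      have hi' : i < n - 2 := Finset.mem_range.mp hi
      have hyr := (hr i hi').1.1
      have h0i : y 0 ≤ y i := LRC_yle n x y hx hinter 0 i (by omega) (by omega)
      linarith
    · have hvz : v ≤ z := by
        rcases Finset.mem_insert.mp hz with h | h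
        · rw [h]
        · rw [Finset.mem_singleton.mp h]; exact hvw.le
      linarith
  have hprod0 : 0 < (-1:ℝ)^n * ∏ z ∈ F, (y 0 - z) := by
    have h1 := LRC_prod_neg F (fun z => y 0 - z) (fun z hz => by
      show y 0 - z < 0
      have := hy0F z hz; linarith)
    rwa [hcardF] at h1
  have hev0 : G.eval (y 0) = c * ∏ z ∈ F, (y 0 - z) := by
    conv_lhs => rw [hfac]
    simp [eval_prod]
  have hsign0 := hsign 0 (by omega)
  rw [hev0] at hsign0
  have hclt : c < 0 := by
    have hnn : n = (n-1)+1 := by omega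
    rw [hnn, pow_succ] at hprod0
    have he0 : n - 1 - 0 = n - 1 := by omega
    rw [he0] at hsign0
    rcases neg_one_pow_eq_or ℝ (n-1) with hE | hE <;> rw [hE] at hprod0 hsign0 <;> nlinarith
  refine ⟨hclt, ?_⟩
  intro t hvt htw
  have hevt : G.eval t = c * ∏ z ∈ F, (t - z) := by
    conv_lhs => rw [hfac]
    simp [eval_prod]
  rw [hevt]
  have hsplitt : ∏ z ∈ F, (t - z) = (t - w) * ∏ z ∈ F.erase w, (t - z) :=
    (Finset.mul_prod_erase F _ hwF).symm
  have hpos : 0 < ∏ z ∈ F.erase w, (t - z) := by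
    apply Finset.prod_pos
    intro z hz
    have hz1 : z ∈ F := Finset.mem_of_mem_erase hz
    have hz2 : z ≠ w := Finset.ne_of_mem_erase hz
    rw [hF, Finset.mem_union] at hz1
    rcases hz1 with h | h
    · have := himlt z h; linarith
    · rcases Finset.mem_insert.mp h with h | h
      · rw [h]; linarith
      · exact absurd (Finset.mem_singleton.mp h) hz2
  rw [hsplitt]
  have hneg : t - w < 0 := by linarith
  nlinarith [mul_pos (mul_pos (neg_pos.mpr hclt) (neg_pos.mpr hneg)) hpos]
private lemma LRC_Pmonic (n : ℕ) (x : ℕ → ℝ) (P : Polynomial ℝ)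
    (hP : P = ∏ i ∈ Finset.range n, (X - C (x i))) : P.Monic ∧ P.natDegree = n := by
  constructor
  · rw [hP]; exact monic_prod_of_monic _ _ (fun i _ => monic_X_sub_C _)
  · rw [hP, Polynomial.natDegree_prod_of_monic]
    · simp
    · intro i _; exact monic_X_sub_C _

private lemma LRC_Qdeg (n : ℕ) (y : ℕ → ℝ) (Q : Polynomial ℝ)
    (hQ : Q = C (n : ℝ) * ∏ i ∈ Finset.range (n - 1), (X - C (y i))) :
    Q.natDegree ≤ n - 1 := by
  rw [hQ]
  refine le_trans (Polynomial.natDegree_C_mul_le _ _) ?_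
  rw [Polynomial.natDegree_prod_of_monic]
  · simp
  · intro i _; exact monic_X_sub_C _

private lemma LRC_GMonic (n : ℕ) (hn : 2 ≤ n) (x y : ℕ → ℝ) (P Q : Polynomial ℝ)
    (hP : P = ∏ i ∈ Finset.range n, (X - C (x i)))
    (hQ : Q = C (n : ℝ) * ∏ i ∈ Finset.range (n - 1), (X - C (y i)))
    (l : ℝ) : (P - C l * Q).Monic ∧ (P - C l * Q).natDegree = n := by
  obtain ⟨hPm, hPn⟩ := LRC_Pmonic n x P hP
  have hQn := LRC_Qdeg n y Q hQ
  have hlq : (C l * Q).natDegree < P.natDegree := by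
    rw [hPn]
    have := Polynomial.natDegree_C_mul_le l Q
    omega
  have hm : (P - C l * Q).Monic := hPm.sub_of_left (Polynomial.degree_lt_degree hlq)
  refine ⟨hm, ?_⟩
  have h1 : (P - C l * Q).natDegree ≤ n :=
    le_trans (Polynomial.natDegree_sub_le _ _) (by rw [hPn]; exact max_le le_rfl (by omega))
  have h2 : (P - C l * Q).coeff n = 1 := by
    have hc1 : P.coeff n = 1 := by
      have := hPm.coeff_natDegree
      rwa [hPn] at this
    have hc2 : (C l * Q).coeff n = 0 :=
      Polynomial.coeff_eq_zero_of_natDegree_lt (by omega)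
    simp [hc1, hc2]
  exact le_antisymm h1 (Polynomial.le_natDegree_of_ne_zero (by rw [h2]; exact one_ne_zero))

private lemma LRC_PY (n : ℕ) (hn : 2 ≤ n) (x y : ℕ → ℝ)
    (hx : ∀ i j, i < j → j < n → x i < x j)
    (hinter : ∀ i, i + 1 < n → x i < y i ∧ y i < x (i + 1))
    (P : Polynomial ℝ) (hP : P = ∏ i ∈ Finset.range n, (X - C (x i))) :
    P.eval (y (n - 2)) < 0 := by
  have hs := LRC_signP n x y hn hx hinter (n-2) (by omega)
  have he : n - 1 - (n-2) = 1 := by omega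
  rw [he, pow_one] at hs
  have hPv : P.eval (y (n-2)) = ∏ j ∈ Finset.range n, (y (n-2) - x j) := by
    rw [hP]; simp [eval_prod]
  rw [hPv]; linarith

private lemma LRC_QY (n : ℕ) (hn : 2 ≤ n) (y : ℕ → ℝ) (Q : Polynomial ℝ)
    (hQ : Q = C (n : ℝ) * ∏ i ∈ Finset.range (n - 1), (X - C (y i))) :
    Q.eval (y (n - 2)) = 0 := by
  rw [hQ]
  simp only [eval_mul, eval_C, eval_prod, eval_sub, eval_X]
  rw [Finset.prod_eq_zero (Finset.mem_range.mpr (show n-2 < n-1 by omega))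
    (sub_self (y (n-2))), mul_zero]

private lemma LRC_mono (n : ℕ) (hn : 2 ≤ n) (x y : ℕ → ℝ)
    (hx : ∀ i j, i < j → j < n → x i < x j)
    (hinter : ∀ i, i + 1 < n → x i < y i ∧ y i < x (i + 1))
    (P Q : Polynomial ℝ)
    (hP : P = ∏ i ∈ Finset.range n, (X - C (x i)))
    (hQ : Q = C (n : ℝ) * ∏ i ∈ Finset.range (n - 1), (X - C (y i)))
    (l : ℝ) (s u : ℝ) (hYs : y (n - 2) < s) (hsu : s < u)
    (hu : (P - C l * Q).eval u = 0) : (P - C l * Q).eval s < 0 := by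
  by_contra hcon
  push_neg at hcon
  have hGY : (P - C l * Q).eval (y (n-2)) < 0 := by
    have h1 := LRC_PY n hn x y hx hinter P hP
    have h2 := LRC_QY n hn y Q hQ
    simp [h2]
    exact h1
  have hroot : ∃ v, y (n-2) < v ∧ v ≤ s ∧ (P - C l * Q).eval v = 0 := by
    rcases eq_or_lt_of_le hcon with heq | hlt
    · exact ⟨s, hYs, le_rfl, heq.symm⟩
    · obtain ⟨v, hv1, hv2⟩ := LRC_root_between (P - C l * Q) (y (n-2)) s hYs
        (mul_neg_of_neg_of_pos hGY hlt)
      exact ⟨v, hv1.1, hv1.2.le, hv2⟩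
  obtain ⟨v, hYv, hvs, hv⟩ := hroot
  have hcore := LRC_core n hn x y hx hinter P Q hP hQ (C l)
    (by simp) v u hYv (lt_of_le_of_lt hvs hsu) hv hu
  have hmon := (LRC_GMonic n hn x y P Q hP hQ l).1
  have : (1 : ℝ) < 0 := by
    have := hmon.leadingCoeff
    rw [this] at hcore  -- no
    exact hcore.1
  linarith
private lemma LRC_qpos (n : ℕ) (hn : 2 ≤ n) (x y : ℕ → ℝ)
    (hx : ∀ i j, i < j → j < n → x i < x j)
    (hinter : ∀ i, i + 1 < n → x i < y i ∧ y i < x (i + 1))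
    (Q : Polynomial ℝ)
    (hQ : Q = C (n : ℝ) * ∏ i ∈ Finset.range (n - 1), (X - C (y i)))
    (z : ℝ) (hz : y (n - 2) < z) : 0 < Q.eval z := by
  rw [hQ]
  simp only [eval_mul, eval_C, eval_prod, eval_sub, eval_X]
  apply mul_pos
  · exact_mod_cast Nat.cast_pos.mpr (show 0 < n by omega)
  · apply Finset.prod_pos
    intro j hj
    have hj' : j < n - 1 := Finset.mem_range.mp hj
    have := LRC_yle n x y hx hinter j (n-2) (by omega) (by omega)
    linarith

private lemma LRC_mY (n : ℕ) (hn : 2 ≤ n) (x y : ℕ → ℝ)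
    (hx : ∀ i j, i < j → j < n → x i < x j)
    (hinter : ∀ i, i + 1 < n → x i < y i ∧ y i < x (i + 1))
    (P Q : Polynomial ℝ)
    (hP : P = ∏ i ∈ Finset.range n, (X - C (x i)))
    (hQ : Q = C (n : ℝ) * ∏ i ∈ Finset.range (n - 1), (X - C (y i)))
    (m : ℝ → ℝ)
    (hm : ∀ l : ℝ, (P - C l * Q).IsRoot (m l) ∧
      ∀ t : ℝ, (P - C l * Q).IsRoot t → t ≤ m l)
    (l : ℝ) : y (n - 2) < m l := by
  obtain ⟨hmon, hdeg⟩ := LRC_GMonic n hn x y P Q hP hQ l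
  have hGY : (P - C l * Q).eval (y (n-2)) < 0 := by
    have h1 := LRC_PY n hn x y hx hinter P hP
    have h2 := LRC_QY n hn y Q hQ
    simp [h2]
    exact h1
  have hdpos : 0 < (P - C l * Q).degree :=
    Polynomial.natDegree_pos_iff_degree_pos.mp (by rw [hdeg]; omega)
  have htend : Filter.Tendsto (fun z => (P - C l * Q).eval z) Filter.atTop Filter.atTop :=
    (P - C l * Q).tendsto_atTop_of_leadingCoeff_nonneg hdpos
      (by rw [hmon.leadingCoeff]; norm_num)
  obtain ⟨b, hb⟩ :=
    ((htend.eventually_ge_atTop 1).and (Filter.eventually_ge_atTop (y (n-2) + 1))).exists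
  obtain ⟨z, hz1, hz2⟩ := LRC_root_between (P - C l * Q) (y (n-2)) b
    (by linarith [hb.2]) (mul_neg_of_neg_of_pos hGY (by linarith [hb.1]))
  have hle := (hm l).2 z hz2
  linarith [hz1.1]

theorem largest_root_convex (n : ℕ) (hn : 2 ≤ n) (x y : ℕ → ℝ)
    (hx : ∀ i j, i < j → j < n → x i < x j)
    (hinter : ∀ i, i + 1 < n → x i < y i ∧ y i < x (i + 1))
    (P Q : Polynomial ℝ)
    (hP : P = ∏ i ∈ Finset.range n, (X - C (x i)))
    (hQ : Q = C (n : ℝ) * ∏ i ∈ Finset.range (n - 1), (X - C (y i)))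
    (m : ℝ → ℝ)
    (hm : ∀ l : ℝ, (P - C l * Q).IsRoot (m l) ∧
      ∀ t : ℝ, (P - C l * Q).IsRoot t → t ≤ m l) :
    ConvexOn ℝ Set.univ m := by
  classical
  have hrooteq : ∀ l : ℝ, P.eval (m l) - l * Q.eval (m l) = 0 := by
    intro l
    have := (hm l).1
    simpa [Polynomial.IsRoot] using this
  have key : ∀ l1 l2 a b : ℝ, 0 < a → 0 < b → a + b = 1 → m l1 < m l2 →
      m (a * l1 + b * l2) ≤ a * m l1 + b * m l2 := by
    intro l1 l2 a b ha hb hab hmlt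
    set s := m l1 with hs
    set u := m l2 with hu
    have hYs : y (n-2) < s := LRC_mY n hn x y hx hinter P Q hP hQ m hm l1
    set t := a * s + b * u with ht
    have hst : s < t := by
      have e : a * s + b * u - s = b * (u - s) := by linear_combination s * hab
      have := mul_pos hb (sub_pos.mpr hmlt)
      rw [ht]; linarith
    have htu : t < u := by
      have e : u - (a * s + b * u) = a * (u - s) := by linear_combination (-u) * hab
      have := mul_pos ha (sub_pos.mpr hmlt)
      rw [ht]; linarith
    by_contra hcon
    push_neg at hcon
    set l := a * l1 + b * l2 with hl
    have hroot : (P - C l * Q).eval (m l) = 0 := (hm l).1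
    have hneg : (P - C l * Q).eval t < 0 :=
      LRC_mono n hn x y hx hinter P Q hP hQ l t (m l) (by linarith) hcon hroot
    set α := (l2 - l1) / (u - s) with hα
    set β := l1 - α * s with hβ
    set L : Polynomial ℝ := C α * X + C β with hL
    have hLdeg : L.natDegree ≤ 1 := by
      refine le_trans (Polynomial.natDegree_add_le _ _) ?_
      refine max_le (le_trans (Polynomial.natDegree_C_mul_le _ _) (by simp)) ?_
      simp
    have hus : u - s ≠ 0 := ne_of_gt (by linarith : (0:ℝ) < u - s)
    have hts' : t - s = b * (u - s) := by rw [ht]; linear_combination s * hab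
    have hevgen : ∀ z : ℝ, (P - L * Q).eval z = P.eval z - (α * z + β) * Q.eval z := by
      intro z
      simp only [hL, eval_sub, eval_mul, eval_add, eval_C, eval_X]
    have hevs : (P - L * Q).eval s = 0 := by
      rw [hevgen, hβ]
      linear_combination hrooteq l1
    have hαu : α * u + β = l2 := by
      rw [hβ, hα]
      field_simp
      ring
    have hevu : (P - L * Q).eval u = 0 := by
      rw [hevgen, hαu]
      linear_combination hrooteq l2
    have hαt : α * t + β = l := by
      have e1 : α * t - α * s = b * (l2 - l1) := by
        rw [← mul_sub, hts', hα]
        field_simp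
      rw [hβ, hl]
      linear_combination e1 - l1 * hab
    have hcore := LRC_core n hn x y hx hinter P Q hP hQ L hLdeg s u hYs
      (by linarith) hevs hevu
    have hpost := hcore.2 t hst htu
    rw [hevgen, hαt] at hpost
    have hneg' : (P - C l * Q).eval t = P.eval t - l * Q.eval t := by simp
    rw [hneg'] at hneg
    linarith
  refine ⟨convex_univ, ?_⟩
  intro p _ q _ a b ha hb hab
  simp only [smul_eq_mul]
  rcases eq_or_lt_of_le ha with ha0 | ha0
  · have hb1 : b = 1 := by linarith
    rw [← ha0, hb1]
    simp
  rcases eq_or_lt_of_le hb with hb0 | hb0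
  · have ha1 : a = 1 := by linarith
    rw [← hb0, ha1]
    simp
  rcases lt_trichotomy (m p) (m q) with h | h | h
  · exact key p q a b ha0 hb0 hab h
  · have hYp : y (n-2) < m p := LRC_mY n hn x y hx hinter P Q hP hQ m hm p
    have hqpos : 0 < Q.eval (m p) := LRC_qpos n hn x y hx hinter Q hQ _ hYp
    have h1 := hrooteq p
    have h2 := hrooteq q
    rw [← h] at h2
    have hpq : p = q := by
      have h3 : (p - q) * Q.eval (m p) = 0 := by linarith
      rcases mul_eq_zero.mp h3 with h4 | h4
      · linarith
      · exact absurd h4 (ne_of_gt hqpos)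
    rw [hpq]
    have he : a * q + b * q = q := by linear_combination q * hab
    rw [he]
    have he2 : a * m q + b * m q = m q := by linear_combination (m q) * hab
    rw [he2]
  · have hk := key q p b a hb0 ha0 (by linarith) h
    have he : a * p + b * q = b * q + a * p := by ring
    rw [he]
    linarith
end

section
/- For any monic hyperbolic polynomial P of degree n ≥ 1 and any real λ, the span of P is at most the span of P − λP′: Δ(P) ≤ Δ(P − λP′). -/
open Polynomial Filter Set

/-- The span of a polynomial: the difference between its largest and smallest real roots. -/
noncomputable def polySpan (P : Polynomial ℝ) : ℝ :=
  sSup {t : ℝ | P.IsRoot t} - sInf {t : ℝ | P.IsRoot t}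

lemma key_nonneg (s : ℝ) (T : Multiset ℝ) (h : ∀ r ∈ T, r ≤ s) :
    0 ≤ ((T.map (fun r => X - C r)).prod.eval s) ∧
    0 ≤ ((derivative (T.map (fun r => X - C r)).prod).eval s) := by
  induction T using Multiset.induction with
  | empty => simp
  | cons a T ih =>
    have ha : a ≤ s := h a (Multiset.mem_cons_self a T)
    have h' : ∀ r ∈ T, r ≤ s := fun r hr => h r (Multiset.mem_cons_of_mem hr)
    obtain ⟨h1, h2⟩ := ih h'
    rw [Multiset.map_cons, Multiset.prod_cons]
    constructor
    · simp only [eval_mul, eval_sub, eval_X, eval_C]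
      exact mul_nonneg (by linarith) h1
    · rw [derivative_mul]
      simp only [derivative_sub, derivative_X, derivative_C, sub_zero, eval_add, eval_mul,
        eval_sub, eval_X, eval_C, eval_one, one_mul]
      have := mul_nonneg (sub_nonneg.2 ha) h2
      linarith

lemma exists_root_ge (n : ℕ) (hn : 1 ≤ n) (P : Polynomial ℝ)
    (hPm : P.Monic) (hPd : P.natDegree = n) (hhyp : P.roots.card = n)
    (M : ℝ) (hM : P.IsRoot M) (hmax : ∀ x, P.IsRoot x → x ≤ M) (l : ℝ) :
    ∃ c, (P - C l * derivative P).IsRoot c ∧ M + l ≤ c := by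
  classical
  set Q := P - C l * derivative P with hQdef
  have hP0 : P ≠ 0 := hPm.ne_zero
  have hdegP : 0 < P.degree := by
    rw [← natDegree_pos_iff_degree_pos, hPd]; omega
  have hlt : degree (C l * derivative P) < degree P := by
    calc degree (C l * derivative P) ≤ degree (C l) + degree (derivative P) := degree_mul_le _ _
    _ ≤ 0 + degree (derivative P) := add_le_add degree_C_le le_rfl
    _ = degree (derivative P) := zero_add _
    _ < degree P := degree_derivative_lt hP0
  have hQm : Q.Monic := hPm.sub_of_left hlt
  have hdegQ : 0 < Q.degree := by
    rw [hQdef, degree_sub_eq_left_of_degree_lt hlt]; exact hdegP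
  by_contra hcon
  push_neg at hcon
  set s := M + l with hs
  -- Q is positive on [s, ∞)
  have hQpos : ∀ x, s ≤ x → 0 < Q.eval x := by
    intro x hx
    have hne : Q.eval x ≠ 0 := fun h => absurd hx (not_le.2 (hcon x h))
    rcases lt_or_gt_of_ne hne with hneg | hpos
    · exfalso
      have htop : Tendsto (fun y => Q.eval y) atTop atTop :=
        Q.tendsto_atTop_of_leadingCoeff_nonneg hdegQ (by rw [hQm.leadingCoeff]; norm_num)
      obtain ⟨b, hb⟩ := (htop.eventually_ge_atTop 1).and (eventually_ge_atTop x) |>.exists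
      have hxb : x ≤ b := hb.2
      have hmem : (0:ℝ) ∈ Icc (Q.eval x) (Q.eval b) := ⟨hneg.le, by linarith [hb.1]⟩
      obtain ⟨z, hzmem, hz0⟩ := intermediate_value_Icc hxb (Q.continuous_aeval.continuousOn) hmem
      have : z < s := hcon z hz0
      have : s ≤ z := le_trans hx hzmem.1
      linarith
    · exact hpos
  -- if l = 0, M itself contradicts
  have hMroots : M ∈ P.roots := by rw [mem_roots hP0]; exact hM
  set T := P.roots.erase M with hT
  have hroots : P.roots = M ::ₘ T := (Multiset.cons_erase hMroots).symm
  set R := (T.map (fun r => X - C r)).prod with hR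
  have hfact : P = (X - C M) * R := by
    conv_lhs => rw [← prod_multiset_X_sub_C_of_monic_of_roots_card_eq hPm (hhyp.trans hPd.symm)]
    rw [hroots, Multiset.map_cons, Multiset.prod_cons]
  have hTle : ∀ r ∈ T, r ≤ s := by
    rcases le_or_gt 0 l with hl | hl
    · intro r hr
      have h1 : P.IsRoot r := isRoot_of_mem_roots (Multiset.mem_of_mem_erase hr)
      have := hmax r h1
      rw [hs]; linarith
    · -- l < 0, so s < M
      have hsM : s < M := by rw [hs]; linarith
      have hd : ¬ (derivative P).IsRoot M := by
        intro h
        have hQM : Q.IsRoot M := by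
          simp only [IsRoot, hQdef, eval_sub, eval_mul, eval_C, hM.eq_zero, h.eq_zero]; ring
        have := hcon M hQM; rw [hs] at this; linarith
      have hmult : P.rootMultiplicity M = 1 := by
        have h1 := derivative_rootMultiplicity_of_root hM
        rw [rootMultiplicity_eq_zero hd] at h1
        have h2 : 0 < P.rootMultiplicity M := (rootMultiplicity_pos hP0).2 hM
        omega
      have hMT : M ∉ T := by
        rw [← Multiset.count_pos, hT, Multiset.count_erase_self, count_roots, hmult]
        omega
      have hPneg : ∀ x ∈ Ico s M, P.eval x < 0 := by
        set f : ℝ → ℝ := fun x => Real.exp (-x/l) * P.eval x with hf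
        have hmono : StrictMonoOn f (Icc s M) := by
          apply strictMonoOn_of_deriv_pos (convex_Icc s M)
          · exact ((Real.continuous_exp.comp ((continuous_neg.comp continuous_id).div_const l)).mul
              P.continuous_aeval).continuousOn
          · intro x hx
            rw [interior_Icc] at hx
            have hder : HasDerivAt f ((-1/l) * (Real.exp (-x/l) * Q.eval x)) x := by
              have h0 : HasDerivAt (fun y : ℝ => -y/l) (-1/l) x := by
                simpa using ((hasDerivAt_id x).neg.div_const l)
              have h1 : HasDerivAt (fun y : ℝ => Real.exp (-y/l)) (Real.exp (-x/l) * (-1/l)) x :=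
                (Real.hasDerivAt_exp _).comp x h0
              have h2 := P.hasDerivAt (𝕜 := ℝ) x
              have h3 := h1.mul h2
              refine h3.congr_deriv ?_
              rw [hQdef]
              simp only [eval_sub, eval_mul, eval_C]
              field_simp [hl.ne]
              ring
            rw [hder.deriv]
            have hQx := hQpos x (le_of_lt hx.1)
            have hexp := Real.exp_pos (-x/l)
            have hinv : 0 < -1/l := by
              rw [neg_div]
              exact neg_pos.2 (one_div_neg.2 hl)
            exact mul_pos hinv (mul_pos hexp hQx)
        intro x hx
        have hlt : f x < f M :=
          hmono ⟨hx.1, hx.2.le⟩ (right_mem_Icc.2 hsM.le) hx.2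
        have hfM : f M = 0 := by simp [hf, hM.eq_zero]
        rw [hfM] at hlt
        simp only [hf] at hlt
        have hexp := Real.exp_pos (-x/l)
        nlinarith [hlt]
      intro r hr
      have hrroot : P.IsRoot r := isRoot_of_mem_roots (Multiset.mem_of_mem_erase hr)
      have hrM : r ≤ M := hmax r hrroot
      by_contra hgt
      push_neg at hgt
      have hrneM : r ≠ M := fun h => hMT (h ▸ hr)
      have := hPneg r ⟨hgt.le, lt_of_le_of_ne hrM hrneM⟩
      rw [hrroot.eq_zero] at this
      linarith
  have hR' : 0 ≤ (derivative R).eval s := (key_nonneg s T hTle).2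
  -- compute Q.eval s
  have hQs : Q.eval s = -(l^2) * (derivative R).eval s := by
    have hd : derivative P = R + (X - C M) * derivative R := by
      rw [hfact, derivative_mul]; simp
    rw [hQdef, eval_sub, eval_mul, eval_C, hd, hfact]
    simp only [eval_mul, eval_add, eval_sub, eval_X, eval_C]
    have : s - M = l := by rw [hs]; ring
    rw [this]; ring
  have := hQpos s le_rfl
  rw [hQs] at this
  -- need l ≠ 0 for contradiction; if l = 0 then Q M = 0
  have hl0 : l ≠ 0 := by
    intro h
    have : Q.eval M = 0 := by rw [hQdef, h]; simp [hM.eq_zero]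
    have := hcon M this
    rw [hs, h] at this; linarith
  nlinarith [sq_nonneg l, hR', sq_abs l]

lemma refl_prod (T : Multiset ℝ) :
    ((T.map (fun r : ℝ => -r)).map (fun r => X - C r)).prod
      = C ((-1:ℝ)^(Multiset.card T)) * (((T.map (fun r => X - C r)).prod).comp (-X)) := by
  induction T using Multiset.induction with
  | empty => simp
  | cons a T ih =>
    simp only [Multiset.map_cons, Multiset.prod_cons, Multiset.card_cons]
    rw [mul_comp, sub_comp, X_comp, C_comp, ih, pow_succ]
    simp only [map_mul, map_neg, map_one, C_1]
    ring

lemma exists_root_le (n : ℕ) (hn : 1 ≤ n) (P : Polynomial ℝ)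
    (hPm : P.Monic) (hPd : P.natDegree = n) (hhyp : P.roots.card = n)
    (m : ℝ) (hm : P.IsRoot m) (hmin : ∀ x, P.IsRoot x → m ≤ x) (l : ℝ) :
    ∃ c, (P - C l * derivative P).IsRoot c ∧ c ≤ m + l := by
  classical
  have hP0 : P ≠ 0 := hPm.ne_zero
  set P₁ := ((P.roots.map (fun r : ℝ => -r)).map (fun r => X - C r)).prod with hP₁
  have hP₁m : P₁.Monic := monic_multiset_prod_of_monic _ _ (fun r _ => monic_X_sub_C r)
  have hcard : Multiset.card (P.roots.map (fun r : ℝ => -r)) = n := by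
    rw [Multiset.card_map, hhyp]
  have hP₁d : P₁.natDegree = n := by
    rw [hP₁, natDegree_multiset_prod_X_sub_C_eq_card, hcard]
  have hP₁roots : P₁.roots = P.roots.map (fun r : ℝ => -r) :=
    roots_multiset_prod_X_sub_C _
  have hP₁hyp : P₁.roots.card = n := by rw [hP₁roots, hcard]
  have hcomp : P₁ = C ((-1:ℝ)^n) * (P.comp (-X)) := by
    rw [hP₁, refl_prod, prod_multiset_X_sub_C_of_monic_of_roots_card_eq hPm (hhyp.trans hPd.symm),
      hhyp]
  have hMroot : P₁.IsRoot (-m) := by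
    apply isRoot_of_mem_roots
    rw [hP₁roots]
    exact Multiset.mem_map_of_mem _ ((mem_roots hP0).2 hm)
  have hmax₁ : ∀ x, P₁.IsRoot x → x ≤ -m := by
    intro x hx
    have hx' : x ∈ P₁.roots := (mem_roots hP₁m.ne_zero).2 hx
    rw [hP₁roots, Multiset.mem_map] at hx'
    obtain ⟨r, hr, hrx⟩ := hx'
    have := hmin r (isRoot_of_mem_roots hr)
    rw [← hrx]
    linarith
  obtain ⟨c, hc, hcge⟩ := exists_root_ge n hn P₁ hP₁m hP₁d hP₁hyp (-m) hMroot hmax₁ (-l)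
  have hQ₁ : P₁ - C (-l) * derivative P₁
      = C ((-1:ℝ)^n) * ((P - C l * derivative P).comp (-X)) := by
    rw [hcomp, sub_comp, mul_comp, C_comp]
    rw [derivative_C_mul, derivative_comp]
    simp only [derivative_neg, derivative_X, map_neg]
    ring
  rw [hQ₁] at hc
  refine ⟨-c, ?_, by linarith⟩
  have hc' : ((-1:ℝ)^n) * (P - C l * derivative P).eval (-c) = 0 := by
    simpa [IsRoot, eval_mul, eval_comp] using hc
  have hne : ((-1:ℝ)^n) ≠ 0 := pow_ne_zero _ (by norm_num)
  rcases mul_eq_zero.1 hc' with h | h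
  · exact absurd h hne
  · exact h

theorem span_le_span_shifted (n : ℕ) (hn : 1 ≤ n) (P : Polynomial ℝ)
    (hPm : P.Monic) (hPd : P.natDegree = n) (hhyp : P.roots.card = n) (l : ℝ) :
    polySpan P ≤ polySpan (P - C l * Polynomial.derivative P) := by
  classical
  have hP0 : P ≠ 0 := hPm.ne_zero
  set Q := P - C l * derivative P with hQdef
  have hlt : degree (C l * derivative P) < degree P := by
    calc degree (C l * derivative P) ≤ degree (C l) + degree (derivative P) := degree_mul_le _ _
    _ ≤ 0 + degree (derivative P) := add_le_add degree_C_le le_rfl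
    _ = degree (derivative P) := zero_add _
    _ < degree P := degree_derivative_lt hP0
  have hQm : Q.Monic := hPm.sub_of_left hlt
  have hQ0 : Q ≠ 0 := hQm.ne_zero
  have hSfin : {t : ℝ | P.IsRoot t}.Finite := finite_setOf_isRoot hP0
  have hSne : {t : ℝ | P.IsRoot t}.Nonempty := by
    have : P.roots ≠ 0 := by
      intro h
      rw [h] at hhyp
      simp at hhyp
      omega
    obtain ⟨r, hr⟩ := Multiset.exists_mem_of_ne_zero this
    exact ⟨r, isRoot_of_mem_roots hr⟩
  set M := sSup {t : ℝ | P.IsRoot t} with hMdef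
  set m := sInf {t : ℝ | P.IsRoot t} with hmdef
  have hM : P.IsRoot M := hSne.csSup_mem hSfin
  have hm : P.IsRoot m := hSne.csInf_mem hSfin
  have hmax : ∀ x, P.IsRoot x → x ≤ M := fun x hx => le_csSup hSfin.bddAbove hx
  have hmin : ∀ x, P.IsRoot x → m ≤ x := fun x hx => csInf_le hSfin.bddBelow hx
  obtain ⟨c, hc, hcge⟩ := exists_root_ge n hn P hPm hPd hhyp M hM hmax l
  obtain ⟨c', hc', hcle⟩ := exists_root_le n hn P hPm hPd hhyp m hm hmin l
  have hQfin : {t : ℝ | Q.IsRoot t}.Finite := finite_setOf_isRoot hQ0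
  have h1 : c ≤ sSup {t : ℝ | Q.IsRoot t} := le_csSup hQfin.bddAbove hc
  have h2 : sInf {t : ℝ | Q.IsRoot t} ≤ c' := csInf_le hQfin.bddBelow hc'
  rw [polySpan, polySpan]
  have : M - m ≤ c - c' := by linarith
  linarith
end

section
/- Let P be a monic hyperbolic polynomial of degree n and λ₁, λ₂ real numbers with λ₁λ₂ ≥ 0 and |λ₁| ≤ |λ₂|. Then Δ(P − λ₁P′) ≤ Δ(P − λ₂P′). -/
open Polynomial

namespace SpanAux
open Multiset
noncomputable def PP (N : Multiset ℝ) (x : ℝ) : ℝ := (N.map fun t => x - t).prod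
noncomputable def SS (N : Multiset ℝ) (x : ℝ) : ℝ := (N.map fun r => PP (N.erase r) x).sum

lemma erase_cons_of_mem {a r : ℝ} {s : Multiset ℝ} (h : r ∈ s) :
    (a ::ₘ s).erase r = a ::ₘ s.erase r := by
  by_cases hra : r = a
  · subst hra
    rw [Multiset.erase_cons_head, Multiset.cons_erase h]
  · exact Multiset.erase_cons_tail _ (fun hc => hra (by simpa using hc.symm))

lemma deriv_prod_X_sub_C (M : Multiset ℝ) :
    derivative (M.map fun r => X - C r).prod
      = (M.map fun r => ((M.erase r).map fun t => X - C t).prod).sum := by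
  induction M using Multiset.induction_on with
  | empty => simp
  | cons a s ih =>
    rw [Multiset.map_cons, Multiset.prod_cons, derivative_mul, ih, Multiset.map_cons,
      Multiset.sum_cons, Multiset.erase_cons_head]
    have h1 : derivative (X - C a) = 1 := by simp
    rw [h1, one_mul]
    congr 1
    have h2 : ∀ r ∈ s, ((a ::ₘ s).erase r).map (fun t => X - C t) =
        (X - C a) ::ₘ ((s.erase r).map fun t => X - C t) := by
      intro r hr
      rw [erase_cons_of_mem hr, Multiset.map_cons]
    calc (X - C a) * (s.map fun r => ((s.erase r).map fun t => X - C t).prod).sum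
        = (s.map fun r => (X - C a) * ((s.erase r).map fun t => X - C t).prod).sum := by
          rw [← Multiset.sum_map_mul_left]
      _ = (s.map fun r => (((a ::ₘ s).erase r).map fun t => X - C t).prod).sum := by
          apply congrArg
          apply Multiset.map_congr rfl
          intro r hr
          rw [h2 r hr, Multiset.prod_cons]

lemma eval_prod_X_sub_C (N : Multiset ℝ) (x : ℝ) :
    eval x (N.map fun r => X - C r).prod = PP N x := by
  rw [eval_multiset_prod, PP, Multiset.map_map]
  apply congrArg
  apply Multiset.map_congr rfl
  intro r _
  simp

lemma eval_sum_prod (M : Multiset ℝ) (x : ℝ) :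
    eval x (M.map fun r => ((M.erase r).map fun t => X - C t).prod).sum = SS M x := by
  rw [show eval x (M.map fun r => ((M.erase r).map fun t => X - C t).prod).sum = ((M.map fun r => ((M.erase r).map fun t => X - C t).prod).map (eval x)).sum from map_multiset_sum (Polynomial.evalRingHom x) _, SS, Multiset.map_map]
  apply congrArg
  apply Multiset.map_congr rfl
  intro r _
  simp [eval_prod_X_sub_C, PP]

lemma prod_map_neg (N : Multiset ℝ) (f : ℝ → ℝ) :
    (N.map fun t => -(f t)).prod = (-1 : ℝ) ^ (Multiset.card N) * (N.map f).prod := by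
  induction N using Multiset.induction_on with
  | empty => simp
  | cons a s ih => simp [ih]; ring

lemma PP_sign (N : Multiset ℝ) (x : ℝ) :
    PP N x = (-1 : ℝ) ^ (Multiset.card N) * (N.map fun t => t - x).prod := by
  rw [PP]
  rw [show (N.map fun t => x - t) = N.map fun t => -(t - x) by
    apply Multiset.map_congr rfl; intro t _; ring]
  exact prod_map_neg N _

lemma prod_map_nonneg (N : Multiset ℝ) (f : ℝ → ℝ) (h : ∀ t ∈ N, 0 ≤ f t) :
    0 ≤ (N.map f).prod := by
  apply Multiset.prod_nonneg
  intro a ha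
  obtain ⟨t, ht, rfl⟩ := Multiset.mem_map.mp ha
  exact h t ht

lemma prod_map_pos (N : Multiset ℝ) (f : ℝ → ℝ) (h : ∀ t ∈ N, 0 < f t) :
    0 < (N.map f).prod := by
  induction N using Multiset.induction_on with
  | empty => simp
  | cons a s ih =>
    rw [Multiset.map_cons, Multiset.prod_cons]
    exact mul_pos (h a (Multiset.mem_cons_self a s)) (ih fun t ht => h t (Multiset.mem_cons_of_mem ht))

lemma PP_erase (N : Multiset ℝ) {r : ℝ} (h : r ∈ N) (x : ℝ) :
    PP N x = (x - r) * PP (N.erase r) x := by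
  rw [PP, PP, ← Multiset.prod_map_erase (f := fun t => x - t) h]

lemma SS_cons (z : ℝ) (s : Multiset ℝ) (x : ℝ) :
    SS (z ::ₘ s) x = PP s x + (x - z) * (s.map fun r => PP (s.erase r) x).sum := by
  rw [SS, Multiset.map_cons, Multiset.sum_cons, Multiset.erase_cons_head]
  congr 1
  calc (s.map fun r => PP ((z ::ₘ s).erase r) x).sum
      = (s.map fun r => (x - z) * PP (s.erase r) x).sum := by
        apply congrArg
        apply Multiset.map_congr rfl
        intro r hr
        rw [show (z ::ₘ s).erase r = z ::ₘ s.erase r by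
          by_cases hrz : r = z
          · subst hrz; rw [Multiset.erase_cons_head, Multiset.cons_erase hr]
          · exact Multiset.erase_cons_tail _ (fun hc => hrz (by simpa using hc.symm))]
        rw [PP, Multiset.map_cons, Multiset.prod_cons, ← PP]
    _ = (x - z) * (s.map fun r => PP (s.erase r) x).sum := Multiset.sum_map_mul_left

/-- The perturbed polynomial. -/
noncomputable def Q (P : ℝ[X]) (v : ℝ) : ℝ[X] := P - C v * derivative P

section Main
variable {P : ℝ[X]} {n : ℕ}

lemma evalP (hm : P.Monic) (hc : Multiset.card P.roots = n) (hd : P.natDegree = n) (x : ℝ) :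
    eval x P = PP P.roots x := by
  conv_lhs => rw [← prod_multiset_X_sub_C_of_monic_of_roots_card_eq hm (hc.trans hd.symm)]
  exact eval_prod_X_sub_C _ _

lemma evalP' (hm : P.Monic) (hc : Multiset.card P.roots = n) (hd : P.natDegree = n) (x : ℝ) :
    eval x (derivative P) = SS P.roots x := by
  conv_lhs => rw [← prod_multiset_X_sub_C_of_monic_of_roots_card_eq hm (hc.trans hd.symm),
    deriv_prod_X_sub_C]
  exact eval_sum_prod _ _

lemma evalQ (hm : P.Monic) (hc : Multiset.card P.roots = n) (hd : P.natDegree = n) (v x : ℝ) :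
    eval x (Q P v) = PP P.roots x - v * SS P.roots x := by
  simp [Q, evalP hm hc hd, evalP' hm hc hd]

lemma Qmonic (hn : 1 ≤ n) (hm : P.Monic) (hd : P.natDegree = n) (v : ℝ) : (Q P v).Monic := by
  rw [Q, sub_eq_add_neg]
  apply hm.add_of_left
  rw [degree_neg]
  calc (C v * derivative P).degree ≤ (derivative P).degree := by
        rcases eq_or_ne v 0 with h | h
        · simp [h]
        · rw [degree_C_mul h]
    _ < P.degree := degree_derivative_lt (fun h0 => by simp [h0, Polynomial.natDegree_zero] at hd; omega)
  
lemma Qne (hn : 1 ≤ n) (hm : P.Monic) (hd : P.natDegree = n) (v : ℝ) : Q P v ≠ 0 :=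
  (Qmonic hn hm hd v).ne_zero

lemma Qdegpos (hn : 1 ≤ n) (hm : P.Monic) (hd : P.natDegree = n) (v : ℝ) : 0 < (Q P v).degree := by
  have h1 : P.degree ≤ (Q P v).degree := by
    rw [Q, sub_eq_add_neg]
    have h2 : (-(C v * derivative P)).degree < P.degree := by
      rw [degree_neg]
      calc (C v * derivative P).degree ≤ (derivative P).degree := by
            rcases eq_or_ne v 0 with h | h
            · simp [h]
            · rw [degree_C_mul h]
        _ < P.degree := degree_derivative_lt (fun h0 => by simp [h0] at hd; omega)
    rw [degree_add_eq_left_of_degree_lt h2]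
  refine lt_of_lt_of_le ?_ h1
  rw [degree_eq_natDegree hm.ne_zero, hd]
  exact_mod_cast Nat.pos_of_ne_zero (by omega)

/-- There is a root of `Q P v` at or above any point where `eval` is `≤ 0`. -/
lemma root_above (hn : 1 ≤ n) (hm : P.Monic) (hd : P.natDegree = n) (v u : ℝ)
    (hu : eval u (Q P v) ≤ 0) : ∃ w, u ≤ w ∧ (Q P v).IsRoot w := by
  have ht := Polynomial.tendsto_atTop_of_leadingCoeff_nonneg (Q P v) (Qdegpos hn hm hd v)
    (by rw [(Qmonic hn hm hd v).leadingCoeff]; norm_num)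
  obtain ⟨z, hz1, hz2⟩ := ((ht.eventually_ge_atTop 1).and (Filter.eventually_ge_atTop u)).exists
  have huz : u ≤ z := hz2
  have h0 : (0 : ℝ) ∈ Set.Icc (eval u (Q P v)) (eval z (Q P v)) := ⟨hu, by linarith⟩
  obtain ⟨w, hw1, hw2⟩ := intermediate_value_Icc huz (((Q P v).continuous.continuousOn)) h0
  exact ⟨w, hw1.1, hw2⟩

end Main

section Signs

lemma SS_above (M : Multiset ℝ) (x : ℝ) (h : ∀ t ∈ M, t ≤ x) : 0 ≤ SS M x := by
  apply Multiset.sum_nonneg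
  intro a ha
  obtain ⟨r, hr, rfl⟩ := Multiset.mem_map.mp ha
  exact prod_map_nonneg _ _ fun t ht => by
    have := h t (Multiset.mem_of_mem_erase ht); linarith

lemma PP_above (M : Multiset ℝ) (x : ℝ) (h : ∀ t ∈ M, t ≤ x) : 0 ≤ PP M x :=
  prod_map_nonneg _ _ fun t ht => by have := h t ht; linarith

lemma PP_above_pos (M : Multiset ℝ) (x : ℝ) (h : ∀ t ∈ M, t < x) : 0 < PP M x :=
  prod_map_pos _ _ fun t ht => by have := h t ht; linarith

lemma neg_pow_sq (n : ℕ) : ((-1 : ℝ) ^ n) * ((-1 : ℝ) ^ n) = 1 := by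
  rw [← pow_add]
  exact Even.neg_one_pow ⟨n, rfl⟩

lemma SS_below (M : Multiset ℝ) (n : ℕ) (hcard : Multiset.card M = n) (x : ℝ)
    (h : ∀ t ∈ M, x ≤ t) : 0 ≤ (-(-1 : ℝ) ^ n) * SS M x := by
  have key : SS M x = (-(-1 : ℝ) ^ n) *
      (M.map fun r => ((M.erase r).map fun t => t - x).prod).sum := by
    rw [SS]
    rw [show (M.map fun r => PP (M.erase r) x)
        = M.map fun r => (-(-1 : ℝ) ^ n) * ((M.erase r).map fun t => t - x).prod by
      apply Multiset.map_congr rfl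
      intro r hr
      rw [PP_sign, Multiset.card_erase_of_mem hr, hcard]
      have hn1 : 1 ≤ n := by
        have h0 : M ≠ 0 := fun h0 => by simp [h0] at hr
        have : 0 < Multiset.card M := Multiset.card_pos.mpr h0
        omega
      congr 1
      have hkey : ((-1 : ℝ)) ^ (n - 1) = -(-1 : ℝ) ^ n := by
        have h := pow_succ (-1 : ℝ) (n - 1)
        rw [show n - 1 + 1 = n from by omega] at h
        linarith
      rw [Nat.pred_eq_sub_one, hkey]]
    exact Multiset.sum_map_mul_left
  rw [key, ← mul_assoc]
  have h1 : (-(-1 : ℝ) ^ n) * (-(-1 : ℝ) ^ n) = 1 := by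
    have := neg_pow_sq n; nlinarith
  rw [h1, one_mul]
  apply Multiset.sum_nonneg
  intro a ha
  obtain ⟨r, hr, rfl⟩ := Multiset.mem_map.mp ha
  exact prod_map_nonneg _ _ fun t ht => by
    have := h t (Multiset.mem_of_mem_erase ht); linarith

lemma PP_below_pos (M : Multiset ℝ) (n : ℕ) (hcard : Multiset.card M = n) (x : ℝ)
    (h : ∀ t ∈ M, x < t) : 0 < ((-1 : ℝ) ^ n) * PP M x := by
  rw [PP_sign, hcard, ← mul_assoc, neg_pow_sq, one_mul]
  exact prod_map_pos _ _ fun t ht => by have := h t ht; linarith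

end Signs

section Main2
variable {P : ℝ[X]} {n : ℕ}

/-- All roots of `Q P v` for `v ≥ 0` lie at or above the smallest root of `P`. -/
lemma root_ge (hn : 1 ≤ n) (hm : P.Monic) (hd : P.natDegree = n)
    (hc : Multiset.card P.roots = n) {v : ℝ} (hv : 0 ≤ v) {z1 : ℝ}
    (hz1 : ∀ r ∈ P.roots, z1 ≤ r) {t : ℝ} (ht : (Q P v).IsRoot t) : z1 ≤ t := by
  by_contra hlt
  push_neg at hlt
  have hall : ∀ r ∈ P.roots, t < r := fun r hr => lt_of_lt_of_le hlt (hz1 r hr)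
  have h1 : 0 < ((-1 : ℝ) ^ n) * PP P.roots t := PP_below_pos _ n hc t hall
  have h2 : 0 ≤ (-(-1 : ℝ) ^ n) * SS P.roots t :=
    SS_below _ n hc t fun r hr => le_of_lt (hall r hr)
  have h3 : eval t (Q P v) = 0 := ht
  rw [evalQ hm hc hd] at h3
  have h6 : v * (-(-1 : ℝ) ^ n * SS P.roots t) = -((-1 : ℝ) ^ n * PP P.roots t) := by
    have h7 : PP P.roots t = v * SS P.roots t := by linarith
    rw [h7]; ring
  linarith [mul_nonneg hv h2, h1, h6]

end Main2

section Claim1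
variable {P : ℝ[X]} {n : ℕ}

lemma claim_sup (hn : 1 ≤ n) (hm : P.Monic) (hd : P.natDegree = n)
    (hc : Multiset.card P.roots = n) {lam mu : ℝ} (h0 : 0 ≤ lam) (hlm : lam < mu)
    {xn b : ℝ} (hxn : ∀ r ∈ P.roots, r ≤ xn) (hb : (Q P lam).IsRoot b) (hbxn : xn ≤ b) :
    ∃ w, b + (mu - lam) ≤ w ∧ (Q P mu).IsRoot w := by
  set M := P.roots with hM
  set s := b + (mu - lam) with hs
  have hall_lt_s : ∀ r ∈ M, r < s := fun r hr => by
    have := hxn r hr; simp only [hs]; linarith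
  have hall_le_b : ∀ r ∈ M, r ≤ b := fun r hr => le_trans (hxn r hr) hbxn
  have hQb : PP M b = lam * SS M b := by
    have h3 : eval b (Q P lam) = 0 := hb
    rw [evalQ hm hc hd] at h3
    linarith
  have hmu : 0 < mu := lt_of_le_of_lt h0 hlm
  -- main inequality
  have hmain : PP M s ≤ mu * SS M s := by
    by_cases hex : ∃ r ∈ M, b - r ≤ lam
    · obtain ⟨r0, hr0, hr0le⟩ := hex
      have h1 : PP M s = (s - r0) * PP (M.erase r0) s := PP_erase M hr0 s
      have h2 : 0 ≤ PP (M.erase r0) s := prod_map_nonneg _ _ fun t ht => by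
        have := hall_lt_s t (Multiset.mem_of_mem_erase ht); linarith
      have h3 : s - r0 ≤ mu := by simp only [hs]; linarith
      have h4 : PP (M.erase r0) s ≤ SS M s := by
        apply Multiset.single_le_sum
        · intro y hy
          obtain ⟨r, hr, rfl⟩ := Multiset.mem_map.mp hy
          exact prod_map_nonneg _ _ fun t ht => by
            have := hall_lt_s t (Multiset.mem_of_mem_erase ht); linarith
        · exact Multiset.mem_map_of_mem _ hr0
      calc PP M s = (s - r0) * PP (M.erase r0) s := h1
        _ ≤ mu * PP (M.erase r0) s := mul_le_mul_of_nonneg_right h3 h2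
        _ ≤ mu * SS M s := mul_le_mul_of_nonneg_left h4 (le_of_lt hmu)
    · push_neg at hex
      have hall_lt_b : ∀ r ∈ M, r < b := fun r hr => by have := hex r hr; linarith
      have hPPb : 0 < PP M b := PP_above_pos M b hall_lt_b
      have hlam : 0 < lam := by
        rcases h0.eq_or_lt with h | h
        · exfalso; rw [← h] at hQb; simp at hQb; linarith
        · exact h
      have key : (M.map fun r => (lam * PP M s) * PP (M.erase r) b).sum ≤
          (M.map fun r => (mu * PP M b) * PP (M.erase r) s).sum := by
        apply Multiset.sum_map_le_sum_map
        intro r hr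
        have hA : 0 ≤ PP (M.erase r) s := prod_map_nonneg _ _ fun t ht => by
          have := hall_lt_s t (Multiset.mem_of_mem_erase ht); linarith
        have hB : 0 ≤ PP (M.erase r) b := prod_map_nonneg _ _ fun t ht => by
          have := hall_lt_b t (Multiset.mem_of_mem_erase ht); linarith
        have hcmp : lam * (s - r) ≤ mu * (b - r) := by nlinarith [hex r hr]
        have h10 : 0 ≤ (mu * (b - r) - lam * (s - r)) * (PP (M.erase r) s * PP (M.erase r) b) :=
          mul_nonneg (by linarith) (mul_nonneg hA hB)
        have hps : PP M s = (s - r) * PP (M.erase r) s := PP_erase M hr s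
        have hpb : PP M b = (b - r) * PP (M.erase r) b := PP_erase M hr b
        rw [hps, hpb]
        nlinarith [h10]
      rw [Multiset.sum_map_mul_left, Multiset.sum_map_mul_left] at key
      have hH : PP M s * PP M b ≤ (mu * SS M s) * PP M b := by
        calc PP M s * PP M b = lam * PP M s * SS M b := by rw [hQb]; ring
          _ ≤ mu * PP M b * SS M s := key
          _ = (mu * SS M s) * PP M b := by ring
      exact le_of_mul_le_mul_right hH hPPb
  have hev : eval s (Q P mu) ≤ 0 := by
    rw [evalQ hm hc hd]
    linarith
  obtain ⟨w, hw1, hw2⟩ := root_above hn hm hd mu s hev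
  exact ⟨w, hw1, hw2⟩

end Claim1

section Claim2
variable {P : ℝ[X]} {n : ℕ}

lemma rolle_root (hm : P.Monic) (hd : P.natDegree = n) (hc : Multiset.card P.roots = n)
    {mu : ℝ} (hmu : 0 < mu) {u v : ℝ} (hu : u ∈ P.roots) (hv : v ∈ P.roots) (huv : u < v) :
    ∃ c, u < c ∧ c < v ∧ (Q P mu).IsRoot c := by
  have hPne : P ≠ 0 := hm.ne_zero
  have hru : eval u P = 0 := (Polynomial.mem_roots hPne).mp hu
  have hrv : eval v P = 0 := (Polynomial.mem_roots hPne).mp hv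
  set f : ℝ → ℝ := fun x => Real.exp (-x / mu) * eval x P with hf
  have hderiv : ∀ x : ℝ, HasDerivAt f
      (Real.exp (-x / mu) * (-1 / mu) * eval x P + Real.exp (-x / mu) * eval x (derivative P)) x := by
    intro x
    have h1 : HasDerivAt (fun y : ℝ => -y / mu) (-1 / mu) x := by
      simpa using ((hasDerivAt_id x).neg.div_const mu)
    have h2 : HasDerivAt (fun y : ℝ => Real.exp (-y / mu)) (Real.exp (-x / mu) * (-1 / mu)) x :=
      h1.exp
    exact h2.mul (P.hasDerivAt x)
  have hcont : ContinuousOn f (Set.Icc u v) :=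
    ((Real.continuous_exp.comp (by continuity)).mul P.continuous).continuousOn
  have hfeq : f u = f v := by rw [hf]; simp [hru, hrv]
  obtain ⟨c, hcmem, hc0⟩ := exists_hasDerivAt_eq_zero huv hcont hfeq
    (fun x _ => hderiv x)
  refine ⟨c, hcmem.1, hcmem.2, ?_⟩
  show eval c (Q P mu) = 0
  have hexp : Real.exp (-c / mu) ≠ 0 := (Real.exp_pos _).ne'
  have h3 : Real.exp (-c / mu) * (eval c (derivative P) - (1 / mu) * eval c P) = 0 := by
    linear_combination hc0
  have h4 : eval c (derivative P) - (1 / mu) * eval c P = 0 :=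
    (mul_eq_zero.mp h3).resolve_left hexp
  rw [Q]
  simp only [eval_sub, eval_mul, eval_C]
  field_simp at h4
  linarith


set_option maxHeartbeats 2000000 in
lemma claim_inf (hn : 1 ≤ n) (hm : P.Monic) (hd : P.natDegree = n)
    (hc : Multiset.card P.roots = n) {lam mu : ℝ} (h0 : 0 ≤ lam) (hlm : lam < mu)
    {z1 a : ℝ} (hz1mem : z1 ∈ P.roots) (hz1 : ∀ r ∈ P.roots, z1 ≤ r)
    (ha : (Q P lam).IsRoot a) :
    ∃ w, w ≤ a + (mu - lam) ∧ (Q P mu).IsRoot w := by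
  have hmu : 0 < mu := lt_of_le_of_lt h0 hlm
  set s := a + (mu - lam) with hs
  have hz1a : z1 ≤ a := root_ge hn hm hd hc h0 hz1 ha
  have has : a ≤ s := by rw [hs]; linarith
  have hz1s : z1 ≤ s := le_trans hz1a has
  have hPPz1 : PP P.roots z1 = 0 := by rw [PP_erase P.roots hz1mem z1]; simp
  by_cases hS0 : SS P.roots z1 = 0
  · refine ⟨z1, by linarith, ?_⟩
    show eval z1 (Q P mu) = 0
    rw [evalQ hm hc hd, hPPz1, hS0]; ring
  · by_cases hmid : ∃ t ∈ P.roots, z1 < t ∧ t ≤ s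
    · obtain ⟨t, htM, htl, htu⟩ := hmid
      obtain ⟨c, hc1, hc2, hc3⟩ := rolle_root hm hd hc hmu hz1mem htM htl
      exact ⟨c, by linarith, hc3⟩
    · push_neg at hmid
      -- count of z1 in roots is 1
      have hcount1 : P.roots.count z1 = 1 := by
        have hge : 1 ≤ P.roots.count z1 := Multiset.count_pos.mpr hz1mem
        by_contra hne
        have h2 : 2 ≤ P.roots.count z1 := by omega
        apply hS0
        apply Multiset.sum_eq_zero
        intro y hy
        obtain ⟨r, hr, rfl⟩ := Multiset.mem_map.mp hy
        have hz1er : z1 ∈ P.roots.erase r := by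
          rw [← Multiset.count_pos]
          by_cases hrz : r = z1
          · subst hrz; rw [Multiset.count_erase_self]; omega
          · rw [Multiset.count_erase_of_ne (fun h => hrz h.symm)]; omega
        rw [PP_erase _ hz1er z1]
        simp
      set M' := P.roots.erase z1 with hM'
      have hMcons : P.roots = z1 ::ₘ M' := (Multiset.cons_erase hz1mem).symm
      have hM'big : ∀ t ∈ M', s < t := by
        intro t ht
        have htM : t ∈ P.roots := Multiset.mem_of_mem_erase ht
        have htz : t ≠ z1 := by
          intro h; subst h
          have h6 := Multiset.count_pos.mpr ht
          rw [hM', Multiset.count_erase_self] at h6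
          omega
        have h7 : z1 < t := lt_of_le_of_ne (hz1 t htM) (Ne.symm htz)
        exact hmid t htM h7
      set k := Multiset.card M' with hk
      have hkn : n = k + 1 := by
        have h1 := Multiset.card_erase_of_mem hz1mem
        rw [← hM', Nat.pred_eq_sub_one] at h1
        have h2 : 1 ≤ Multiset.card P.roots := Multiset.card_pos.mpr
          (fun h0' => by simp [h0'] at hz1mem)
        omega
      set e := (-1 : ℝ) ^ k with he'
      have he : e * e = 1 := neg_pow_sq k
      -- positive quantities
      set p := (M'.map fun t => t - a).prod with hp'
      set P2 := (M'.map fun t => t - s).prod with hP2'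
      set Sq := (M'.map fun r => ((M'.erase r).map fun t => t - a).prod).sum with hSq'
      set SQ := (M'.map fun r => ((M'.erase r).map fun t => t - s).prod).sum with hSQ'
      have hp : 0 < p := prod_map_pos _ _ fun t ht => by have := hM'big t ht; linarith
      have hP2 : 0 < P2 := prod_map_pos _ _ fun t ht => by have := hM'big t ht; linarith
      have hSq : 0 ≤ Sq := Multiset.sum_nonneg fun y hy => by
        obtain ⟨r, hr, rfl⟩ := Multiset.mem_map.mp hy
        exact prod_map_nonneg _ _ fun t ht => by
          have := hM'big t (Multiset.mem_of_mem_erase ht); linarith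
      have hSQ : 0 ≤ SQ := Multiset.sum_nonneg fun y hy => by
        obtain ⟨r, hr, rfl⟩ := Multiset.mem_map.mp hy
        exact prod_map_nonneg _ _ fun t ht => by
          have := hM'big t (Multiset.mem_of_mem_erase ht); linarith
      -- conversion of inner sums
      have hJ : ∀ x : ℝ, (M'.map fun r => PP (M'.erase r) x).sum
          = (-e) * (M'.map fun r => ((M'.erase r).map fun t => t - x).prod).sum := by
        intro x
        rw [show (M'.map fun r => PP (M'.erase r) x)
            = M'.map fun r => (-e) * ((M'.erase r).map fun t => t - x).prod by
          apply Multiset.map_congr rfl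
          intro r hr
          rw [PP_sign, Multiset.card_erase_of_mem hr]
          have hk1 : 1 ≤ k := by
            have h0' : M' ≠ 0 := fun h0' => by simp [h0'] at hr
            have := Multiset.card_pos.mpr h0'
            omega
          congr 1
          rw [he']
          have h := pow_succ (-1 : ℝ) (k - 1)
          rw [show k - 1 + 1 = k from by omega] at h
          rw [Nat.pred_eq_sub_one, ← hk]
          linarith]
        exact Multiset.sum_map_mul_left
      have hPPM : ∀ x : ℝ, PP P.roots x = (x - z1) * PP M' x := fun x => PP_erase _ hz1mem x
      have hSSM : ∀ x : ℝ, SS P.roots x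
          = PP M' x + (x - z1) * (M'.map fun r => PP (M'.erase r) x).sum := by
        intro x
        conv_lhs => rw [hMcons]
        exact SS_cons z1 M' x
      have hPPM's : PP M' s = e * P2 := by rw [PP_sign, ← hk, ← he', ← hP2']
      have hPPM'a : PP M' a = e * p := by rw [PP_sign, ← hk, ← he', ← hp']
      have hal0 : 0 ≤ a - z1 := by linarith
      -- the main target inequality
      have target : (lam - (a - z1)) * P2 ≤ mu * ((a - z1) + (mu - lam)) * SQ := by
        have hQa : PP P.roots a = lam * SS P.roots a := by
          have h3 : eval a (Q P lam) = 0 := ha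
          rw [evalQ hm hc hd] at h3; linarith
        rcases eq_or_lt_of_le hz1a with hz1eq | hz1lt
        · -- a = z1 forces lam = 0
          have hPPMa : PP P.roots a = 0 := by rw [← hz1eq]; exact hPPz1
          have hSSa : SS P.roots a ≠ 0 := by rw [← hz1eq]; exact hS0
          have hlam0 : lam = 0 := by
            have h00 : lam * SS P.roots a = 0 := by rw [← hQa]; exact hPPMa
            rcases mul_eq_zero.mp h00 with h | h
            · exact h
            · exact absurd h hSSa
          have hz1a' : a - z1 = 0 := by linarith [hz1eq]
          rw [hlam0, hz1a']
          have h9 : 0 ≤ mu * (0 + (mu - 0)) * SQ := by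
            apply mul_nonneg (by nlinarith) hSQ
          linarith [hP2, h9]
        · -- z1 < a
          have halpos : 0 < a - z1 := by linarith
          have hlampos : 0 < lam := by
            rcases h0.eq_or_lt with h | h
            · exfalso
              rw [← h, zero_mul, hPPM a, hPPM'a] at hQa
              rcases mul_eq_zero.mp hQa with h4 | h4
              · linarith
              · rcases mul_eq_zero.mp h4 with h5 | h5
                · rw [he'] at h5
                  exact absurd h5 (pow_ne_zero k (by norm_num))
                · linarith
            · exact h
          -- equation (**)
          have hQa' := hQa
          rw [hPPM a, hSSM a, hJ a, hPPM'a, ← hSq'] at hQa'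
          -- hQa' : (a - z1) * (e * p) = lam * (e * p + (a - z1) * (-e * Sq))
          have E2 : (a - z1) * p = lam * (p - (a - z1) * Sq) := by
            linear_combination e * hQa'
              - ((a - z1) * p - lam * p + lam * (a - z1) * Sq) * he
          by_cases hla : lam ≤ a - z1
          · have h1 : (lam - (a - z1)) * P2 ≤ 0 :=
              mul_nonpos_of_nonpos_of_nonneg (by linarith) (le_of_lt hP2)
            have h2 : 0 ≤ mu * ((a - z1) + (mu - lam)) * SQ :=
              mul_nonneg (mul_nonneg (le_of_lt hmu) (by linarith)) hSQ
            linarith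
          · push_neg at hla
            have key : (M'.map fun r => (lam * (a - z1) * P2) * ((M'.erase r).map fun t => t - a).prod).sum
                ≤ (M'.map fun r => (mu * ((a - z1) + (mu - lam)) * p) * ((M'.erase r).map fun t => t - s).prod).sum := by
              apply Multiset.sum_map_le_sum_map
              intro r hr
              have hq : 0 ≤ ((M'.erase r).map fun t => t - a).prod := prod_map_nonneg _ _
                fun t ht => by have := hM'big t (Multiset.mem_of_mem_erase ht); linarith
              have hQr : 0 ≤ ((M'.erase r).map fun t => t - s).prod := prod_map_nonneg _ _
                fun t ht => by have := hM'big t (Multiset.mem_of_mem_erase ht); linarith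
              have hpr : p = (r - a) * ((M'.erase r).map fun t => t - a).prod := by
                rw [hp', ← Multiset.prod_map_erase (f := fun t => t - a) hr]
              have hP2r : P2 = (r - s) * ((M'.erase r).map fun t => t - s).prod := by
                rw [hP2', ← Multiset.prod_map_erase (f := fun t => t - s) hr]
              have hrs : 0 < r - s := by have := hM'big r hr; linarith
              have hra : r - s ≤ r - a := by linarith
              have A1 : (a - z1) * (r - s) ≤ ((a - z1) + (mu - lam)) * (r - a) :=
                mul_le_mul (by linarith) hra (by linarith) (by linarith)
              have A2 : lam * ((a - z1) * (r - s)) ≤ lam * (((a - z1) + (mu - lam)) * (r - a)) :=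
                mul_le_mul_of_nonneg_left A1 h0
              have A3 : lam * (((a - z1) + (mu - lam)) * (r - a)) ≤ mu * (((a - z1) + (mu - lam)) * (r - a)) :=
                mul_le_mul_of_nonneg_right (le_of_lt hlm)
                  (mul_nonneg (by linarith) (by linarith))
              have hcmp : lam * (a - z1) * (r - s) ≤ mu * ((a - z1) + (mu - lam)) * (r - a) := by
                nlinarith [A2, A3]
              have h10 : 0 ≤ (mu * ((a - z1) + (mu - lam)) * (r - a) - lam * (a - z1) * (r - s)) *
                  (((M'.erase r).map fun t => t - a).prod * ((M'.erase r).map fun t => t - s).prod) :=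
                mul_nonneg (by linarith) (mul_nonneg hq hQr)
              rw [hpr, hP2r]
              nlinarith [h10]
            rw [Multiset.sum_map_mul_left, Multiset.sum_map_mul_left, ← hSq', ← hSQ'] at key
            have key2 : ((lam - (a - z1)) * P2) * p ≤ (mu * ((a - z1) + (mu - lam)) * SQ) * p := by
              have hLHS : lam * (a - z1) * P2 * Sq = ((lam - (a - z1)) * P2) * p := by
                linear_combination P2 * E2
              calc ((lam - (a - z1)) * P2) * p = lam * (a - z1) * P2 * Sq := hLHS.symm
                _ ≤ mu * ((a - z1) + (mu - lam)) * p * SQ := by linarith [key]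
                _ = (mu * ((a - z1) + (mu - lam)) * SQ) * p := by ring
            exact le_of_mul_le_mul_right key2 hp
      -- sign of eval at s
      have hevs : eval s (Q P mu)
          = e * (((a - z1) + (mu - lam) - mu) * P2 + mu * ((a - z1) + (mu - lam)) * SQ) := by
        rw [evalQ hm hc hd, hPPM s, hSSM s, hJ s, hPPM's, ← hSQ']
        have hsz : s - z1 = (a - z1) + (mu - lam) := by rw [hs]; ring
        rw [hsz]; ring
      have hnegn : (-1 : ℝ) ^ n = -e := by
        rw [hkn, pow_succ, he']; ring
      have hsign_s : (-1 : ℝ) ^ n * eval s (Q P mu) ≤ 0 := by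
        rw [hevs, hnegn]
        have h11 : -e * (e * (((a - z1) + (mu - lam) - mu) * P2 + mu * ((a - z1) + (mu - lam)) * SQ))
            = -((((a - z1) + (mu - lam) - mu) * P2 + mu * ((a - z1) + (mu - lam)) * SQ)) := by
          linear_combination (-((a - z1) + (mu - lam) - mu) * P2 - mu * ((a - z1) + (mu - lam)) * SQ) * he
        rw [h11]
        nlinarith [target]
      -- sign at z1
      have hsign_z1 : 0 ≤ (-1 : ℝ) ^ n * eval z1 (Q P mu) := by
        have hSSb := SS_below P.roots n hc z1 hz1
        rw [evalQ hm hc hd, hPPz1]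
        have h12 : (-1 : ℝ) ^ n * (0 - mu * SS P.roots z1)
            = mu * ((-(-1 : ℝ) ^ n) * SS P.roots z1) := by ring
        rw [h12]
        exact mul_nonneg (le_of_lt hmu) hSSb
      -- IVT downward
      have hgc : ContinuousOn (fun x => (-1 : ℝ) ^ n * eval x (Q P mu)) (Set.Icc z1 s) :=
        (continuous_const.mul (Q P mu).continuous).continuousOn
      have h0mem : (0 : ℝ) ∈ Set.Icc ((-1 : ℝ) ^ n * eval s (Q P mu)) ((-1 : ℝ) ^ n * eval z1 (Q P mu)) :=
        ⟨hsign_s, hsign_z1⟩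
      obtain ⟨c, hcmem, hgc0⟩ := intermediate_value_Icc' hz1s hgc h0mem
      refine ⟨c, by have := hcmem.2; linarith, ?_⟩
      show eval c (Q P mu) = 0
      have hε : ((-1 : ℝ) ^ n) ≠ 0 := pow_ne_zero n (by norm_num)
      rcases mul_eq_zero.mp hgc0 with h | h
      · exact absurd h hε
      · exact h

end Claim2

lemma span_mono_nonneg {P : ℝ[X]} {n : ℕ} (hn : 1 ≤ n) (hm : P.Monic)
    (hd : P.natDegree = n) (hc : Multiset.card P.roots = n) {lam mu : ℝ}
    (h0 : 0 ≤ lam) (hlm : lam ≤ mu) :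
    polySpan (Q P lam) ≤ polySpan (Q P mu) := by
  rcases eq_or_lt_of_le hlm with rfl | hlt
  · exact le_refl _
  have hrne : P.roots ≠ 0 := fun h => by rw [h] at hc; simp at hc; omega
  have hfne : P.roots.toFinset.Nonempty := by
    rw [Multiset.toFinset_nonempty]; exact hrne
  set z1 := P.roots.toFinset.min' hfne with hz1def
  set xn := P.roots.toFinset.max' hfne with hxndef
  have hz1mem : z1 ∈ P.roots := Multiset.mem_toFinset.mp (Finset.min'_mem _ hfne)
  have hxnmem : xn ∈ P.roots := Multiset.mem_toFinset.mp (Finset.max'_mem _ hfne)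
  have hz1 : ∀ r ∈ P.roots, z1 ≤ r := fun r hr =>
    Finset.min'_le _ r (Multiset.mem_toFinset.mpr hr)
  have hxn : ∀ r ∈ P.roots, r ≤ xn := fun r hr =>
    Finset.le_max' _ r (Multiset.mem_toFinset.mpr hr)
  have hmu : 0 ≤ mu := le_trans h0 hlm
  have hePPxn : PP P.roots xn = 0 := by rw [PP_erase _ hxnmem xn]; simp
  have hroot_xn : ∀ v : ℝ, 0 ≤ v → ∃ w, xn ≤ w ∧ (Q P v).IsRoot w := by
    intro v hv
    apply root_above hn hm hd
    rw [evalQ hm hc hd, hePPxn]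
    have := SS_above P.roots xn hxn
    nlinarith
  -- root sets
  have hfinl : {t : ℝ | (Q P lam).IsRoot t}.Finite := Polynomial.finite_setOf_isRoot (Qne hn hm hd lam)
  have hfinm : {t : ℝ | (Q P mu).IsRoot t}.Finite := Polynomial.finite_setOf_isRoot (Qne hn hm hd mu)
  obtain ⟨w0, hw0xn, hw0⟩ := hroot_xn lam h0
  have hnel : {t : ℝ | (Q P lam).IsRoot t}.Nonempty := ⟨w0, hw0⟩
  have hbal : BddAbove {t : ℝ | (Q P lam).IsRoot t} := hfinl.bddAbove
  have hbbl : BddBelow {t : ℝ | (Q P lam).IsRoot t} := hfinl.bddBelow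
  set b := sSup {t : ℝ | (Q P lam).IsRoot t} with hbdef
  set a := sInf {t : ℝ | (Q P lam).IsRoot t} with hadef
  have hbmem : b ∈ {t : ℝ | (Q P lam).IsRoot t} := hnel.csSup_mem hfinl
  have hamem : a ∈ {t : ℝ | (Q P lam).IsRoot t} := hnel.csInf_mem hfinl
  have hbxn : xn ≤ b := le_trans hw0xn (le_csSup hbal hw0)
  obtain ⟨w1, hw1ge, hw1⟩ := claim_sup hn hm hd hc h0 hlt hxn hbmem hbxn
  obtain ⟨w2, hw2le, hw2⟩ := claim_inf hn hm hd hc h0 hlt hz1mem hz1 hamem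
  have hnem : {t : ℝ | (Q P mu).IsRoot t}.Nonempty := ⟨w1, hw1⟩
  have h1 : b + (mu - lam) ≤ sSup {t : ℝ | (Q P mu).IsRoot t} :=
    le_trans hw1ge (le_csSup hfinm.bddAbove hw1)
  have h2 : sInf {t : ℝ | (Q P mu).IsRoot t} ≤ a + (mu - lam) :=
    le_trans (csInf_le hfinm.bddBelow hw2) hw2le
  rw [polySpan, polySpan]
  linarith

lemma PP_map_neg (N : Multiset ℝ) (x : ℝ) :
    PP (N.map fun r => -r) x = (-1 : ℝ) ^ (Multiset.card N) * PP N (-x) := by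
  have h1 : PP N (-x) = (-1 : ℝ) ^ (Multiset.card N) * (N.map fun r => x + r).prod := by
    rw [PP, show (N.map fun t => -x - t) = N.map fun t => -(x + t) from
      Multiset.map_congr rfl (by intros; ring)]
    exact prod_map_neg N _
  have h2 : PP (N.map fun r => -r) x = (N.map fun r => x + r).prod := by
    rw [PP, Multiset.map_map]
    apply congrArg
    apply Multiset.map_congr rfl
    intros t ht
    simp [Function.comp]
  rw [h2, h1, ← mul_assoc, neg_pow_sq, one_mul]

/-- Reflected polynomial: monic with roots negated. -/
noncomputable def refl (P : ℝ[X]) : ℝ[X] :=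
  ((P.roots.map fun r => -r).map fun r => X - C r).prod

section Refl
variable {P : ℝ[X]} {n : ℕ}

lemma refl_roots : (refl P).roots = P.roots.map fun r => -r :=
  roots_multiset_prod_X_sub_C _

lemma refl_monic : (refl P).Monic :=
  monic_multiset_prod_of_monic _ _ fun a _ => monic_X_sub_C a

lemma refl_deg (hc : Multiset.card P.roots = n) : (refl P).natDegree = n := by
  rw [refl, natDegree_multiset_prod_X_sub_C_eq_card, Multiset.card_map, hc]

lemma refl_card (hc : Multiset.card P.roots = n) : Multiset.card (refl P).roots = n := by
  rw [refl_roots, Multiset.card_map, hc]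

lemma SS_map_neg (hn : 1 ≤ n) (hc : Multiset.card P.roots = n) (x : ℝ) :
    SS (P.roots.map fun r => -r) x = (-(-1 : ℝ) ^ n) * SS P.roots (-x) := by
  rw [SS, Multiset.map_map]
  have hstep : ∀ r ∈ P.roots,
      PP (((P.roots.map fun t => -t)).erase (-r)) x = (-(-1 : ℝ) ^ n) * PP (P.roots.erase r) (-x) := by
    intro r hr
    have hee : ((P.roots.map fun t => -t)).erase (-r) = (P.roots.erase r).map fun t => -t := by
      rw [Multiset.map_erase _ neg_injective]
    rw [hee, PP_map_neg, Multiset.card_erase_of_mem hr, hc, Nat.pred_eq_sub_one]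
    congr 1
    have h := pow_succ (-1 : ℝ) (n - 1)
    rw [show n - 1 + 1 = n from by omega] at h
    linarith
  calc (P.roots.map fun r => PP (((P.roots.map fun t => -t)).erase ((fun t => -t) r)) x).sum
      = (P.roots.map fun r => (-(-1 : ℝ) ^ n) * PP (P.roots.erase r) (-x)).sum := by
        apply congrArg
        exact Multiset.map_congr rfl hstep
    _ = (-(-1 : ℝ) ^ n) * SS P.roots (-x) := by rw [SS]; exact Multiset.sum_map_mul_left

lemma evalQ_refl (hn : 1 ≤ n) (hm : P.Monic) (hd : P.natDegree = n)
    (hc : Multiset.card P.roots = n) (v x : ℝ) :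
    eval x (Q (refl P) v) = (-1 : ℝ) ^ n * eval (-x) (Q P (-v)) := by
  rw [evalQ refl_monic (refl_card hc) (refl_deg hc), evalQ hm hc hd, refl_roots,
    PP_map_neg, hc, SS_map_neg hn hc]
  ring

lemma span_refl (hn : 1 ≤ n) (hm : P.Monic) (hd : P.natDegree = n)
    (hc : Multiset.card P.roots = n) (v : ℝ) :
    polySpan (Q (refl P) v) = polySpan (Q P (-v)) := by
  have hset : {t : ℝ | (Q (refl P) v).IsRoot t} = -{t : ℝ | (Q P (-v)).IsRoot t} := by
    ext x
    simp only [Set.mem_setOf_eq, Set.mem_neg, IsRoot]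
    constructor
    · intro h
      have := evalQ_refl hn hm hd hc v x
      rw [h] at this
      have hε : ((-1 : ℝ) ^ n) ≠ 0 := pow_ne_zero n (by norm_num)
      rcases mul_eq_zero.mp this.symm with h' | h'
      · exact absurd h' hε
      · exact h'
    · intro h
      rw [evalQ_refl hn hm hd hc v x, h, mul_zero]
  simp only [polySpan]
  rw [hset]
  have h1 : sSup (-{t : ℝ | (Q P (-v)).IsRoot t}) = -sInf {t : ℝ | (Q P (-v)).IsRoot t} := by
    rw [Real.sInf_def]; ring
  have h2 : sInf (-{t : ℝ | (Q P (-v)).IsRoot t}) = -sSup {t : ℝ | (Q P (-v)).IsRoot t} := by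
    rw [Real.sInf_def, neg_neg]
  rw [h1, h2]
  ring

end Refl

end SpanAux

theorem span_monotone (n : ℕ) (hn : 1 ≤ n) (P : Polynomial ℝ)
    (hPm : P.Monic) (hPd : P.natDegree = n) (hhyp : P.roots.card = n)
    (l₁ l₂ : ℝ) (hll : 0 ≤ l₁ * l₂) (habs : |l₁| ≤ |l₂|) :
    polySpan (P - C l₁ * Polynomial.derivative P) ≤
      polySpan (P - C l₂ * Polynomial.derivative P) := by
  show polySpan (SpanAux.Q P l₁) ≤ polySpan (SpanAux.Q P l₂)
  rcases le_or_gt 0 l₂ with h2 | h2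
  · have h1 : 0 ≤ l₁ := by
      rcases le_or_gt 0 l₁ with h | h
      · exact h
      · exfalso
        have hle : l₁ * l₂ ≤ 0 := mul_nonpos_iff.mpr (Or.inr ⟨le_of_lt h, h2⟩)
        have hz : l₁ * l₂ = 0 := le_antisymm hle hll
        rcases mul_eq_zero.mp hz with h' | h'
        · linarith
        · rw [h', abs_zero] at habs
          have h9 : |l₁| = 0 := le_antisymm habs (abs_nonneg _)
          have := abs_eq_zero.mp h9
          linarith
    have h12 : l₁ ≤ l₂ := by rwa [abs_of_nonneg h1, abs_of_nonneg h2] at habs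
    exact SpanAux.span_mono_nonneg hn hPm hPd hhyp h1 h12
  · have h1 : l₁ ≤ 0 := by
      rcases le_or_gt l₁ 0 with h | h
      · exact h
      · exfalso; nlinarith
    have ha1 : 0 ≤ -l₁ := by linarith
    have ha12 : -l₁ ≤ -l₂ := by
      rwa [abs_of_nonpos h1, abs_of_nonpos (le_of_lt h2)] at habs
    have key := SpanAux.span_mono_nonneg hn (SpanAux.refl_monic (P := P))
      (SpanAux.refl_deg hhyp) (SpanAux.refl_card hhyp) ha1 ha12
    rw [SpanAux.span_refl hn hPm hPd hhyp (-l₁), SpanAux.span_refl hn hPm hPd hhyp (-l₂),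
      neg_neg, neg_neg] at key
    exact key
end

section
/- Let P be a monic strictly hyperbolic polynomial of degree n ≥ 2 with roots x_1 < … < x_n, and for λ ∈ ℝ let ζ_1(λ) < … < ζ_n(λ) be the roots of P − λP′ with ζ_i(0) = x_i. Then for every real λ and every j ∈ {1,…,n−1}, Σ_{i=1}^{j} (ζ_i(λ) − λ) ≤ Σ_{i=1}^{j} x_i; together with Σ_{i=1}^{n}(ζ_i(λ) − λ) = Σ_{i=1}^{n} x_i, this means the roots of P(x+λ) − λP′(x+λ) majorize the roots of P. -/
open Polynomial

lemma eval_derivative_prod_X_sub_C (s : Finset ℕ) (c : ℕ → ℝ) (z : ℝ) :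
    Polynomial.eval z (Polynomial.derivative (∏ m ∈ s, (X - C (c m)))) =
      ∑ k ∈ s, ∏ m ∈ s.erase k, (z - c m) := by
  induction s using Finset.induction_on with
  | empty => simp
  | @insert a s ha ih =>
    rw [Finset.prod_insert ha, derivative_mul, Polynomial.eval_add, Polynomial.eval_mul,
      Polynomial.eval_mul, ih, Finset.sum_insert ha, Finset.erase_insert ha]
    simp only [derivative_X_sub_C, Polynomial.eval_one, one_mul, Polynomial.eval_sub,
      Polynomial.eval_X, Polynomial.eval_C, Polynomial.eval_prod]
    rw [Finset.mul_sum]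
    congr 1
    refine Finset.sum_congr rfl fun k hk => ?_
    rw [Finset.erase_insert_of_ne (by rintro rfl; exact ha hk),
      Finset.prod_insert (fun h => ha (Finset.mem_of_mem_erase h))]

lemma sum_filter_val_lt {M : Type*} [AddCommMonoid M] (n j : ℕ) (hj : j ≤ n) (f : ℕ → M) :
    ∑ k ∈ Finset.univ.filter (fun k : Fin n => (k : ℕ) < j), f k
      = ∑ m ∈ Finset.range j, f m := by
  rw [Finset.sum_filter, Fin.sum_univ_eq_sum_range (fun m => if m < j then f m else 0) n,
    ← Finset.sum_filter]
  congr 1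
  ext m
  simp only [Finset.mem_filter, Finset.mem_range]
  omega

lemma lp_bound (n j : ℕ) (hj : j < n) (z : ℕ → ℝ) (hz : ∀ a b, a < b → b < n → z a < z b)
    (t : Fin n → ℝ) (ht0 : ∀ i, 0 ≤ t i) (ht1 : ∀ i, t i ≤ 1)
    (hsum : ∑ i, t i = (j : ℝ)) :
    ∑ i ∈ Finset.univ.filter (fun i : Fin n => (i : ℕ) < j), z i
      ≤ ∑ i : Fin n, z i * t i := by
  classical
  set S := Finset.univ.filter (fun i : Fin n => (i : ℕ) < j) with hS
  have hcard : ∑ i ∈ S, (1 : ℝ) = (j : ℝ) := by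
    rw [hS, sum_filter_val_lt n j hj.le (fun _ => (1 : ℝ))]
    simp
  set c := z j with hc
  have hle : ∀ i ∈ S, z i ≤ c := by
    intro i hi
    rw [hS, Finset.mem_filter] at hi
    exact (hz i j hi.2 hj).le
  have hge : ∀ i ∈ Sᶜ, c ≤ z i := by
    intro i hi
    rw [hS, Finset.compl_filter, Finset.mem_filter] at hi
    have h2 : j ≤ (i : ℕ) := le_of_not_gt hi.2
    rcases eq_or_lt_of_le h2 with h | h
    · rw [← h]
    · exact (hz j i h i.isLt).le
  have split : ∑ i : Fin n, z i * t i = ∑ i ∈ S, z i * t i + ∑ i ∈ Sᶜ, z i * t i := by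
    rw [Finset.sum_add_sum_compl]
  have step1 : ∑ i ∈ S, z i ≤ ∑ i ∈ S, z i * t i + ∑ i ∈ S, c * (1 - t i) := by
    rw [← Finset.sum_add_distrib]
    refine Finset.sum_le_sum fun i hi => ?_
    have h1 := ht1 i
    have h0 := ht0 i
    nlinarith [hle i hi]
  have step2 : ∑ i ∈ S, c * (1 - t i) = c * ((j : ℝ) - ∑ i ∈ S, t i) := by
    rw [← Finset.mul_sum]
    congr 1
    rw [Finset.sum_sub_distrib, hcard]
  have step3 : (j : ℝ) - ∑ i ∈ S, t i = ∑ i ∈ Sᶜ, t i := by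
    have := Finset.sum_add_sum_compl S t
    rw [hsum] at this
    linarith
  have step4 : c * ∑ i ∈ Sᶜ, t i ≤ ∑ i ∈ Sᶜ, z i * t i := by
    rw [Finset.mul_sum]
    exact Finset.sum_le_sum fun i hi => mul_le_mul_of_nonneg_right (hge i hi) (ht0 i)
  calc ∑ i ∈ S, z i ≤ ∑ i ∈ S, z i * t i + ∑ i ∈ S, c * (1 - t i) := step1
    _ = ∑ i ∈ S, z i * t i + c * ∑ i ∈ Sᶜ, t i := by rw [step2, step3]
    _ ≤ ∑ i ∈ S, z i * t i + ∑ i ∈ Sᶜ, z i * t i := by linarith [step4]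
    _ = ∑ i : Fin n, z i * t i := split.symm
open Matrix

lemma spectral (n : ℕ) (hn : 0 < n) (ζv xv : Fin n → ℝ) (l : ℝ) (hl : l ≠ 0)
    (hne : ∀ i k, ζv i - xv k ≠ 0)
    (key : ∀ i, l * ∑ k, (ζv i - xv k)⁻¹ = 1)
    (hinj : ∀ i i' : Fin n, i ≠ i' → ζv i ≠ ζv i') (S : Finset (Fin n)) :
    ∃ t : Fin n → ℝ, (∀ i, 0 ≤ t i) ∧ (∀ i, t i ≤ 1) ∧ (∑ i, t i = (S.card : ℝ)) ∧
      ∑ k ∈ S, (xv k + l) = ∑ i, ζv i * t i := by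
  classical
  haveI : Nonempty (Fin n) := Fin.pos_iff_nonempty.mp hn
  set v : Fin n → Fin n → ℝ := fun i k => (ζv i - xv k)⁻¹ with hv
  have hvne : ∀ i k, v i k ≠ 0 := fun i k => inv_ne_zero (hne i k)
  set s : Fin n → ℝ := fun i => ∑ k, (v i k) ^ 2 with hs
  have hspos : ∀ i, 0 < s i := by
    intro i
    exact Finset.sum_pos (fun k _ => by
      have := hvne i k
      positivity) Finset.univ_nonempty
  have hsqrt : ∀ i, Real.sqrt (s i) ≠ 0 := fun i => by
    have := hspos i
    positivity
  set w : Fin n → Fin n → ℝ := fun i k => v i k / Real.sqrt (s i) with hw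
  -- sum of v equals l⁻¹
  have hsumv : ∀ i, ∑ k, v i k = l⁻¹ := by
    intro i
    have h := key i
    exact eq_inv_of_mul_eq_one_right h
  -- row orthonormality
  have hrow : ∀ i i', (∑ k, w i k * w i' k) = if i = i' then 1 else 0 := by
    intro i i'
    by_cases h : i = i'
    · subst h
      simp only [hw, if_pos rfl, div_mul_div_comm]
      rw [← Finset.sum_div, Real.mul_self_sqrt (hspos i).le]
      have hvv : ∑ k, v i k * v i k = s i := by
        rw [hs]
        exact Finset.sum_congr rfl fun k _ => (sq (v i k)).symm
      rw [hvv]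
      exact div_self (ne_of_gt (hspos i))
    · rw [if_neg h]
      have hzz : ζv i' - ζv i ≠ 0 := sub_ne_zero.mpr (Ne.symm (hinj i i' h))
      have hpf : ∀ k, v i k * v i' k = (ζv i' - ζv i)⁻¹ * (v i k - v i' k) := by
        intro k
        rw [hv]
        have h1 := hne i k
        have h2 := hne i' k
        field_simp
        try ring
      have : ∑ k, v i k * v i' k = 0 := by
        rw [Finset.sum_congr rfl fun k _ => hpf k, ← Finset.mul_sum,
          Finset.sum_sub_distrib, hsumv i, hsumv i', sub_self, mul_zero]
      simp only [hw, div_mul_div_comm]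
      rw [← Finset.sum_div, this, zero_div]
  -- columns orthonormal via matrix inverse commuting
  set W : Matrix (Fin n) (Fin n) ℝ := Matrix.of w with hW
  have hWWt : W * Wᵀ = 1 := by
    ext i i'
    rw [Matrix.mul_apply]
    simp only [hW, Matrix.transpose_apply, Matrix.of_apply, Matrix.one_apply]
    exact hrow i i'
  have hWtW : Wᵀ * W = 1 := mul_eq_one_comm.mp hWWt
  have hcol : ∀ k k', (∑ i, w i k * w i k') = if k = k' then 1 else 0 := by
    intro k k'
    have := congrFun (congrFun hWtW k) k'
    rw [Matrix.mul_apply] at this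
    simp only [hW, Matrix.transpose_apply, Matrix.of_apply, Matrix.one_apply] at this
    rw [← this]
  -- eigen relation
  have heig : ∀ i k, ζv i * w i k = xv k * w i k + l * ∑ m, w i m := by
    intro i k
    have hsw : ∑ m, w i m = l⁻¹ / Real.sqrt (s i) := by
      rw [hw]
      simp only
      rw [← Finset.sum_div, hsumv i]
    rw [hsw, hw]
    simp only
    have h1 := hne i k
    have h2 := hsqrt i
    field_simp
    linear_combination (mul_inv_cancel₀ h1)
  -- diagonal identity
  have hdiag : ∀ k, ∑ i, ζv i * (w i k) ^ 2 = xv k + l := by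
    intro k
    have : ∀ i, ζv i * (w i k) ^ 2 = xv k * (w i k * w i k) + l * ∑ m, w i m * w i k := by
      intro i
      rw [sq, ← mul_assoc, heig i k, add_mul, mul_assoc l, Finset.sum_mul]
      ring
    rw [Finset.sum_congr rfl fun i _ => this i, Finset.sum_add_distrib,
      ← Finset.mul_sum, hcol k k, if_pos rfl, mul_one]
    congr 1
    rw [← Finset.mul_sum, Finset.sum_comm]
    have : ∀ m, (∑ i, w i m * w i k) = if m = k then 1 else 0 := fun m => hcol m k
    rw [Finset.sum_congr rfl fun m _ => this m, Finset.sum_ite_eq' Finset.univ k (fun _ => (1:ℝ))]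
    simp
  -- define t
  refine ⟨fun i => ∑ k ∈ S, (w i k) ^ 2, fun i => Finset.sum_nonneg fun k _ => sq_nonneg _,
    fun i => ?_, ?_, ?_⟩
  · have h1 : ∑ k ∈ S, (w i k) ^ 2 ≤ ∑ k, (w i k) ^ 2 :=
      Finset.sum_le_sum_of_subset_of_nonneg (Finset.subset_univ S) fun k _ _ => sq_nonneg _
    have h2 : ∑ k, (w i k) ^ 2 = 1 := by
      have := hrow i i
      rw [if_pos rfl] at this
      rw [← this]
      exact Finset.sum_congr rfl fun k _ => sq (w i k)
    linarith
  · rw [Finset.sum_comm]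
    have : ∀ k, (∑ i, (w i k) ^ 2) = 1 := by
      intro k
      have := hcol k k
      rw [if_pos rfl] at this
      rw [← this]
      exact Finset.sum_congr rfl fun i _ => sq (w i k)
    rw [Finset.sum_congr rfl fun k _ => this k, Finset.sum_const, nsmul_eq_mul, mul_one]
  · rw [Finset.sum_congr rfl fun k (_ : k ∈ S) => (hdiag k).symm, Finset.sum_comm]
    exact Finset.sum_congr rfl fun i _ => (Finset.mul_sum _ _ _).symm

theorem shifted_roots_majorize (n : ℕ) (hn : 2 ≤ n) (x : ℕ → ℝ)
    (hx : ∀ i j, i < j → j < n → x i < x j)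
    (P : Polynomial ℝ)
    (hP : P = ∏ i ∈ Finset.range n, (X - C (x i)))
    (ζ : ℝ → ℕ → ℝ)
    (hroot : ∀ l : ℝ, ∀ i < n, (P - C l * Polynomial.derivative P).IsRoot (ζ l i))
    (hmono : ∀ l : ℝ, ∀ i j, i < j → j < n → ζ l i < ζ l j)
    (hzero : ∀ i < n, ζ 0 i = x i) :
    ∀ l : ℝ,
      (∀ j < n, ∑ i ∈ Finset.range j, (ζ l i - l) ≤ ∑ i ∈ Finset.range j, x i) ∧
      ∑ i ∈ Finset.range n, (ζ l i - l) = ∑ i ∈ Finset.range n, x i := by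
  intro l
  by_cases hl : l = 0
  · subst hl
    constructor
    · intro j hj
      refine le_of_eq (Finset.sum_congr rfl fun i hi => ?_)
      rw [sub_zero]
      exact hzero i (lt_trans (Finset.mem_range.mp hi) hj)
    · refine Finset.sum_congr rfl fun i hi => ?_
      rw [sub_zero]
      exact hzero i (Finset.mem_range.mp hi)
  · have hn0 : 0 < n := lt_of_lt_of_le two_pos hn
    -- polynomial evaluations
    have eval_der : ∀ z : ℝ, Polynomial.eval z (Polynomial.derivative P)
        = ∑ k ∈ Finset.range n, ∏ m ∈ (Finset.range n).erase k, (z - x m) := by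
      intro z
      rw [hP]
      exact eval_derivative_prod_X_sub_C (Finset.range n) x z
    have eval_P : ∀ z : ℝ, Polynomial.eval z P = ∏ m ∈ Finset.range n, (z - x m) := by
      intro z
      rw [hP, Polynomial.eval_prod]
      exact Finset.prod_congr rfl fun m _ => by simp
    have hev : ∀ i < n, ∏ m ∈ Finset.range n, (ζ l i - x m)
        = l * ∑ k ∈ Finset.range n, ∏ m ∈ (Finset.range n).erase k, (ζ l i - x m) := by
      intro i hi
      have h := hroot l i hi
      rw [Polynomial.IsRoot, Polynomial.eval_sub, Polynomial.eval_mul, Polynomial.eval_C,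
        sub_eq_zero] at h
      rw [eval_P, eval_der] at h
      exact h
    have hxinj : ∀ a b, a < n → b < n → a ≠ b → x a ≠ x b := by
      intro a b ha hb hab
      rcases lt_or_gt_of_ne hab with h | h
      · exact ne_of_lt (hx a b h hb)
      · exact ne_of_gt (hx b a h ha)
    have hzx : ∀ i < n, ∀ m ∈ Finset.range n, ζ l i - x m ≠ 0 := by
      intro i hi m hm hzero'
      have hprod0 : ∏ m' ∈ Finset.range n, (ζ l i - x m') = 0 :=
        Finset.prod_eq_zero hm hzero'
      have hsum0 : ∑ k ∈ Finset.range n, ∏ m' ∈ (Finset.range n).erase k, (ζ l i - x m') = 0 := by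
        have := hev i hi
        rw [hprod0] at this
        field_simp at this
        exact (mul_eq_zero.mp this.symm).resolve_left hl
      have hone : ∑ k ∈ Finset.range n, ∏ m' ∈ (Finset.range n).erase k, (ζ l i - x m')
          = ∏ m' ∈ (Finset.range n).erase m, (ζ l i - x m') := by
        refine Finset.sum_eq_single_of_mem m hm fun k hk hkm => ?_
        exact Finset.prod_eq_zero (Finset.mem_erase.mpr ⟨fun h => hkm h.symm, hm⟩) hzero'
      rw [hone] at hsum0
      have : ∏ m' ∈ (Finset.range n).erase m, (ζ l i - x m') ≠ 0 := by
        rw [Finset.prod_ne_zero_iff]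
        intro m' hm'
        rw [Finset.mem_erase, Finset.mem_range] at hm'
        rw [sub_ne_zero, sub_eq_zero.mp hzero']
        exact hxinj m m' (Finset.mem_range.mp hm) hm'.2 fun h => hm'.1 h.symm
      exact this hsum0
    -- the key identity, over Fin n
    set ζv : Fin n → ℝ := fun i => ζ l i with hζv
    set xv : Fin n → ℝ := fun k => x k with hxv
    have hne : ∀ i k : Fin n, ζv i - xv k ≠ 0 := fun i k =>
      hzx i i.isLt k (Finset.mem_range.mpr k.isLt)
    have key : ∀ i : Fin n, l * ∑ k : Fin n, (ζv i - xv k)⁻¹ = 1 := by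
      intro i
      have hprodne : ∏ m ∈ Finset.range n, (ζ l i - x m) ≠ 0 := by
        rw [Finset.prod_ne_zero_iff]
        exact fun m hm => hzx i i.isLt m hm
      have hconv : ∑ k : Fin n, (ζv i - xv k)⁻¹ = ∑ k ∈ Finset.range n, (ζ l i - x k)⁻¹ :=
        Fin.sum_univ_eq_sum_range (fun k => (ζ l i - x k)⁻¹) n
      rw [hconv]
      have hterm : ∀ k ∈ Finset.range n, (ζ l i - x k)⁻¹
          = (∏ m ∈ (Finset.range n).erase k, (ζ l i - x m))
            / (∏ m ∈ Finset.range n, (ζ l i - x m)) := by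
        intro k hk
        rw [eq_div_iff hprodne]
        rw [← Finset.mul_prod_erase (Finset.range n) (fun m => ζ l i - x m) hk]
        rw [inv_mul_cancel_left₀ (hzx i i.isLt k hk)]
      rw [Finset.sum_congr rfl hterm, ← Finset.sum_div, mul_div_assoc', ← hev i i.isLt,
        div_self hprodne]
    have hinjv : ∀ i i' : Fin n, i ≠ i' → ζv i ≠ ζv i' := by
      intro i i' hii
      rcases lt_or_gt_of_ne (Fin.val_ne_of_ne hii) with h | h
      · exact ne_of_lt (hmono l i i' h i'.isLt)
      · exact ne_of_gt (hmono l i' i h i.isLt)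
    constructor
    · intro j hj
      obtain ⟨t, ht0, ht1, htsum, hteq⟩ := spectral n hn0 ζv xv l hl hne key hinjv
        (Finset.univ.filter (fun k : Fin n => (k : ℕ) < j))
      have hcard : ((Finset.univ.filter (fun k : Fin n => (k : ℕ) < j)).card : ℝ) = (j : ℝ) := by
        have h1 : ((Finset.univ.filter (fun k : Fin n => (k : ℕ) < j)).card : ℝ)
            = ∑ k ∈ Finset.univ.filter (fun k : Fin n => (k : ℕ) < j), (1 : ℝ) := by simp
        rw [h1, sum_filter_val_lt n j hj.le (fun _ => (1 : ℝ))]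
        simp
      have htsum' : ∑ i : Fin n, t i = (j : ℝ) := htsum.trans hcard
      have hlp := lp_bound n j hj (fun m => ζ l m) (hmono l) t ht0 ht1 htsum'
      have hteq' : ∑ k ∈ Finset.univ.filter (fun k : Fin n => (k : ℕ) < j), (x (k : ℕ) + l)
          = ∑ i : Fin n, ζ l (i : ℕ) * t i := hteq
      have tr1 : ∑ i ∈ Finset.univ.filter (fun i : Fin n => (i : ℕ) < j), ζ l (i : ℕ)
          = ∑ m ∈ Finset.range j, ζ l m := sum_filter_val_lt n j hj.le (fun m => ζ l m)
      have tr2 : ∑ k ∈ Finset.univ.filter (fun k : Fin n => (k : ℕ) < j), (x (k : ℕ) + l)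
          = ∑ m ∈ Finset.range j, (x m + l) := sum_filter_val_lt n j hj.le (fun m => x m + l)
      have main : ∑ m ∈ Finset.range j, ζ l m ≤ ∑ m ∈ Finset.range j, (x m + l) := by
        rw [← tr1, ← tr2, hteq']
        exact hlp
      have e1 : ∑ i ∈ Finset.range j, (ζ l i - l)
          = (∑ i ∈ Finset.range j, ζ l i) - (j : ℝ) * l := by
        rw [Finset.sum_sub_distrib, Finset.sum_const, Finset.card_range, nsmul_eq_mul]
      have e2 : ∑ m ∈ Finset.range j, (x m + l)
          = (∑ m ∈ Finset.range j, x m) + (j : ℝ) * l := by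
        rw [Finset.sum_add_distrib, Finset.sum_const, Finset.card_range, nsmul_eq_mul]
      linarith
    · obtain ⟨t, ht0, ht1, htsum, hteq⟩ := spectral n hn0 ζv xv l hl hne key hinjv Finset.univ
      have htsum' : ∑ i : Fin n, t i = (n : ℝ) := by
        rw [htsum, Finset.card_univ, Fintype.card_fin]
      have hall : ∀ i, t i = 1 := by
        have hsum0 : ∑ i : Fin n, (1 - t i) = 0 := by
          rw [Finset.sum_sub_distrib, htsum', Finset.sum_const, Finset.card_univ,
            Fintype.card_fin, nsmul_eq_mul, mul_one, sub_self]
        intro i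
        have := (Finset.sum_eq_zero_iff_of_nonneg
          (fun i _ => by linarith [ht1 i])).mp hsum0 i (Finset.mem_univ i)
        linarith
      have hteq' : ∑ k : Fin n, (x (k : ℕ) + l) = ∑ i : Fin n, ζ l (i : ℕ) * t i := hteq
      have hteq'' : ∑ k : Fin n, (x (k : ℕ) + l) = ∑ i : Fin n, ζ l (i : ℕ) := by
        rw [hteq']
        exact Finset.sum_congr rfl fun i _ => by rw [hall i, mul_one]
      have tru1 : ∑ i : Fin n, ζ l (i : ℕ) = ∑ m ∈ Finset.range n, ζ l m :=
        Fin.sum_univ_eq_sum_range (fun m => ζ l m) n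
      have tru2 : ∑ k : Fin n, (x (k : ℕ) + l) = ∑ m ∈ Finset.range n, (x m + l) :=
        Fin.sum_univ_eq_sum_range (fun m => x m + l) n
      have e1 : ∑ i ∈ Finset.range n, (ζ l i - l)
          = (∑ i ∈ Finset.range n, ζ l i) - (n : ℝ) * l := by
        rw [Finset.sum_sub_distrib, Finset.sum_const, Finset.card_range, nsmul_eq_mul]
      have e2 : ∑ m ∈ Finset.range n, (x m + l)
          = (∑ m ∈ Finset.range n, x m) + (n : ℝ) * l := by
        rw [Finset.sum_add_distrib, Finset.sum_const, Finset.card_range, nsmul_eq_mul]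
      have : ∑ m ∈ Finset.range n, (x m + l) = ∑ m ∈ Finset.range n, ζ l m := by
        rw [← tru1, ← tru2, hteq'']
      linarith
end

section
/- Let n ≥ 2, x_1 < … < x_n real, P(x) = Π(x − x_i), and for λ ∈ ℝ let ζ_i(λ; x), i = 1,…,n, be the (simple, real) zeros of P − λP′ labeled so that ζ_i(0; x) = x_i. Then for λ ≠ 0 and all 1 ≤ i, j ≤ n: (ζ_i(λ;x) − x_j)² · ∂ζ_i/∂x_j = λ² · ∂ζ_i/∂λ > 0. In particular, for fixed λ ≠ 0 and fixed x_1 < … < x_{n−1}, each ζ_i(λ; x) is a strictly increasing function of x_n on (x_{n−1}, ∞). -/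
open Polynomial Filter Set

/-- Factorization of the monic degree-n polynomial with n distinct roots. -/
lemma factor_aux {n : ℕ} (hn : 1 ≤ n) (x z : Fin n → ℝ) (t : ℝ)
    (hroots : ∀ i, ((∏ k, (X - C (x k))) -
      C t * Polynomial.derivative (∏ k, (X - C (x k)))).IsRoot (z i))
    (hm : StrictMono z) :
    (∏ k, (X - C (x k))) - C t * Polynomial.derivative (∏ k, (X - C (x k)))
      = ∏ k, (X - C (z k)) := by
  set P : ℝ[X] := ∏ k, (X - C (x k)) with hP
  set R : ℝ[X] := ∏ k, (X - C (z k)) with hR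
  have hPm : P.Monic := monic_prod_of_monic _ _ fun _ _ => monic_X_sub_C _
  have hRm : R.Monic := monic_prod_of_monic _ _ fun _ _ => monic_X_sub_C _
  have hPd : P.natDegree = n := by
    rw [hP, natDegree_prod _ _ (fun k _ => X_sub_C_ne_zero (x k))]
    simp
  have hRd : R.natDegree = n := by
    rw [hR, natDegree_prod _ _ (fun k _ => X_sub_C_ne_zero (z k))]
    simp
  have hPR : degree (P - R) < (n : ℕ∞) := by
    have hdeg : P.degree = R.degree := by
      rw [degree_eq_natDegree hPm.ne_zero, degree_eq_natDegree hRm.ne_zero, hPd, hRd]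
    have := degree_sub_lt hdeg hPm.ne_zero (by simp [hPm.leadingCoeff, hRm.leadingCoeff])
    rwa [degree_eq_natDegree hPm.ne_zero, hPd] at this
  have hCP : degree (C t * Polynomial.derivative P) < (n : ℕ∞) := by
    calc degree (C t * Polynomial.derivative P)
        ≤ degree (C t) + degree (Polynomial.derivative P) := degree_mul_le _ _
      _ ≤ 0 + degree (Polynomial.derivative P) := by gcongr; exact degree_C_le
      _ = degree (Polynomial.derivative P) := by rw [zero_add]
      _ < degree P := degree_derivative_lt hPm.ne_zero
      _ = n := by rw [degree_eq_natDegree hPm.ne_zero, hPd]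
  have hdiff : degree ((P - C t * Polynomial.derivative P) - R) < (n : ℕ∞) := by
    have : (P - C t * Polynomial.derivative P) - R = (P - R) - C t * Polynomial.derivative P := by
      ring
    rw [this]
    exact lt_of_le_of_lt (degree_sub_le _ _) (max_lt hPR hCP)
  have hz : ((P - C t * Polynomial.derivative P) - R) = 0 := by
    apply Polynomial.eq_zero_of_natDegree_lt_card_of_eval_eq_zero _ hm.injective
    · intro i
      have h1 : eval (z i) R = 0 := by
        rw [hR, eval_prod]
        exact Finset.prod_eq_zero (Finset.mem_univ i) (by simp)
      have h2 := hroots i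
      simp only [IsRoot, eval_sub] at h2 ⊢
      rw [h1, h2, sub_zero]
    · rcases eq_or_ne ((P - C t * Polynomial.derivative P) - R) 0 with h | h
      · simpa [h] using (show 0 < n by omega)
      · rw [Fintype.card_fin]
        exact_mod_cast (natDegree_lt_iff_degree_lt h).mpr hdiff
  exact sub_eq_zero.mp hz

/-- Key lemma: for an affine-in-parameter family `A + t•B` that factors as
`∏ (X - ψ t k)` with `ψ t` strictly monotone near `t0`, each root function is
differentiable with the implicit-function-theorem derivative. -/
lemma key_deriv {n : ℕ} (hn : 2 ≤ n) (A B : ℝ[X]) (ψ : ℝ → Fin n → ℝ) (t0 : ℝ)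
    (h : ∀ᶠ t in nhds t0,
      (A + C t * B = ∏ k, (X - C (ψ t k))) ∧ StrictMono (ψ t)) (i : Fin n) :
    HasDerivAt (fun t => ψ t i)
      (-(B.eval (ψ t0 i)) / ∏ k ∈ Finset.univ.erase i, (ψ t0 i - ψ t0 k)) t0 := by
  classical
  obtain ⟨hQ0, hm0⟩ := h.self_of_nhds
  set z : Fin n → ℝ := ψ t0 with hzdef
  set D : ℝ := ∏ k ∈ Finset.univ.erase i, (z i - z k) with hDdef
  have hDne : D ≠ 0 := by
    rw [hDdef]
    exact Finset.prod_ne_zero_iff.mpr fun k hk =>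
      sub_ne_zero.mpr (hm0.injective.ne (Finset.ne_of_mem_erase hk).symm)
  set E : ℝ → ℝ := fun y => ∏ m, (y - z m) with hEdef
  have hevalE : ∀ y : ℝ, (∏ k, (X - C (z k))).eval y = E y := by
    intro y; simp [hEdef, eval_prod]
  -- uniform closeness of roots
  have huni : ∀ ε0 : ℝ, 0 < ε0 → ∀ᶠ t in nhds t0, ∀ k, |ψ t k - z k| < ε0 := by
    intro ε0 hε0
    obtain ⟨i0, i1, hne⟩ : ∃ a b : Fin n, a ≠ b :=
      ⟨⟨0, by omega⟩, ⟨1, by omega⟩, by simp [Fin.ext_iff]⟩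
    set S : Finset ℝ := Finset.univ.offDiag.image (fun p : Fin n × Fin n => |z p.1 - z p.2|)
      with hSdef
    have hS : S.Nonempty :=
      ⟨_, Finset.mem_image_of_mem _
        (show ((i0, i1) : Fin n × Fin n) ∈ Finset.univ.offDiag by
          simp [Finset.mem_offDiag, hne])⟩
    set δ : ℝ := S.min' hS with hδdef
    have hδpos : 0 < δ := by
      rw [hδdef, Finset.lt_min'_iff]
      intro y hy
      obtain ⟨p, hp, rfl⟩ := Finset.mem_image.mp hy
      obtain ⟨-, -, hpne⟩ := Finset.mem_offDiag.mp hp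
      exact abs_pos.mpr (sub_ne_zero.mpr (hm0.injective.ne hpne))
    have hgap : ∀ a b : Fin n, a ≠ b → δ ≤ |z a - z b| := fun a b hab =>
      S.min'_le _ (Finset.mem_image_of_mem _
        (show ((a, b) : Fin n × Fin n) ∈ Finset.univ.offDiag by
          simp [Finset.mem_offDiag, hab]))
    set ε : ℝ := min ε0 (δ / 3) with hεdef
    have hεpos : 0 < ε := lt_min hε0 (by linarith)
    have hε3 : 3 * ε ≤ δ := by
      have := min_le_right ε0 (δ / 3); rw [← hεdef] at this; linarith
    have hεε0 : ε ≤ ε0 := min_le_left _ _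
    have hfar : ∀ (k m : Fin n) (η : ℝ), |η| = ε → z k + η ≠ z m := by
      intro k m η hη hcontra
      rcases eq_or_ne m k with rfl | hmk
      · have : η = 0 := by linarith
        rw [this, abs_zero] at hη; linarith
      · have h1 : δ ≤ |z k - z m| := hgap k m (Ne.symm hmk)
        have h2 : |z k - z m| = ε := by
          rw [show z k - z m = -η by linarith, abs_neg, hη]
        linarith
    have hEne : ∀ (k : Fin n) (η : ℝ), |η| = ε → E (z k + η) ≠ 0 := by
      intro k η hη
      exact Finset.prod_ne_zero_iff.mpr fun m _ => sub_ne_zero.mpr (hfar k m η hη)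
    have hsign : ∀ k : Fin n, E (z k - ε) * E (z k + ε) < 0 := by
      intro k
      have h1 : E (z k - ε) * E (z k + ε) = ∏ m, ((z k - z m) ^ 2 - ε ^ 2) := by
        rw [hEdef, ← Finset.prod_mul_distrib]
        exact Finset.prod_congr rfl fun m _ => by ring
      rw [h1, ← Finset.mul_prod_erase _ _ (Finset.mem_univ k)]
      have hprodpos : 0 < ∏ m ∈ Finset.univ.erase k, ((z k - z m) ^ 2 - ε ^ 2) := by
        apply Finset.prod_pos
        intro m hm
        have hd : δ ≤ |z k - z m| :=
          hgap k m (Ne.symm (Finset.ne_of_mem_erase hm))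
        have : (z k - z m) ^ 2 = |z k - z m| ^ 2 := (sq_abs _).symm
        nlinarith [abs_nonneg (z k - z m)]
      apply mul_neg_of_neg_of_pos _ hprodpos
      nlinarith
    have hevent : ∀ᶠ t in nhds t0, ∀ k : Fin n,
        0 < (A.eval (z k - ε) + t * B.eval (z k - ε)) * E (z k - ε) ∧
        0 < (A.eval (z k + ε) + t * B.eval (z k + ε)) * E (z k + ε) := by
      rw [eventually_all]
      intro k
      have gen : ∀ y : ℝ, E y ≠ 0 → ∀ᶠ t in nhds t0,
          0 < (A.eval y + t * B.eval y) * E y := by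
        intro y hy
        have hA : A.eval y + t0 * B.eval y = E y := by
          have := congrArg (eval y) hQ0
          simpa [eval_add, eval_mul, eval_C, hevalE] using this
        have hcont : Tendsto (fun t => (A.eval y + t * B.eval y) * E y) (nhds t0)
            (nhds ((A.eval y + t0 * B.eval y) * E y)) := by
          exact ((tendsto_const_nhds.add (tendsto_id.mul tendsto_const_nhds)).mul
            tendsto_const_nhds)
        rw [hA] at hcont
        exact hcont.eventually (eventually_gt_nhds (mul_self_pos.mpr hy))
      have hm1 : |(-ε : ℝ)| = ε := by rw [abs_neg, abs_of_pos hεpos]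
      have hp1 : |(ε : ℝ)| = ε := abs_of_pos hεpos
      have e1 := gen (z k - ε) (by simpa [sub_eq_add_neg] using hEne k (-ε) hm1)
      have e2 := gen (z k + ε) (hEne k ε hp1)
      filter_upwards [e1, e2] with t h1 h2
      exact ⟨h1, h2⟩
    filter_upwards [h, hevent] with t ht hsgn
    obtain ⟨hQt, hmt⟩ := ht
    have hroot' : ∀ k : Fin n, ∃ m, ψ t m ∈ Set.Ioo (z k - ε) (z k + ε) := by
      intro k
      set f : ℝ → ℝ := fun y => (A + C t * B).eval y with hfdef
      have hfc : Continuous f := Polynomial.continuous _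
      have hfa : 0 < f (z k - ε) * E (z k - ε) := by
        simpa [hfdef, eval_add, eval_mul, eval_C] using (hsgn k).1
      have hfb : 0 < f (z k + ε) * E (z k + ε) := by
        simpa [hfdef, eval_add, eval_mul, eval_C] using (hsgn k).2
      have hab : f (z k - ε) * f (z k + ε) < 0 := by
        nlinarith [hsign k, mul_pos hfa hfb]
      have hle : z k - ε ≤ z k + ε := by linarith
      have hzero : ∃ r ∈ Set.Ioo (z k - ε) (z k + ε), f r = 0 := by
        rcases lt_trichotomy (f (z k - ε)) 0 with hfa0 | hfa0 | hfa0
        · have hfb0 : 0 < f (z k + ε) := by nlinarith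
          have := intermediate_value_Ioo hle hfc.continuousOn
            (show (0:ℝ) ∈ Set.Ioo (f (z k - ε)) (f (z k + ε)) from ⟨hfa0, hfb0⟩)
          obtain ⟨r, hr, hr0⟩ := this
          exact ⟨r, hr, hr0⟩
        · exfalso; rw [hfa0] at hab; simp at hab
        · have hfb0 : f (z k + ε) < 0 := by nlinarith
          have := intermediate_value_Ioo' hle hfc.continuousOn
            (show (0:ℝ) ∈ Set.Ioo (f (z k + ε)) (f (z k - ε)) from ⟨hfb0, hfa0⟩)
          obtain ⟨r, hr, hr0⟩ := this
          exact ⟨r, hr, hr0⟩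
      obtain ⟨r, hr, hr0⟩ := hzero
      rw [hfdef] at hr0
      simp only [hQt] at hr0
      rw [eval_prod] at hr0
      simp only [eval_sub, eval_X, eval_C] at hr0
      obtain ⟨m, -, hm⟩ := Finset.prod_eq_zero_iff.mp hr0
      exact ⟨m, by rwa [← sub_eq_zero.mp hm]⟩
    choose σ hσ using hroot'
    have hσm : StrictMono σ := by
      intro a b hab
      have h1 : ψ t (σ a) < z a + ε := (hσ a).2
      have h2 : z b - ε < ψ t (σ b) := (hσ b).1
      have hzab : z a < z b := hm0 hab
      have hd : δ ≤ |z a - z b| := hgap a b hab.ne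
      rw [abs_sub_comm, abs_of_pos (by linarith)] at hd
      have : ψ t (σ a) < ψ t (σ b) := by linarith
      exact hmt.lt_iff_lt.mp this
    have hσid : σ = id := by
      have hsurj : Function.Surjective σ :=
        Finite.injective_iff_surjective.mp hσm.injective
      haveI : WellFoundedLT (Fin n) := Finite.to_wellFoundedLT
      refine (hσm.range_inj strictMono_id).mp ?_
      rw [Set.range_id]
      exact Set.range_eq_univ.mpr hsurj
    intro k
    have hk := hσ k
    rw [hσid] at hk
    simp only [id] at hk
    have := hk.1; have := hk.2
    rw [abs_sub_lt_iff]
    constructor <;> [linarith; linarith]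
  -- continuity of each root function
  have hcontk : ∀ k : Fin n, Tendsto (fun t => ψ t k) (nhds t0) (nhds (z k)) := by
    intro k
    rw [Metric.tendsto_nhds]
    intro ε0 hε0
    filter_upwards [huni ε0 hε0] with t ht
    rw [Real.dist_eq]
    exact ht k
  -- derivative computation
  set Hq : ℝ[X] := ∏ k ∈ Finset.univ.erase i, (X - C (z k)) with hHqdef
  have hHe : Hq.eval (z i) = D := by simp [hHqdef, hDdef, eval_prod]
  have hfact : (∏ k, (X - C (z k))) = (X - C (z i)) * Hq :=
    (Finset.mul_prod_erase _ _ (Finset.mem_univ i)).symm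
  have hHcont : Tendsto (fun t => Hq.eval (ψ t i)) (nhds t0) (nhds D) := by
    rw [← hHe]
    exact (Hq.continuous.tendsto (z i)).comp (hcontk i)
  have hHne : ∀ᶠ t in nhds t0, Hq.eval (ψ t i) ≠ 0 := hHcont.eventually_ne hDne
  rw [hasDerivAt_iff_tendsto_slope]
  have htend : Tendsto (fun t => -(B.eval (ψ t i)) / Hq.eval (ψ t i)) (nhds t0)
      (nhds (-(B.eval (z i)) / D)) :=
    Tendsto.div (((B.continuous.tendsto (z i)).comp (hcontk i)).neg) hHcont hDne
  refine Tendsto.congr' ?_ (htend.mono_left nhdsWithin_le_nhds)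
  have hmem : {t : ℝ | t ≠ t0} ∈ nhdsWithin t0 {t0}ᶜ := self_mem_nhdsWithin
  filter_upwards [(h.and hHne).filter_mono nhdsWithin_le_nhds, hmem] with t hht htne
  obtain ⟨⟨hQt, hmt⟩, hHt⟩ := hht
  have hy0 : (A + C t * B).eval (ψ t i) = 0 := by
    rw [hQt, eval_prod]
    exact Finset.prod_eq_zero (Finset.mem_univ i) (by simp)
  have hy0' : A.eval (ψ t i) + t * B.eval (ψ t i) = 0 := by
    simpa [eval_add, eval_mul, eval_C] using hy0
  have hQ0y : A.eval (ψ t i) + t0 * B.eval (ψ t i) =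
      (ψ t i - z i) * Hq.eval (ψ t i) := by
    have := congrArg (eval (ψ t i)) hQ0
    rw [hfact] at this
    simpa [eval_add, eval_mul, eval_C, eval_sub, eval_X] using this
  have hkey : (ψ t i - z i) * Hq.eval (ψ t i) + (t - t0) * B.eval (ψ t i) = 0 := by
    linarith [hy0', hQ0y]
  have htt0 : t - t0 ≠ 0 := sub_ne_zero.mpr htne
  rw [slope_def_field]
  field_simp
  linarith [hkey]

theorem root_partial_derivative_identity (n : ℕ) (hn : 2 ≤ n)
    (ζ : ℝ → (Fin n → ℝ) → Fin n → ℝ)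
    (hroot : ∀ (l : ℝ) (x : Fin n → ℝ), StrictMono x → ∀ i : Fin n,
      ((∏ k, (X - C (x k))) -
        C l * Polynomial.derivative (∏ k, (X - C (x k)))).IsRoot (ζ l x i))
    (hmono : ∀ (l : ℝ) (x : Fin n → ℝ), StrictMono x → StrictMono (ζ l x))
    (hzero : ∀ x : Fin n → ℝ, StrictMono x → ζ 0 x = x)
    (l : ℝ) (hl : l ≠ 0) (x : Fin n → ℝ) (hx : StrictMono x) (i j : Fin n) :
    ∃ dl dx : ℝ,
      HasDerivAt (fun t : ℝ => ζ t x i) dl l ∧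
      HasDerivAt (fun s : ℝ => ζ l (Function.update x j s) i) dx (x j) ∧
      (ζ l x i - x j) ^ 2 * dx = l ^ 2 * dl ∧ 0 < l ^ 2 * dl := by
  classical
  set P : ℝ[X] := ∏ k, (X - C (x k)) with hPdef
  have hglob : ∀ t : ℝ, P - C t * Polynomial.derivative P = ∏ k, (X - C (ζ t x k)) :=
    fun t => factor_aux (by omega) x (ζ t x) t (hroot t x hx) (hmono t x hx)
  -- λ-derivative at any point
  have hder : ∀ (t0 : ℝ) (k : Fin n), HasDerivAt (fun t => ζ t x k)
      (-((-(Polynomial.derivative P)).eval (ζ t0 x k)) /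
        ∏ m ∈ Finset.univ.erase k, (ζ t0 x k - ζ t0 x m)) t0 := by
    intro t0 k
    apply key_deriv hn P (-(Polynomial.derivative P)) (fun t => ζ t x) t0
    apply Filter.Eventually.of_forall
    intro t
    refine ⟨?_, hmono t x hx⟩
    rw [← hglob t]; ring
  set e : ℝ := ζ l x i with hedef
  set D : ℝ := ∏ m ∈ Finset.univ.erase i, (ζ l x i - ζ l x m) with hDdef
  set dl : ℝ := (Polynomial.derivative P).eval e / D with hdldef
  have hdl : HasDerivAt (fun t : ℝ => ζ t x i) dl l := by
    have := hder l i
    simpa [hdldef, hedef, hDdef, eval_neg] using this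
  -- x_j derivative
  set R : ℝ[X] := ∏ k ∈ Finset.univ.erase j, (X - C (x k)) with hRdef
  set A2 : ℝ[X] := X * R - C l * (R + X * Polynomial.derivative R) with hA2def
  set B2 : ℝ[X] := C l * Polynomial.derivative R - R with hB2def
  have hUopen : IsOpen {y : Fin n → ℝ | StrictMono y} := by
    have heq : {y : Fin n → ℝ | StrictMono y} =
        ⋂ p : Fin n × Fin n, {y | p.1 < p.2 → y p.1 < y p.2} := by
      ext y
      simp only [Set.mem_setOf_eq, Set.mem_iInter]
      exact ⟨fun hy p h => hy h, fun hy a b h => hy (a, b) h⟩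
    rw [heq]
    apply isOpen_iInter_of_finite
    intro p
    by_cases hp : p.1 < p.2
    · simp only [hp, true_implies]
      exact isOpen_lt (continuous_apply p.1) (continuous_apply p.2)
    · simp only [hp, false_implies]
      exact isOpen_univ
  have hupd_cont : Continuous fun s : ℝ => Function.update x j s := by
    apply continuous_pi
    intro k
    have : (fun s : ℝ => Function.update x j s k) = fun s => if k = j then s else x k :=
      funext fun s => Function.update_apply x j s k
    rw [this]
    by_cases hk : k = j
    · simp only [hk, if_pos rfl]; exact continuous_id
    · simp only [hk, if_neg hk]; exact continuous_const
  have hopen : ∀ᶠ s in nhds (x j), StrictMono (Function.update x j s) := by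
    have hmem : x j ∈ (fun s : ℝ => Function.update x j s) ⁻¹' {y | StrictMono y} := by
      simp only [Set.mem_preimage, Set.mem_setOf_eq, Function.update_eq_self]
      exact hx
    exact (hUopen.preimage hupd_cont).mem_nhds hmem
  have h2 : ∀ᶠ s in nhds (x j),
      (A2 + C s * B2 = ∏ k, (X - C (ζ l (Function.update x j s) k))) ∧
      StrictMono (ζ l (Function.update x j s)) := by
    filter_upwards [hopen] with s hs
    have hprod : (∏ k, (X - C (Function.update x j s k))) = (X - C s) * R := by
      rw [← Finset.mul_prod_erase _ _ (Finset.mem_univ j)]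
      congr 1
      · rw [Function.update_self]
      · exact Finset.prod_congr rfl fun k hk => by
          rw [Function.update_of_ne (Finset.ne_of_mem_erase hk)]
    have hfac := factor_aux (by omega) (Function.update x j s)
      (ζ l (Function.update x j s)) l (hroot l _ hs) (hmono l _ hs)
    refine ⟨?_, hmono l _ hs⟩
    rw [← hfac, hprod, derivative_mul, derivative_X_sub_C]
    ring
  have hdx0 := key_deriv hn A2 B2 (fun s => ζ l (Function.update x j s)) (x j) h2 i
  rw [Function.update_eq_self] at hdx0
  set dx : ℝ := (R.eval e - l * (Polynomial.derivative R).eval e) / D with hdxdef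
  have hdx : HasDerivAt (fun s : ℝ => ζ l (Function.update x j s) i) dx (x j) := by
    have hval : -(B2.eval (ζ l x i)) / (∏ m ∈ Finset.univ.erase i, (ζ l x i - ζ l x m))
        = dx := by
      rw [hdxdef, hB2def]
      simp only [eval_sub, eval_mul, eval_C, hedef, hDdef]
      ring_nf
    rw [← hval]
    exact hdx0
  refine ⟨dl, dx, hdl, hdx, ?_, ?_⟩
  · -- the identity
    have hPfact : P = (X - C (x j)) * R :=
      (Finset.mul_prod_erase _ _ (Finset.mem_univ j)).symm
    have hP'e : (Polynomial.derivative P).eval e =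
        R.eval e + (e - x j) * (Polynomial.derivative R).eval e := by
      rw [hPfact, derivative_mul, derivative_X_sub_C]
      simp only [eval_add, eval_mul, eval_sub, eval_X, eval_C, one_mul]
    have hrel : (e - x j) * R.eval e =
        l * (R.eval e + (e - x j) * (Polynomial.derivative R).eval e) := by
      have h0 := hroot l x hx i
      simp only [IsRoot, eval_sub, eval_mul, eval_C, ← hPdef, ← hedef] at h0
      have h0' : P.eval e = l * (Polynomial.derivative P).eval e := by linarith
      rw [hP'e] at h0'
      rw [hPfact] at h0'
      simp only [eval_mul, eval_sub, eval_X, eval_C] at h0'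
      linarith
    rw [hdxdef, hdldef, hP'e]
    rw [← mul_div_assoc, ← mul_div_assoc]
    congr 1
    linear_combination (e - x j + l) * hrel
  · -- positivity
    have hDx : ∀ m : Fin n, (∏ k ∈ Finset.univ.erase m, (x m - x k)) ≠ 0 := fun m =>
      Finset.prod_ne_zero_iff.mpr fun k hk =>
        sub_ne_zero.mpr (hx.injective.ne (Finset.ne_of_mem_erase hk).symm)
    have hP'x : ∀ m : Fin n, (Polynomial.derivative P).eval (x m) =
        ∏ k ∈ Finset.univ.erase m, (x m - x k) := by
      intro m
      rw [show P = (X - C (x m)) * ∏ k ∈ Finset.univ.erase m, (X - C (x k)) from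
        (Finset.mul_prod_erase _ _ (Finset.mem_univ m)).symm,
        derivative_mul, derivative_X_sub_C]
      simp [eval_prod]
    have hP'xne : ∀ m : Fin n, (Polynomial.derivative P).eval (x m) ≠ 0 := fun m => by
      rw [hP'x m]; exact hDx m
    set φ : ℝ → ℝ := fun t => (Polynomial.derivative P).eval (ζ t x i) *
      ∏ m ∈ Finset.univ.erase i, (ζ t x i - ζ t x m) with hφdef
    have hcont' : ∀ k : Fin n, Continuous fun t => ζ t x k := fun k =>
      continuous_iff_continuousAt.mpr fun t0 => (hder t0 k).continuousAt
    have hφc : Continuous φ :=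
      ((Polynomial.derivative P).continuous.comp (hcont' i)).mul
        (continuous_finset_prod _ fun m _ => (hcont' i).sub (hcont' m))
    have hφne : ∀ t : ℝ, φ t ≠ 0 := by
      intro t
      apply mul_ne_zero
      · rcases eq_or_ne t 0 with rfl | ht
        · rw [hzero x hx]; exact hP'xne i
        · intro hc
          have h0 := hroot t x hx i
          simp only [IsRoot, eval_sub, eval_mul, eval_C, ← hPdef] at h0
          have hPz : P.eval (ζ t x i) = 0 := by rw [hc] at h0; linarith
          rw [hPdef, eval_prod] at hPz
          simp only [eval_sub, eval_X, eval_C] at hPz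
          obtain ⟨m, -, hm⟩ := Finset.prod_eq_zero_iff.mp hPz
          exact hP'xne m (by rw [← sub_eq_zero.mp hm]; exact hc)
      · exact Finset.prod_ne_zero_iff.mpr fun m hm =>
          sub_ne_zero.mpr ((hmono t x hx).injective.ne (Finset.ne_of_mem_erase hm).symm)
    have hφ0 : 0 < φ 0 := by
      have : φ 0 = (∏ k ∈ Finset.univ.erase i, (x i - x k)) *
          (∏ k ∈ Finset.univ.erase i, (x i - x k)) := by
        rw [hφdef]; simp only [hzero x hx, hP'x i]
      rw [this]
      exact mul_self_pos.mpr (hDx i)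
    have hφl : 0 < φ l := by
      by_contra hcon
      push_neg at hcon
      have hlt : φ l < 0 := lt_of_le_of_ne hcon (hφne l)
      have h0mem : (0:ℝ) ∈ Set.uIcc (φ 0) (φ l) :=
        Set.mem_uIcc.mpr (Or.inr ⟨le_of_lt hlt, le_of_lt hφ0⟩)
      obtain ⟨t, -, ht⟩ := intermediate_value_uIcc hφc.continuousOn h0mem
      exact hφne t ht
    have hφleq : φ l = (Polynomial.derivative P).eval e * D := by rw [hφdef, hedef, hDdef]
    rw [hφleq] at hφl
    have hl2 : 0 < l ^ 2 := by positivity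
    have hdlpos : 0 < dl := by
      rw [hdldef]
      rcases mul_pos_iff.mp hφl with ⟨h1, h2⟩ | ⟨h1, h2⟩
      · exact div_pos h1 h2
      · exact div_pos_of_neg_of_neg h1 h2
    exact mul_pos hl2 hdlpos
end

section
/- Let P be a monic hyperbolic polynomial of degree n ≥ 1 and suppose Q is a polynomial with deg Q ≤ n−1 and leading coefficient n such that for some ε > 0 the roots of P(x) are majorized by the roots of P(x+μ) − μQ(x+μ) for all μ ∈ (−ε, ε) (and these polynomials are hyperbolic). Then Q = P′. -/
open Polynomial

def polyMaj (P Q : Polynomial ℝ) : Prop :=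
  ∀ f : ℝ → ℝ, ConvexOn ℝ Set.univ f → (P.roots.map f).sum ≤ (Q.roots.map f).sum

namespace LocMinAux

/-- additivity of division by a monic polynomial -/
lemma add_divByMonic' {R : Type*} [CommRing R] [IsDomain R] {P : R[X]} (hP : P.Monic)
    (x y : R[X]) : (x + y) /ₘ P = x /ₘ P + y /ₘ P := by
  nontriviality R
  have h1 := Polynomial.modByMonic_add_div x P
  have h2 := Polynomial.modByMonic_add_div y P
  have h3 := Polynomial.modByMonic_add_div (x + y) P
  have hadd : (x + y) %ₘ P = x %ₘ P + y %ₘ P := Polynomial.add_modByMonic x y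
  have : P * ((x + y) /ₘ P) = P * (x /ₘ P + y /ₘ P) := by
    have := h3
    rw [hadd] at this
    linear_combination this - h1 - h2
  exact mul_left_cancel₀ hP.ne_zero this

lemma C_mul_divByMonic' {R : Type*} [CommRing R] [IsDomain R] {P : R[X]} (hP : P.Monic)
    (c : R) (x : R[X]) : (C c * x) /ₘ P = C c * (x /ₘ P) := by
  nontriviality R
  have h1 := Polynomial.modByMonic_add_div x P
  have h3 := Polynomial.modByMonic_add_div (C c * x) P
  have hsm : (C c * x) %ₘ P = C c * (x %ₘ P) := by
    simpa [Polynomial.smul_eq_C_mul] using Polynomial.smul_modByMonic (q := P) c x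
  have : P * ((C c * x) /ₘ P) = P * (C c * (x /ₘ P)) := by
    rw [hsm] at h3
    linear_combination h3 - C c * h1
  exact mul_left_cancel₀ hP.ne_zero this


/-- first-order binomial expansion -/
lemma first_order_pow {R : Type*} [CommRing R] (u v : R) :
    ∀ k : ℕ, ∃ W : R, (u - v) ^ (k+1) = u ^ (k+1) - ((k+1 : ℕ) : R) * v * u ^ k + v^2 * W := by
  intro k
  induction k with
  | zero => exact ⟨0, by push_cast; ring⟩
  | succ k ih =>
    obtain ⟨W, hW⟩ := ih
    refine ⟨(((k+1:ℕ):R)) * u ^ k + W * u - W * v, ?_⟩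
    have : (u - v) ^ (k+1+1) = (u - v) ^ (k+1) * (u - v) := by ring
    rw [this, hW]
    push_cast
    ring


/-- every bivariate polynomial splits as (constant part) + Y * (rest) -/
lemma exists_CY_factor (w : (Polynomial ℝ)[X]) :
    ∃ w' : (Polynomial ℝ)[X],
      w = Polynomial.map (C : ℝ →+* Polynomial ℝ) (Polynomial.map (evalRingHom 0) w)
        + C (X : Polynomial ℝ) * w' := by
  have h : C (X : Polynomial ℝ) ∣
      (w - Polynomial.map (C : ℝ →+* Polynomial ℝ) (Polynomial.map (evalRingHom 0) w)) := by
    rw [Polynomial.C_dvd_iff_dvd_coeff]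
    intro i
    rw [Polynomial.X_dvd_iff]
    simp [Polynomial.coeff_map, Polynomial.coeff_sub, Polynomial.coeff_zero_eq_eval_zero]
  obtain ⟨w', hw'⟩ := h
  exact ⟨w', by linear_combination hw'⟩


lemma monic_msprod (s : Multiset ℝ) : ((s.map fun a => X - C a).prod).Monic := by
  exact Polynomial.monic_multiset_prod_of_monic s _ (fun i _ => Polynomial.monic_X_sub_C i)

lemma natDegree_msprod (s : Multiset ℝ) :
    ((s.map fun a => X - C a).prod).natDegree = s.card := by
  simp [Polynomial.natDegree_multiset_prod_X_sub_C_eq_card s]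

/-- Key root-sum formula: sum of g over the roots equals the subleading coefficient
of `(g * S') %ₘ S` where `S = ∏ (X - a)`. -/
lemma sum_eval_roots (s : Multiset ℝ) (g : ℝ[X]) :
    (s.map fun x => g.eval x).sum =
      ((g * derivative (s.map fun a => X - C a).prod) %ₘ (s.map fun a => X - C a).prod).coeff
        (s.card - 1) := by
  induction s using Multiset.induction_on generalizing g with
  | empty => simp
  | cons a t ih =>
    set T : ℝ[X] := (t.map fun b => X - C b).prod with hT
    have hTm : T.Monic := monic_msprod t
    have hTd : T.natDegree = t.card := natDegree_msprod t
    have hTdeg : T.degree ≤ (t.card : WithBot ℕ) := by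
      refine le_trans Polynomial.degree_le_natDegree ?_
      exact_mod_cast hTd.le
    have hS : ((a ::ₘ t).map fun b => X - C b).prod = (X - C a) * T := by
      rw [Multiset.map_cons, Multiset.prod_cons]
    have hSm : ((X - C a) * T).Monic := (Polynomial.monic_X_sub_C a).mul hTm
    have hSd : ((X - C a) * T).natDegree = t.card + 1 := by
      rw [(Polynomial.monic_X_sub_C a).natDegree_mul hTm, hTd, Polynomial.natDegree_X_sub_C]
      ring
    have hSdeg : ((X - C a) * T).degree = ((t.card + 1 : ℕ) : WithBot ℕ) := by
      rw [Polynomial.degree_eq_natDegree hSm.ne_zero, hSd]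
    -- decompose g
    obtain ⟨h, hh⟩ : X - C a ∣ g - C (g.eval a) := Polynomial.X_sub_C_dvd_sub_C_eval
    -- remainder of the auxiliary product
    set r : ℝ[X] := (h * T + g * derivative T) %ₘ T with hr
    have hrT : r = (g * derivative T) %ₘ T := by
      rw [hr, Polynomial.add_modByMonic,
        (Polynomial.modByMonic_eq_zero_iff_dvd hTm).2 (Dvd.intro_left h rfl), zero_add]
    have hrdeg : r.degree < T.degree := Polynomial.degree_modByMonic_lt _ hTm
    -- derivative of S
    have hdS : derivative ((X - C a) * T) = T + (X - C a) * derivative T := by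
      rw [Polynomial.derivative_mul]; simp
    -- the division identity
    have hdiv : g * derivative ((X - C a) * T)
        = ((X - C a) * T) * ((h * T + g * derivative T) /ₘ T)
          + (C (g.eval a) * T + (X - C a) * r) := by
      have hdecomp := Polynomial.modByMonic_add_div (h * T + g * derivative T) T
      calc g * derivative ((X - C a) * T)
          = g * T + (X - C a) * (g * derivative T) := by rw [hdS]; ring
        _ = C (g.eval a) * T + (X - C a) * (h * T + g * derivative T) := by
            linear_combination (T : ℝ[X]) * hh
        _ = _ := by linear_combination ((X - C a) : ℝ[X]) * hdecomp.symm
    have hdegR : (C (g.eval a) * T + (X - C a) * r).degree < ((X - C a) * T).degree := by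
      have hd1 : (C (g.eval a) * T).degree < ((X - C a) * T).degree := by
        apply lt_of_le_of_lt (Polynomial.degree_mul_le _ _)
        rw [hSdeg]
        calc (C (g.eval a)).degree + T.degree ≤ 0 + T.degree := by
              gcongr; exact Polynomial.degree_C_le
          _ = T.degree := by rw [zero_add]
          _ ≤ (t.card : WithBot ℕ) := hTdeg
          _ < ((t.card + 1 : ℕ) : WithBot ℕ) := by exact_mod_cast Nat.lt_succ_self _
      have hd2 : ((X - C a) * r).degree < ((X - C a) * T).degree := by
        rw [Polynomial.degree_mul, Polynomial.degree_mul]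
        refine WithBot.add_lt_add_left ?_ hrdeg
        rw [Polynomial.degree_X_sub_C]; simp
      calc (C (g.eval a) * T + (X - C a) * r).degree
          ≤ max (C (g.eval a) * T).degree ((X - C a) * r).degree := Polynomial.degree_add_le _ _
        _ < ((X - C a) * T).degree := max_lt hd1 hd2
    have hmod : (g * derivative ((X - C a) * T)) %ₘ ((X - C a) * T)
        = C (g.eval a) * T + (X - C a) * r := by
      rw [hdiv, Polynomial.add_modByMonic,
        (Polynomial.modByMonic_eq_zero_iff_dvd hSm).2 (Dvd.intro _ rfl), zero_add,
        (Polynomial.modByMonic_eq_self_iff hSm).2 hdegR]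
    -- now compute the coefficient
    have hcard : (a ::ₘ t).card - 1 = t.card := by simp
    rw [hS, hmod, hcard]
    have hcT : T.coeff t.card = 1 := by
      have := hTm.leadingCoeff
      rwa [Polynomial.leadingCoeff, hTd] at this
    have hrhigh : r.coeff t.card = 0 := by
      apply Polynomial.coeff_eq_zero_of_degree_lt
      exact lt_of_lt_of_le hrdeg hTdeg
    rw [Polynomial.coeff_add, Polynomial.coeff_C_mul, hcT, mul_one]
    have hXr : ((X - C a) * r).coeff t.card = r.coeff (t.card - 1) := by
      rcases Nat.eq_zero_or_pos t.card with hc0 | hcpos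
      · have hT1 : T = 1 := by
          rw [hT, Multiset.card_eq_zero.mp hc0]
          simp
        have hr0 : r = 0 := by rw [hrT, hT1, Polynomial.modByMonic_one]
        simp [hr0, hc0]
      · obtain ⟨c, hc⟩ : ∃ c, t.card = c + 1 := ⟨t.card - 1, (Nat.succ_pred_eq_of_pos hcpos).symm⟩
        rw [hc] at hrhigh ⊢
        rw [sub_mul, Polynomial.coeff_sub, Polynomial.coeff_X_mul, Polynomial.coeff_C_mul,
          hrhigh]
        simp
    rw [hXr, Multiset.map_cons, Multiset.sum_cons, ih g, ← hrT]


variable {P : ℝ[X]} {n : ℕ}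

/-- nondegeneracy of the residue pairing -/
lemma dvd_of_tau_zero (hPm : P.Monic) (hPd : P.natDegree = n) (hn : 1 ≤ n)
    (w : ℝ[X]) (hw : ∀ h : ℝ[X], ((h * w) %ₘ P).coeff (n - 1) = 0) : P ∣ w := by
  have hPdeg : P.degree = (n : WithBot ℕ) := by
    rw [Polynomial.degree_eq_natDegree hPm.ne_zero, hPd]
  rw [← Polynomial.modByMonic_eq_zero_iff_dvd hPm]
  by_contra hr
  set r : ℝ[X] := w %ₘ P with hrdef
  have hrdeg : r.degree < P.degree := Polynomial.degree_modByMonic_lt _ hPm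
  have hrn : r.natDegree ≤ n - 1 := by
    have : r.natDegree < n := by
      have := Polynomial.natDegree_lt_natDegree hr (hrdeg.trans_le le_rfl)
      rwa [hPd] at this
    omega
  -- replace w by r in the hypothesis
  have hw' : ∀ h : ℝ[X], ((h * r) %ₘ P).coeff (n - 1) = 0 := by
    intro h
    have hdvd : P ∣ h * w - h * r := by
      have := Polynomial.modByMonic_add_div w P
      exact ⟨h * (w /ₘ P), by linear_combination (h : ℝ[X]) * this.symm⟩
    have : (h * w) %ₘ P = (h * r) %ₘ P := by
      obtain ⟨c, hc⟩ := hdvd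
      have : h * w = h * r + P * c := by linear_combination hc
      rw [this, Polynomial.add_modByMonic,
        (Polynomial.modByMonic_eq_zero_iff_dvd hPm).2 ⟨c, rfl⟩, add_zero]
    rw [← this]; exact hw h
  -- specialize
  have hkey := hw' (X ^ (n - 1 - r.natDegree))
  have hdeg : (X ^ (n - 1 - r.natDegree) * r).degree < P.degree := by
    rcases eq_or_ne r 0 with h0 | h0
    · rw [h0, mul_zero, Polynomial.degree_zero, hPdeg]; exact WithBot.bot_lt_coe n
    · rw [Polynomial.degree_mul, Polynomial.degree_X_pow, hPdeg,
        Polynomial.degree_eq_natDegree h0]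
      have : (n - 1 - r.natDegree) + r.natDegree ≤ n - 1 := by omega
      calc ((n - 1 - r.natDegree : ℕ) : WithBot ℕ) + (r.natDegree : ℕ)
          = (((n - 1 - r.natDegree) + r.natDegree : ℕ) : WithBot ℕ) := by push_cast; ring
        _ ≤ ((n-1 : ℕ) : WithBot ℕ) := by exact_mod_cast this
        _ < (n : WithBot ℕ) := by exact_mod_cast Nat.sub_lt hn one_pos
  rw [(Polynomial.modByMonic_eq_self_iff hPm).2 hdeg] at hkey
  set j := n - 1 - r.natDegree with hj
  rw [show n - 1 = r.natDegree + j from by omega, Polynomial.coeff_X_pow_mul] at hkey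
  exact hr (Polynomial.leadingCoeff_eq_zero.mp hkey)


variable {P : ℝ[X]} {n : ℕ}

/-- trace identity: τ(g') = τ(P' ⬝ (g /ₘ P)) -/
lemma tau_derivative (hPm : P.Monic) (hPd : P.natDegree = n) (hn : 1 ≤ n) (g : ℝ[X]) :
    ((derivative g) %ₘ P).coeff (n - 1)
      = ((derivative P * (g /ₘ P)) %ₘ P).coeff (n - 1) := by
  have hdecomp := Polynomial.modByMonic_add_div g P
  set r : ℝ[X] := g %ₘ P with hrdef
  set q : ℝ[X] := g /ₘ P with hqdef
  have hg : derivative g = derivative P * q + (P * derivative q + derivative r) := by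
    have : g = r + P * q := hdecomp.symm
    rw [this]
    rw [Polynomial.derivative_add, Polynomial.derivative_mul]
    ring
  rw [hg, Polynomial.add_modByMonic, Polynomial.add_modByMonic,
    (Polynomial.modByMonic_eq_zero_iff_dvd hPm).2 ⟨derivative q, rfl⟩, zero_add]
  have hrdeg : r.degree < P.degree := Polynomial.degree_modByMonic_lt _ hPm
  have hdr : (derivative r).degree < P.degree :=
    lt_of_le_of_lt (Polynomial.degree_derivative_le) hrdeg
  rw [(Polynomial.modByMonic_eq_self_iff hPm).2 hdr, Polynomial.coeff_add]
  have hrn : r.coeff n = 0 := by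
    apply Polynomial.coeff_eq_zero_of_degree_lt
    rw [Polynomial.degree_eq_natDegree hPm.ne_zero, hPd] at hrdeg
    exact hrdeg
  have h1 : n - 1 + 1 = n := by omega
  have h2 : (derivative r).coeff (n - 1) = 0 := by
    rw [Polynomial.coeff_derivative, h1, hrn, zero_mul]
  rw [h2, add_zero]


lemma comp_shift (s : Multiset ℝ) (μ : ℝ) :
    ((s.map fun b => X - C b).prod).comp (X + C μ)
      = ((s.map fun t => t - μ).map fun b => X - C b).prod := by
  induction s using Multiset.induction_on with
  | empty => simp
  | cons a t ih =>
    rw [Multiset.map_cons, Multiset.prod_cons, Polynomial.mul_comp, ih,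
      Multiset.map_cons, Multiset.map_cons, Multiset.prod_cons]
    congr 1
    rw [Polynomial.sub_comp, Polynomial.X_comp, Polynomial.C_comp, map_sub]
    ring


section Key

variable {P Q : ℝ[X]} {n : ℕ}

set_option maxHeartbeats 1000000 in
lemma key_condition (hPm : P.Monic) (hPd : P.natDegree = n) (hn : 1 ≤ n)
    (hQd : Q.natDegree ≤ n - 1)
    (hpencil : ∀ l : ℝ, (P - C l * Q).roots.card = n)
    (ε : ℝ) (hε : 0 < ε)
    (hmin : ∀ μ : ℝ, |μ| < ε →
      polyMaj P (P.comp (X + C μ) - C μ * Q.comp (X + C μ)))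
    (a : ℝ) (m : ℕ) (hm : 1 ≤ m) :
    ((((X - C a)^(2*m) * derivative P) /ₘ P * Q) %ₘ P).coeff (n-1)
      = ((((2*m : ℕ) : ℝ[X]) * (X - C a)^(2*m-1) * derivative P) %ₘ P).coeff (n-1)
        + (((X - C a)^(2*m) * derivative Q) %ₘ P).coeff (n-1) := by
  have hPdeg : P.degree = (n : WithBot ℕ) := by
    rw [Polynomial.degree_eq_natDegree hPm.ne_zero, hPd]
  have hQdeg : Q.degree < (n : WithBot ℕ) := by
    refine lt_of_le_of_lt Polynomial.degree_le_natDegree ?_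
    exact_mod_cast lt_of_le_of_lt hQd (Nat.sub_lt hn one_pos)
  -- basic pencil facts
  have hdegCQ : ∀ μ : ℝ, (C μ * Q).degree < P.degree := by
    intro μ
    calc (C μ * Q).degree ≤ (C μ).degree + Q.degree := Polynomial.degree_mul_le _ _
      _ ≤ 0 + Q.degree := by gcongr; exact Polynomial.degree_C_le
      _ = Q.degree := zero_add _
      _ < (n : WithBot ℕ) := hQdeg
      _ = P.degree := hPdeg.symm
  have hSm : ∀ μ : ℝ, (P - C μ * Q).Monic := by
    intro μ
    rw [sub_eq_add_neg]
    exact hPm.add_of_left (by rw [Polynomial.degree_neg]; exact hdegCQ μ)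
  have hSnd : ∀ μ : ℝ, (P - C μ * Q).natDegree = n := by
    intro μ
    have h2 := Polynomial.degree_sub_eq_left_of_degree_lt (hdegCQ μ)
    rw [Polynomial.degree_eq_natDegree (hSm μ).ne_zero, hPdeg] at h2
    exact_mod_cast h2
  have hSprod : ∀ μ : ℝ, P - C μ * Q
      = (((P - C μ * Q).roots).map fun b => X - C b).prod := by
    intro μ
    exact Polynomial.Splits.eq_prod_roots_of_monic
      (Polynomial.splits_iff_card_roots.mpr (by rw [hpencil μ, hSnd μ])) (hSm μ)
  -- abbreviations
  set CC : ℝ →+* ℝ[X] := (C : ℝ →+* ℝ[X]) with hCC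
  set CY : (ℝ[X])[X] := C (X : ℝ[X]) with hCY
  set f : ℝ[X] := (X - C a)^(2*m) with hf
  set f₁ : ℝ[X] := (X - C a)^(2*m-1) with hf₁
  set P' : ℝ[X] := derivative P with hP'
  set Q' : ℝ[X] := derivative Q with hQ'
  set q₀ : ℝ[X] := (f * P') /ₘ P with hq₀
  set S2 : (ℝ[X])[X] := P.map CC - CY * Q.map CC with hS2
  set F : (ℝ[X])[X] := ((X : (ℝ[X])[X]) - C (C a + X))^(2*m) with hF
  set G2 : (ℝ[X])[X] := F * derivative S2 with hG2
  -- monicity of (σ P) and S2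
  have hσPm : (P.map CC).Monic := hPm.map _
  have hσPdeg : (P.map CC).degree = (n : WithBot ℕ) := by
    rw [Polynomial.degree_eq_natDegree hσPm.ne_zero, hPm.natDegree_map, hPd]
  have hdegCYQ : (CY * Q.map CC).degree < (P.map CC).degree := by
    calc (CY * Q.map CC).degree ≤ CY.degree + (Q.map CC).degree :=
          Polynomial.degree_mul_le _ _
      _ ≤ 0 + (Q.map CC).degree := by gcongr; rw [hCY]; exact Polynomial.degree_C_le
      _ = (Q.map CC).degree := zero_add _
      _ ≤ Q.degree := Polynomial.degree_map_le
      _ < (n : WithBot ℕ) := hQdeg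
      _ = (P.map CC).degree := hσPdeg.symm
  have hS2m : S2.Monic := by
    rw [hS2, sub_eq_add_neg]
    exact hσPm.add_of_left (by rw [Polynomial.degree_neg]; exact hdegCYQ)
  have hS2deg : S2.degree = (P.map CC).degree := by
    rw [hS2]
    exact Polynomial.degree_sub_eq_left_of_degree_lt hdegCYQ
  -- evaluation homomorphisms
  have hevC : ∀ μ : ℝ, (evalRingHom μ).comp CC = RingHom.id ℝ := by
    intro μ; ext r; simp [hCC]
  have hevσ : ∀ (μ : ℝ) (w : ℝ[X]),
      Polynomial.map (evalRingHom μ) (w.map CC) = w := by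
    intro μ w
    rw [Polynomial.map_map, hevC, Polynomial.map_id]
  have hevCY : ∀ μ : ℝ, Polynomial.map (evalRingHom μ) CY = C μ := by
    intro μ; rw [hCY, Polynomial.map_C]; simp
  have hevS2 : ∀ μ : ℝ, Polynomial.map (evalRingHom μ) S2 = P - C μ * Q := by
    intro μ
    rw [hS2, Polynomial.map_sub, Polynomial.map_mul, hevσ, hevσ, hevCY]
  have hevF : ∀ μ : ℝ, Polynomial.map (evalRingHom μ) F = (X - C (a + μ))^(2*m) := by
    intro μ
    rw [hF, Polynomial.map_pow, Polynomial.map_sub, Polynomial.map_X, Polynomial.map_C]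
    simp
  have hevG2 : ∀ μ : ℝ, Polynomial.map (evalRingHom μ) G2
      = (X - C (a + μ))^(2*m) * derivative (P - C μ * Q) := by
    intro μ
    rw [hG2, Polynomial.map_mul, hevF, ← Polynomial.derivative_map, hevS2]
  -- the one-variable family and its values
  set φ : ℝ[X] := (G2 %ₘ S2).coeff (n-1) with hφ
  have hφeval : ∀ μ : ℝ, φ.eval μ
      = (((X - C (a + μ))^(2*m) * derivative (P - C μ * Q)) %ₘ (P - C μ * Q)).coeff (n-1) := by
    intro μ
    have h1 : φ.eval μ = (Polynomial.map (evalRingHom μ) (G2 %ₘ S2)).coeff (n-1) := by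
      rw [Polynomial.coeff_map]; rfl
    rw [h1, Polynomial.map_modByMonic _ hS2m, hevG2, hevS2]
  have hφsum : ∀ μ : ℝ, φ.eval μ
      = (((P - C μ * Q).roots).map fun t => ((t - μ) - a)^(2*m)).sum := by
    intro μ
    have h2 := sum_eval_roots ((P - C μ * Q).roots) ((X - C (a + μ))^(2*m))
    rw [← hSprod μ, hpencil μ] at h2
    rw [hφeval μ, ← h2]
    congr 1
    apply Multiset.map_congr rfl
    intro t _
    simp only [Polynomial.eval_pow, Polynomial.eval_sub, Polynomial.eval_X, Polynomial.eval_C]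
    ring_nf
  -- connection with the majorization hypothesis
  have hconv : ConvexOn ℝ Set.univ (fun x : ℝ => (x - a)^(2*m)) := by
    have h1 := (even_two_mul m).convexOn_pow (𝕜 := ℝ)
    have h2 := h1.translate_right (-a)
    have h3 : ((fun x : ℝ => x ^ (2*m)) ∘ fun z => -a + z) = fun x : ℝ => (x - a)^(2*m) := by
      funext z
      simp only [Function.comp_apply]
      ring_nf
    rwa [h3, Set.preimage_univ] at h2
  have hroots0 : φ.eval 0 = ((P.roots).map fun x : ℝ => (x - a)^(2*m)).sum := by
    rw [hφsum 0]
    simp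
  have hmin' : ∀ μ : ℝ, |μ| < ε → φ.eval 0 ≤ φ.eval μ := by
    intro μ hμ
    have hmaj := hmin μ hμ (fun x => (x - a)^(2*m)) hconv
    -- roots of the shifted pencil polynomial
    have hcomp : P.comp (X + C μ) - C μ * Q.comp (X + C μ) = (P - C μ * Q).comp (X + C μ) := by
      simp [Polynomial.sub_comp, Polynomial.mul_comp, Polynomial.C_comp]
    have hroots : (P.comp (X + C μ) - C μ * Q.comp (X + C μ)).roots
        = ((P - C μ * Q).roots).map fun t => t - μ := by
      rw [hcomp]
      conv_lhs => rw [hSprod μ]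
      rw [comp_shift]
      exact Polynomial.roots_multiset_prod_X_sub_C _
    rw [hroots, Multiset.map_map] at hmaj
    rw [hroots0, hφsum μ]
    refine le_trans hmaj (le_of_eq ?_)
    apply congrArg
    apply Multiset.map_congr rfl
    intro t _
    simp [Function.comp]
  -- local minimum gives vanishing derivative
  have hloc : IsLocalMin (fun μ : ℝ => φ.eval μ) 0 := by
    have : ∀ᶠ μ in nhds (0:ℝ), φ.eval 0 ≤ φ.eval μ := by
      filter_upwards [Metric.ball_mem_nhds (0:ℝ) hε] with μ hμ
      rw [Metric.mem_ball, dist_zero_right, Real.norm_eq_abs] at hμ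
      exact hmin' μ hμ
    exact this
  have hder0 : (derivative φ).eval 0 = 0 := by
    have h4 := hloc.deriv_eq_zero
    rwa [Polynomial.deriv] at h4
  -- now the algebraic extraction of the first-order term
  -- (1) expansion of F
  obtain ⟨W, hW⟩ := first_order_pow ((X : (ℝ[X])[X]) - C (C a)) CY (2*m - 1)
  rw [Nat.sub_add_cancel (by omega : 1 ≤ 2*m)] at hW
  have hFW : F = (f.map CC) - ((2*m : ℕ) : (ℝ[X])[X]) * CY * (f₁.map CC) + CY^2 * W := by
    have hu : (X : (ℝ[X])[X]) - C (C a + X) = ((X : (ℝ[X])[X]) - C (C a)) - CY := by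
      rw [map_add]; ring
    have hmf : f.map CC = ((X : (ℝ[X])[X]) - C (C a))^(2*m) := by
      rw [hf, Polynomial.map_pow, Polynomial.map_sub, Polynomial.map_X, Polynomial.map_C]
    have hmf₁ : f₁.map CC = ((X : (ℝ[X])[X]) - C (C a))^(2*m-1) := by
      rw [hf₁, Polynomial.map_pow, Polynomial.map_sub, Polynomial.map_X, Polynomial.map_C]
    rw [hF, hu, hW, hmf, hmf₁]
  -- (2) derivative of S2
  have hdS2 : derivative S2 = P'.map CC - CY * (Q'.map CC) := by
    rw [hS2, Polynomial.derivative_sub, Polynomial.derivative_map, Polynomial.derivative_C_mul,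
      Polynomial.derivative_map]
  -- (3) division step
  set q : (ℝ[X])[X] := G2 /ₘ S2 with hq
  have hdiv2 : G2 %ₘ S2 = (G2 + CY * q * Q.map CC) %ₘ (P.map CC) := by
    have e1 : G2 + CY * q * Q.map CC = (P.map CC) * q + G2 %ₘ S2 := by
      have e0 := Polynomial.modByMonic_add_div G2 S2
      rw [hS2] at e0 ⊢
      linear_combination e0.symm
    have e2 : (G2 %ₘ S2).degree < (P.map CC).degree := by
      rw [← hS2deg]
      exact Polynomial.degree_modByMonic_lt _ hS2m
    rw [e1, Polynomial.add_modByMonic,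
      (Polynomial.modByMonic_eq_zero_iff_dvd hσPm).2 ⟨q, rfl⟩, zero_add,
      (Polynomial.modByMonic_eq_self_iff hσPm).2 e2]
  -- (4) first-order structure of q
  have hPq : Polynomial.map (evalRingHom 0) q = q₀ := by
    rw [hq, Polynomial.map_divByMonic _ hS2m, hevG2 0, hevS2 0, hq₀]
    simp [hf, hP']
  obtain ⟨q2, hq2⟩ := exists_CY_factor q
  rw [hPq] at hq2
  -- (5) assembled first-order expansion
  set w₁ : ℝ[X] := q₀ * Q - ((2*m : ℕ) : ℝ[X]) * f₁ * P' - f * Q' with hw₁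
  set W' : (ℝ[X])[X] := W * (P'.map CC) + ((2*m : ℕ) : (ℝ[X])[X]) * (f₁.map CC) * (Q'.map CC)
      - CY * W * (Q'.map CC) + q2 * Q.map CC with hW'
  have hσw₁ : w₁.map CC = (q₀.map CC) * (Q.map CC)
      - ((2*m : ℕ) : (ℝ[X])[X]) * (f₁.map CC) * (P'.map CC) - (f.map CC) * (Q'.map CC) := by
    rw [hw₁]
    simp only [Polynomial.map_sub, Polynomial.map_mul, Polynomial.map_natCast]
  have hH : G2 + CY * q * Q.map CC
      = (f * P').map CC + CY * (w₁.map CC) + CY^2 * W' := by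
    rw [Polynomial.map_mul, hσw₁, hG2, hFW, hdS2, hq2, hW']
    ring
  -- (6) reading off coefficients
  have hr2 : G2 %ₘ S2 = ((f * P') %ₘ P).map CC + CY * ((w₁ %ₘ P).map CC)
      + CY^2 * (W' %ₘ (P.map CC)) := by
    rw [hdiv2, hH, Polynomial.add_modByMonic, Polynomial.add_modByMonic]
    congr 1
    · congr 1
      · rw [Polynomial.map_modByMonic _ hPm]
      · have : CY * (w₁.map CC) = (X : ℝ[X]) • (w₁.map CC) := by
          rw [Polynomial.smul_eq_C_mul, hCY]
        rw [this, Polynomial.smul_modByMonic, Polynomial.map_modByMonic _ hPm,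
          Polynomial.smul_eq_C_mul, hCY]
    · have : CY^2 * W' = ((X : ℝ[X])^2) • W' := by
        rw [Polynomial.smul_eq_C_mul, hCY, map_pow]
      rw [this, Polynomial.smul_modByMonic, Polynomial.smul_eq_C_mul, hCY, map_pow]
  have hφstruct : φ = CC (((f * P') %ₘ P).coeff (n-1)) + X * CC ((w₁ %ₘ P).coeff (n-1))
      + X^2 * ((W' %ₘ (P.map CC)).coeff (n-1)) := by
    rw [hφ, hr2, Polynomial.coeff_add, Polynomial.coeff_add, Polynomial.coeff_map, hCY,
      show (C (X:ℝ[X]))^2 = C ((X:ℝ[X])^2) from by rw [map_pow],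
      Polynomial.coeff_C_mul, Polynomial.coeff_C_mul, Polynomial.coeff_map]
  have hβ : (w₁ %ₘ P).coeff (n-1) = 0 := by
    rw [hφstruct] at hder0
    simpa [hCC] using hder0
  -- (7) unfold w₁
  rw [hw₁, Polynomial.sub_modByMonic, Polynomial.sub_modByMonic] at hβ
  rw [Polynomial.coeff_sub, Polynomial.coeff_sub] at hβ
  linarith [hβ]

end Key

section Main

variable {P Q : ℝ[X]} {n : ℕ}

set_option maxHeartbeats 1000000 in
lemma T_vanishes (hPm : P.Monic) (hPd : P.natDegree = n) (hn : 1 ≤ n)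
    (hQd : Q.natDegree ≤ n - 1)
    (hpencil : ∀ l : ℝ, (P - C l * Q).roots.card = n)
    (ε : ℝ) (hε : 0 < ε)
    (hmin : ∀ μ : ℝ, |μ| < ε →
      polyMaj P (P.comp (X + C μ) - C μ * Q.comp (X + C μ)))
    (f : ℝ[X]) :
    (((f * derivative P) /ₘ P * Q) %ₘ P).coeff (n-1)
      = ((derivative f * derivative P) %ₘ P).coeff (n-1)
        + ((f * derivative Q) %ₘ P).coeff (n-1) := by
  set P' : ℝ[X] := derivative P with hP'
  set Q' : ℝ[X] := derivative Q with hQ'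
  set T : ℝ[X] → ℝ := fun f => (((f * P') /ₘ P * Q) %ₘ P).coeff (n-1)
    - ((derivative f * P') %ₘ P).coeff (n-1) - ((f * Q') %ₘ P).coeff (n-1) with hT
  suffices hTf : T f = 0 by
    rw [hT] at hTf; simp only at hTf; linarith
  -- T is additive and ℝ-homogeneous
  have Tadd : ∀ x y : ℝ[X], T (x + y) = T x + T y := by
    intro x y
    rw [hT]
    simp only [add_mul, add_divByMonic' hPm, Polynomial.derivative_add,
      Polynomial.add_modByMonic, Polynomial.coeff_add]
    ring
  have TCmul : ∀ (c : ℝ) (x : ℝ[X]), T (C c * x) = c * T x := by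
    intro c x
    rw [hT]
    simp only [mul_assoc, C_mul_divByMonic' hPm, Polynomial.derivative_C_mul]
    simp only [← Polynomial.smul_eq_C_mul, Polynomial.smul_modByMonic]
    simp only [Polynomial.coeff_smul, smul_eq_mul]
    ring
  have Tzero : T 0 = 0 := by
    rw [hT]
    simp [Polynomial.zero_divByMonic, Polynomial.zero_modByMonic]
  -- the key conditions
  have hkey : ∀ (a : ℝ) (m : ℕ), 1 ≤ m → T ((X - C a)^(2*m)) = 0 := by
    intro a m hm
    have h1 := key_condition hPm hPd hn hQd hpencil ε hε hmin a m hm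
    have h2 : derivative ((X - C a)^(2*m)) = ((2*m : ℕ) : ℝ[X]) * (X - C a)^(2*m-1) := by
      rw [Polynomial.derivative_pow, Polynomial.derivative_sub, Polynomial.derivative_X,
        Polynomial.derivative_C, sub_zero, mul_one, Polynomial.C_eq_natCast]
    rw [hT]
    simp only [h2]
    rw [← hP', ← hQ'] at h1
    linarith [h1]
  -- vanishing on monomials
  have hTX : ∀ j : ℕ, T (X ^ j) = 0 := by
    intro j
    set k : ℕ := 2 * (j + 1) with hk
    have hjk : j ≤ k := by omega
    -- T of a finite sum
    have Tsum : ∀ (s : Finset ℕ) (g : ℕ → ℝ[X]), T (∑ i ∈ s, g i) = ∑ i ∈ s, T (g i) := by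
      intro s g
      induction s using Finset.cons_induction with
      | empty => simpa using Tzero
      | cons i s his ih => rw [Finset.sum_cons, Finset.sum_cons, Tadd, ih]
    have hexp : ∀ a : ℝ, (X - C a)^k
        = ∑ i ∈ Finset.range (k+1), C ((-a)^(k-i) * (k.choose i : ℝ)) * X ^ i := by
      intro a
      have h3 : (X : ℝ[X]) - C a = X + C (-a) := by rw [map_neg]; ring
      rw [h3, add_pow]
      apply Finset.sum_congr rfl
      intro i _
      rw [Polynomial.C_mul, ← Polynomial.C_pow, ← Polynomial.C_eq_natCast]
      ring
    have hvanish : ∀ a : ℝ, ∑ i ∈ Finset.range (k+1), ((-a)^(k-i) * (k.choose i : ℝ)) * T (X^i) = 0 := by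
      intro a
      have h4 := hkey a (j+1) (by omega)
      rw [← hk] at h4
      rw [hexp a, Tsum] at h4
      rw [← h4]
      apply Finset.sum_congr rfl
      intro i _
      rw [TCmul]
    -- turn it into a polynomial identity
    set Ψ : ℝ[X] := ∑ i ∈ Finset.range (k+1),
        C ((k.choose i : ℝ) * T (X^i)) * (-X) ^ (k-i) with hΨ
    have hΨeval : ∀ a : ℝ, Ψ.eval a = 0 := by
      intro a
      rw [hΨ]
      rw [Polynomial.eval_finset_sum]
      rw [← hvanish a]
      apply Finset.sum_congr rfl
      intro i _
      simp only [Polynomial.eval_mul, Polynomial.eval_C, Polynomial.eval_pow,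
        Polynomial.eval_neg, Polynomial.eval_X]
      ring
    have hΨ0 : Ψ = 0 := by
      apply Polynomial.funext
      intro r
      rw [hΨeval r]
      simp
    have hcoeff : Ψ.coeff (k - j) = ((k.choose j : ℝ) * T (X^j)) * (-1 : ℝ)^(k-j) := by
      rw [hΨ, Polynomial.finset_sum_coeff]
      rw [Finset.sum_eq_single j]
      · rw [show ((-X : ℝ[X]))^(k-j) = C ((-1:ℝ)^(k-j)) * X^(k-j) by
          rw [neg_pow, Polynomial.C_pow, map_neg, Polynomial.C_1]]
        rw [← mul_assoc, ← Polynomial.C_mul, Polynomial.coeff_C_mul, Polynomial.coeff_X_pow]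
        simp
      · intro i hi hij
        have hne : k - j ≠ k - i := by
          have := Finset.mem_range.mp hi; omega
        rw [show ((-X : ℝ[X]))^(k-i) = C ((-1:ℝ)^(k-i)) * X^(k-i) by
          rw [neg_pow, Polynomial.C_pow, map_neg, Polynomial.C_1]]
        rw [← mul_assoc, ← Polynomial.C_mul, Polynomial.coeff_C_mul, Polynomial.coeff_X_pow]
        simp [hne]
      · intro hj
        exact absurd (Finset.mem_range.mpr (by omega)) hj
    rw [hΨ0] at hcoeff
    simp only [Polynomial.coeff_zero] at hcoeff
    have hch : (k.choose j : ℝ) ≠ 0 := by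
      exact_mod_cast Nat.choose_pos hjk |>.ne'
    have hne : ((-1 : ℝ))^(k-j) ≠ 0 := by
      apply pow_ne_zero; norm_num
    have := hcoeff.symm
    rcases mul_eq_zero.mp this with h5 | h5
    · rcases mul_eq_zero.mp h5 with h6 | h6
      · exact absurd h6 hch
      · exact h6
    · exact absurd h5 hne
  -- conclude by induction on f
  induction f using Polynomial.induction_on' with
  | add p q hp hq => rw [Tadd, hp, hq, add_zero]
  | monomial j c =>
    rw [← Polynomial.C_mul_X_pow_eq_monomial, TCmul, hTX j, mul_zero]

end Main

end LocMinAux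

open LocMinAux in
set_option maxHeartbeats 1000000 in
theorem local_min_implies_derivative (n : ℕ) (hn : 1 ≤ n) (P Q : Polynomial ℝ)
    (hPm : P.Monic) (hPd : P.natDegree = n)
    (hQd : Q.natDegree ≤ n - 1) (hQc : Q.coeff (n - 1) = n)
    (hpencil : ∀ l : ℝ, (P - C l * Q).roots.card = n)
    (ε : ℝ) (hε : 0 < ε)
    (hmin : ∀ μ : ℝ, |μ| < ε →
      polyMaj P (P.comp (X + C μ) - C μ * Q.comp (X + C μ))) :
    Q = Polynomial.derivative P := by
  classical
  set P' : ℝ[X] := derivative P with hP'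
  set Q' : ℝ[X] := derivative Q with hQ'
  set τ : ℝ[X] → ℝ := fun g => ((g %ₘ P).coeff (n-1)) with hτ
  have tau_sub : ∀ x y : ℝ[X], τ (x - y) = τ x - τ y := by
    intro x y; rw [hτ]; simp only [Polynomial.sub_modByMonic, Polynomial.coeff_sub]
  have tau_add : ∀ x y : ℝ[X], τ (x + y) = τ x + τ y := by
    intro x y; rw [hτ]; simp only [Polynomial.add_modByMonic, Polynomial.coeff_add]
  have tau_dvd : ∀ x : ℝ[X], P ∣ x → τ x = 0 := by
    intro x hx
    rw [hτ]
    simp only [(Polynomial.modByMonic_eq_zero_iff_dvd hPm).2 hx, Polynomial.coeff_zero]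
  have tau_congr : ∀ {x y : ℝ[X]}, x = y → τ x = τ y := fun h => by rw [h]
  -- the master condition
  have hTf : ∀ f : ℝ[X], τ ((f * P') /ₘ P * Q) = τ (derivative f * P') + τ (f * Q') :=
    fun f => T_vanishes hPm hPd hn hQd hpencil ε hε hmin f
  -- Step 1: P ∣ P' * (Q - P')
  have hstep1 : P ∣ P' * (Q - P') := by
    apply dvd_of_tau_zero hPm hPd hn
    intro h
    have h0 := hTf (P * h)
    have e1 : (P * h * P') /ₘ P = h * P' := by
      rw [show P * h * P' = P * (h * P') by ring, Polynomial.mul_divByMonic_cancel_left _ hPm]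
    rw [e1] at h0
    have e2 : τ (P * h * Q') = 0 := tau_dvd _ ⟨h * Q', by ring⟩
    rw [e2, add_zero] at h0
    have e3 : derivative (P * h) = P' * h + P * derivative h := by
      rw [Polynomial.derivative_mul]
    rw [e3] at h0
    have e4 : τ ((P' * h + P * derivative h) * P') = τ (h * (P' * P')) := by
      rw [show (P' * h + P * derivative h) * P' = h * (P' * P') + P * (derivative h * P') by ring,
        tau_add, tau_dvd (P * (derivative h * P')) ⟨derivative h * P', rfl⟩, add_zero]
    rw [e4] at h0
    calc τ (h * (P' * (Q - P')))
        = τ (h * P' * Q - h * (P' * P')) := tau_congr (by ring)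
      _ = τ (h * P' * Q) - τ (h * (P' * P')) := tau_sub _ _
      _ = 0 := by rw [h0]; ring
  -- Step 2: refined condition at the gcd
  set g : ℝ[X] := EuclideanDomain.gcd P P' with hg
  obtain ⟨P₁, hP₁⟩ : g ∣ P := EuclideanDomain.gcd_dvd_left P P'
  obtain ⟨P₂, hP₂⟩ : g ∣ P' := EuclideanDomain.gcd_dvd_right P P'
  have hstep2 : P ∣ (P₂ * (Q - P') - P₁ * (Q' - derivative P')) := by
    apply dvd_of_tau_zero hPm hPd hn
    intro h
    have h0 := hTf (P₁ * h)
    have e1 : (P₁ * h * P') /ₘ P = h * P₂ := by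
      rw [show P₁ * h * P' = P * (h * P₂) by rw [hP₁, hP₂]; ring,
        Polynomial.mul_divByMonic_cancel_left _ hPm]
    rw [e1] at h0
    -- the trace identity
    have e2 : τ (derivative (P₁ * h * P')) = τ (P' * (h * P₂)) := by
      have e2' := tau_derivative hPm hPd hn (P₁ * h * P')
      rw [e1] at e2'
      exact e2'
    have e3 : derivative (P₁ * h * P') = derivative (P₁ * h) * P' + P₁ * h * derivative P' := by
      rw [Polynomial.derivative_mul]
    have e4 : τ (derivative (P₁ * h) * P')
        = τ (P' * (h * P₂)) - τ (P₁ * h * derivative P') := by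
      have h5 : τ (derivative (P₁ * h) * P') + τ (P₁ * h * derivative P')
          = τ (P' * (h * P₂)) := by
        rw [← tau_add, ← e2]
        exact tau_congr e3.symm
      linarith
    rw [e4] at h0
    calc τ (h * (P₂ * (Q - P') - P₁ * (Q' - derivative P')))
        = τ ((h * P₂ * Q - P' * (h * P₂)) - (P₁ * h * Q' - P₁ * h * derivative P')) :=
          tau_congr (by ring)
      _ = (τ (h * P₂ * Q) - τ (P' * (h * P₂))) - (τ (P₁ * h * Q') - τ (P₁ * h * derivative P')) := by
          rw [tau_sub, tau_sub, tau_sub]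
      _ = 0 := by linarith [h0]
  -- Step 3: conclude P ∣ Q - P'
  set D : ℝ[X] := Q - P' with hD
  have hPdvdD : P ∣ D := by
    rcases eq_or_ne D 0 with h0 | hDne
    · rw [h0]; exact dvd_zero P
    have hP0 : P.roots.card = n := by
      have := hpencil 0
      simpa using this
    have hProd : P = (P.roots.map fun b => X - C b).prod :=
      Polynomial.Splits.eq_prod_roots_of_monic
        (Polynomial.splits_iff_card_roots.mpr (by rw [hP0, hPd])) hPm
    have hle : P.roots ≤ D.roots := by
      rw [Multiset.le_iff_count]
      intro ρ
      rw [Polynomial.count_roots, Polynomial.count_roots]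
      set mρ : ℕ := P.rootMultiplicity ρ with hmρ
      set dρ : ℕ := D.rootMultiplicity ρ with hdρ
      rcases Nat.eq_zero_or_pos mρ with hm0 | hmpos
      · omega
      by_contra hlt
      push_neg at hlt
      -- factorizations
      set Tρ : ℝ[X] := P /ₘ (X - C ρ) ^ mρ with hTρdef
      have hTfac : P = (X - C ρ) ^ mρ * Tρ :=
        (Polynomial.pow_mul_divByMonic_rootMultiplicity_eq P ρ).symm
      have hTne : Tρ.eval ρ ≠ 0 :=
        Polynomial.eval_divByMonic_pow_rootMultiplicity_ne_zero ρ hPm.ne_zero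
      set Eρ : ℝ[X] := D /ₘ (X - C ρ) ^ dρ with hEρdef
      have hEfac : D = (X - C ρ) ^ dρ * Eρ :=
        (Polynomial.pow_mul_divByMonic_rootMultiplicity_eq D ρ).symm
      have hEne : Eρ.eval ρ ≠ 0 :=
        Polynomial.eval_divByMonic_pow_rootMultiplicity_ne_zero ρ hDne
      obtain ⟨m', hm'⟩ : ∃ m', mρ = m' + 1 := ⟨mρ - 1, by omega⟩
      -- derivative factorization of P
      set U : ℝ[X] := C (mρ : ℝ) * Tρ + (X - C ρ) * derivative Tρ with hU
      have hP'fac : P' = (X - C ρ) ^ m' * U := by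
        rw [hP', hTfac, hm']
        rw [Polynomial.derivative_mul, Polynomial.derivative_pow, Polynomial.derivative_sub,
          Polynomial.derivative_X, Polynomial.derivative_C, sub_zero, mul_one]
        rw [hU, hm']
        push_cast
        ring
      have hUne : U.eval ρ ≠ 0 := by
        rw [hU]
        simp only [Polynomial.eval_add, Polynomial.eval_mul, Polynomial.eval_C,
          Polynomial.eval_sub, Polynomial.eval_X, sub_self, zero_mul, add_zero]
        have hm0' : mρ ≠ 0 := by omega
        exact mul_ne_zero (Nat.cast_ne_zero.mpr hm0') hTne
      -- dρ ≥ 1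
      have hdpos : 1 ≤ dρ := by
        by_contra hd0
        push_neg at hd0
        have hd00 : dρ = 0 := by omega
        have hDev : D.eval ρ ≠ 0 := by
          have : D = Eρ := by rw [hEfac, hd00]; simp
          rw [this]; exact hEne
        have hbig : (X - C ρ) ^ (m' + 1) ∣ (X - C ρ) ^ m' * (U * D) := by
          have h1 : (X - C ρ) ^ (m' + 1) ∣ P := by
            rw [← hm']; exact Polynomial.pow_rootMultiplicity_dvd P ρ
          have h2 : P ∣ (X - C ρ) ^ m' * (U * D) := by
            have heq : (X - C ρ) ^ m' * (U * D) = P' * D := by rw [hP'fac]; ring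
            rw [heq]
            exact hstep1
          exact h1.trans h2
        rw [pow_succ] at hbig
        have h2 : (X - C ρ) ∣ U * D := by
          have hne : (X - C ρ) ^ m' ≠ 0 := pow_ne_zero _ (Polynomial.X_sub_C_ne_zero ρ)
          exact (mul_dvd_mul_iff_left hne).mp hbig
        obtain ⟨c2, hc2⟩ := h2
        have hev0 : U.eval ρ * D.eval ρ = 0 := by
          have h3 := congrArg (Polynomial.eval ρ) hc2
          simp only [Polynomial.eval_mul, Polynomial.eval_sub, Polynomial.eval_X,
            Polynomial.eval_C, sub_self, zero_mul] at h3
          exact h3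
        exact absurd hev0 (mul_ne_zero hUne hDev)
      obtain ⟨d', hd'⟩ : ∃ d', dρ = d' + 1 := ⟨dρ - 1, by omega⟩
      set V : ℝ[X] := C (dρ : ℝ) * Eρ + (X - C ρ) * derivative Eρ with hV
      have hD'fac : derivative D = (X - C ρ) ^ d' * V := by
        rw [hEfac, hd']
        rw [Polynomial.derivative_mul, Polynomial.derivative_pow, Polynomial.derivative_sub,
          Polynomial.derivative_X, Polynomial.derivative_C, sub_zero, mul_one]
        rw [hV, hd']
        push_cast
        ring
      -- the big divisibility
      have hdvd2 : P * g ∣ P' * D - P * derivative D := by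
        obtain ⟨c, hc⟩ := hstep2
        refine ⟨c, ?_⟩
        have hDD' : derivative D = Q' - derivative P' := by
          rw [hD, Polynomial.derivative_sub]
        calc P' * D - P * derivative D
            = g * (P₂ * (Q - P') - P₁ * (Q' - derivative P')) := by
              rw [hDD', hD, hP₁, hP₂]; ring
          _ = g * (P * c) := by rw [hc]
          _ = P * g * c := by ring
      have hpow : (X - C ρ) ^ (mρ + m') ∣ P * g := by
        rw [pow_add]
        apply mul_dvd_mul
        · exact Polynomial.pow_rootMultiplicity_dvd P ρ
        · apply EuclideanDomain.dvd_gcd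
          · calc (X - C ρ) ^ m' ∣ (X - C ρ) ^ mρ := pow_dvd_pow _ (by omega)
              _ ∣ P := Polynomial.pow_rootMultiplicity_dvd P ρ
          · exact ⟨U, hP'fac⟩
      have hfac : P' * D - P * derivative D = (X - C ρ) ^ (m' + dρ) * (U * Eρ - Tρ * V) := by
        rw [hP'fac, hD'fac, hEfac, hTfac, hm', hd']
        ring
      have hcancel : (X - C ρ) ^ (mρ - dρ) ∣ (U * Eρ - Tρ * V) := by
        have h5 : (X - C ρ) ^ (m' + dρ) * (X - C ρ) ^ (mρ - dρ) ∣
            (X - C ρ) ^ (m' + dρ) * (U * Eρ - Tρ * V) := by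
          rw [← pow_add, show m' + dρ + (mρ - dρ) = mρ + m' from by omega, ← hfac]
          exact dvd_trans hpow hdvd2
        exact (mul_dvd_mul_iff_left (pow_ne_zero _ (Polynomial.X_sub_C_ne_zero ρ))).mp h5
      have hXdvd : (X - C ρ) ∣ (U * Eρ - Tρ * V) := by
        refine dvd_trans ?_ hcancel
        exact dvd_pow_self _ (by omega)
      obtain ⟨c3, hc3⟩ := hXdvd
      have hev := congrArg (Polynomial.eval ρ) hc3
      simp only [Polynomial.eval_sub, Polynomial.eval_mul, Polynomial.eval_X,
        Polynomial.eval_C, sub_self, zero_mul] at hev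
      have hVev : V.eval ρ = (dρ : ℝ) * Eρ.eval ρ := by
        rw [hV]
        simp [Polynomial.eval_add, Polynomial.eval_mul]
      have hUev : U.eval ρ = (mρ : ℝ) * Tρ.eval ρ := by
        rw [hU]
        simp [Polynomial.eval_add, Polynomial.eval_mul]
      rw [hUev, hVev] at hev
      have : ((mρ : ℝ) - (dρ : ℝ)) * (Tρ.eval ρ * Eρ.eval ρ) = 0 := by linarith [hev]
      rcases mul_eq_zero.mp this with h6 | h6
      · have : (mρ : ℝ) = (dρ : ℝ) := by linarith
        have : mρ = dρ := by exact_mod_cast this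
        omega
      · rcases mul_eq_zero.mp h6 with h7 | h7
        · exact hTne h7
        · exact hEne h7
    calc P = (P.roots.map fun b => X - C b).prod := hProd
      _ ∣ (D.roots.map fun b => X - C b).prod :=
          Multiset.prod_dvd_prod_of_le (Multiset.map_le_map hle)
      _ ∣ D := Polynomial.prod_multiset_X_sub_C_dvd D
  -- final degree argument
  rcases eq_or_ne D 0 with h0 | hDne
  · rw [hD, sub_eq_zero] at h0
    exact h0
  exfalso
  have hdegD : D.degree < P.degree := by
    have h1 : D.natDegree ≤ n - 1 := by
      rw [hD]
      refine le_trans (Polynomial.natDegree_sub_le _ _) ?_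
      apply max_le hQd
      rw [hP']
      refine le_trans (Polynomial.natDegree_derivative_le P) ?_
      omega
    calc D.degree ≤ (D.natDegree : WithBot ℕ) := Polynomial.degree_le_natDegree
      _ ≤ ((n - 1 : ℕ) : WithBot ℕ) := by exact_mod_cast h1
      _ < (n : WithBot ℕ) := by exact_mod_cast Nat.sub_lt hn one_pos
      _ = P.degree := by rw [Polynomial.degree_eq_natDegree hPm.ne_zero, hPd]
  exact absurd (Polynomial.degree_le_of_dvd hPdvdD hDne) (not_le.mpr hdegD)
end
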